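/- arXiv:2110.08354 — 9 statements merged into one kernel-verified Lean document; each statement's English description precedes it below -/
import Mathlib

section
/- Let K be a field, f ∈ K[x] of degree n ≥ 1, a ∈ K[x] of degree < n, and let R ∈ K[y]^{m×m} be a matrix of relations of R_m^{(a,f)} all of whose entries have degree at most d. Then det R is a nonzero polynomial in K[y] of degree at most m·d, and f divides (det R)(a(x)) in K[x]; that is, det R is an annihilating polynomial for a modulo f. -/
open Polynomial Matrix

noncomputable section

variable {K : Type*} [Field K]

/-- Matrix of multiplication by `a` modulo `f` in the basis `1, x, ..., x^(n-1)`: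
its `k`-th column is the coefficient vector of `(x^k * a) mod f`. -/
def mulMat (f a : K[X]) (n : ℕ) : Matrix (Fin n) (Fin n) K :=
  fun i k => ((X ^ (k : ℕ) * a) % f).coeff (i : ℕ)

/-- `r(x, a(x))` where `r` is the bivariate polynomial with coefficient vector `v`
(under the coefficient-vector identification `r = v 0 + (v 1) x + ⋯ + (v (m-1)) x^(m-1)`). -/
def relEval (a : K[X]) {m : ℕ} (v : Fin m → K[X]) : K[X] :=
  ∑ i : Fin m, X ^ (i : ℕ) * ((v i).comp a)

/-- `v` represents an element of the module of relations `R_m^{(a,f)}`. -/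
def IsRelation (f a : K[X]) {m : ℕ} (v : Fin m → K[X]) : Prop :=
  f ∣ relEval a v

/-- Matrix of relations of `R_m^{(a,f)}`: nonsingular, all columns are relations. -/
def IsRelMat (f a : K[X]) {m : ℕ} (R : Matrix (Fin m) (Fin m) K[X]) : Prop :=
  R.det ≠ 0 ∧ ∀ j, IsRelation f a (fun i => R i j)

/-- Basis of relations of `R_m^{(a,f)}`: matrix of relations whose columns generate
the module of relations. -/
def IsRelBasis (f a : K[X]) {m : ℕ} (R : Matrix (Fin m) (Fin m) K[X]) : Prop :=
  IsRelMat f a R ∧ ∀ v : Fin m → K[X], IsRelation f a v →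
    v ∈ Submodule.span K[X] (Set.range fun j => fun i => R i j)


set_option maxHeartbeats 1000000 in
set_option maxHeartbeats 1000000 in
/-- the determinant of a matrix of relations of `R_m^{(a,f)}` of degree at most `d`
is a nonzero annihilating polynomial for `a` modulo `f`, of degree at most `m·d`. -/
theorem det_relMat_annihilates
    (n m d : ℕ) (hn : 1 ≤ n) (hm : 1 ≤ m) (f a : K[X]) (hf : f.natDegree = n)
    (ha : a.degree < (n : WithBot ℕ))
    (R : Matrix (Fin m) (Fin m) K[X]) (hR : IsRelMat f a R)
    (hdeg : ∀ i j, (R i j).degree ≤ (d : WithBot ℕ)) :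
    R.det ≠ 0 ∧ R.det.natDegree ≤ m * d ∧ f ∣ R.det.comp a := by
  obtain ⟨hdet, hcols⟩ := hR
  refine ⟨hdet, ?_, ?_⟩
  · -- degree bound
    rw [Matrix.det_apply]
    refine Polynomial.natDegree_sum_le_of_forall_le _ _ fun σ _ => ?_
    have hbound : (∏ i : Fin m, R (σ i) i).natDegree ≤ m * d := by
      refine le_trans (Polynomial.natDegree_prod_le _ _) ?_
      calc ∑ i : Fin m, (R (σ i) i).natDegree ≤ ∑ _i : Fin m, d := by
            refine Finset.sum_le_sum fun i _ => ?_
            exact Polynomial.natDegree_le_iff_degree_le.2 (hdeg _ _)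
        _ = m * d := by simp [mul_comm]
    rcases Int.units_eq_one_or (Equiv.Perm.sign σ) with h | h <;> rw [h] <;>
      simpa only [one_smul, Units.neg_smul, Polynomial.natDegree_neg] using hbound
  · -- annihilation
    set z : Fin m := ⟨0, hm⟩
    set w : Fin m → K[X] := fun j => R.adjugate j z with hw
    set v : Fin m → K[X] := R.mulVec w with hv
    have hvz : ∀ i, v i = if i = z then R.det else 0 := by
      intro i
      have : (R * R.adjugate) i z = (R.det • (1 : Matrix (Fin m) (Fin m) K[X])) i z := by
        rw [Matrix.mul_adjugate]
      simpa [Matrix.mul_apply, Matrix.one_apply, Matrix.mulVec, dotProduct, hv, hw,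
        mul_ite, mul_one, mul_zero] using this
    have h1 : relEval a v = R.det.comp a := by
      rw [relEval]
      rw [Finset.sum_eq_single z]
      · simp [hvz z, z]
      · intro b _ hb
        simp [hvz b, hb]
      · simp
    have h2 : f ∣ relEval a v := by
      have : relEval a v = ∑ j : Fin m, (w j).comp a * relEval a (fun i => R i j) := by
        simp only [relEval, hv, Matrix.mulVec, dotProduct, Polynomial.sum_comp,
          Finset.mul_sum]
        rw [Finset.sum_comm]
        refine Finset.sum_congr rfl fun j _ => Finset.sum_congr rfl fun i _ => ?_
        simp only [Polynomial.mul_comp]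
        ring
      rw [this]
      exact Finset.dvd_sum fun j _ => Dvd.dvd.mul_left (hcols j) _
    rwa [h1] at h2
end
end

section
/- Let K be a field, f ∈ K[x] of degree n ≥ 1, a ∈ K[x] of degree < n, and ℓ, m ∈ {1, …, n}. Under the coefficient-vector identification, R_{ℓ,m}^{(a,f)} = denom( (I_ℓ 0)·(y·I_n − M_a)^{−1}·X ), where (I_ℓ 0)·(y·I_n − M_a)^{−1}·X ∈ K(y)^{ℓ×m} and the inverse is taken over the field K(y) of rational functions (y·I_n − M_a is invertible over K(y) since its determinant is the characteristic polynomial of M_a). -/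
set_option maxHeartbeats 1000000
set_option synthInstance.maxHeartbeats 1000000


open Polynomial Matrix

noncomputable section

variable {K : Type*} [Field K]

/-- `v` represents an element of the truncated module of relations `R_{ℓ,m}^{(a,f)}`:
for every `k ≥ 0`, the coefficients of `x^0, …, x^(ℓ-1)` of `(a^k · r(x,a(x))) mod f` vanish. -/
def IsTruncRelation (f a : K[X]) (ℓ : ℕ) {m : ℕ} (v : Fin m → K[X]) : Prop :=
  ∀ (k j : ℕ), j < ℓ → ((a ^ k * relEval a v) % f).coeff j = 0

/-- The `n×m` matrix `X` whose top `m×m` block is the identity, over any `α`. -/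
def Xup (α : Type*) [Zero α] [One α] (n m : ℕ) : Matrix (Fin n) (Fin m) α :=
  fun i j => if (i : ℕ) = (j : ℕ) then 1 else 0

/-- The `ℓ×n` matrix `(I_ℓ 0)` whose left `ℓ×ℓ` block is the identity, over any `α`. -/
def projL (α : Type*) [Zero α] [One α] (ℓ n : ℕ) : Matrix (Fin ℓ) (Fin n) α :=
  fun i j => if (i : ℕ) = (j : ℕ) then 1 else 0

/-- The rational matrix `(I_ℓ 0) · (y I_n − M_a)⁻¹ · X ∈ K(y)^{ℓ×m}`. -/
def fracMat (f a : K[X]) (n ℓ m : ℕ) : Matrix (Fin ℓ) (Fin m) (RatFunc K) :=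
  projL (RatFunc K) ℓ n *
    ((charmatrix (mulMat f a n)).map (algebraMap K[X] (RatFunc K)))⁻¹ *
    Xup (RatFunc K) n m

/-- `v ∈ denom(F)`: every entry of `F·v` is a polynomial. -/
def memDenom {ℓ m : ℕ} (F : Matrix (Fin ℓ) (Fin m) (RatFunc K)) (v : Fin m → K[X]) : Prop :=
  ∀ i, ∃ p : K[X],
    F.mulVec (fun j => algebraMap K[X] (RatFunc K) (v j)) i = algebraMap K[X] (RatFunc K) p

namespace TDAux

lemma mod_add' (f p q : K[X]) : (p + q) % f = p % f + q % f := by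
  simp only [Polynomial.mod_def, Polynomial.add_modByMonic]

lemma mod_smul' (f : K[X]) (c : K) (p : K[X]) : (c • p) % f = c • (p % f) := by
  simp only [Polynomial.mod_def, Polynomial.smul_modByMonic]

def modHom (f : K[X]) : K[X] →+ K[X] where
  toFun p := p % f
  map_zero' := by simp only [Polynomial.mod_def, Polynomial.zero_modByMonic]
  map_add' p q := mod_add' f p q

lemma mod_sum (f : K[X]) {ι : Type*} (s : Finset ι) (p : ι → K[X]) :
    (∑ i ∈ s, p i) % f = ∑ i ∈ s, (p i % f) := map_sum (modHom f) p s

lemma mul_mod_left' (f : K[X]) (b p : K[X]) : (b * (p % f)) % f = (b * p) % f := by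
  conv_rhs => rw [← EuclideanDomain.div_add_mod p f]
  rw [mul_add, ← mul_assoc, mul_comm b f, mul_assoc, mod_add' f,
    EuclideanDomain.mod_eq_zero.mpr (Dvd.intro _ rfl), zero_add]

lemma mulMat_mulVec {n : ℕ} (hn : 0 < n) (f a : K[X]) (hf0 : f ≠ 0) (hfn : f.natDegree = n)
    (p : K[X]) :
    mulMat f a n *ᵥ (fun i : Fin n => (p % f).coeff (i : ℕ)) =
      fun i : Fin n => ((a * p) % f).coeff (i : ℕ) := by
  have hdeg : (p % f).natDegree < n := by
    rcases eq_or_ne (p % f) 0 with h | h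
    · simpa [h] using hn
    · have := EuclideanDomain.mod_lt p hf0
      have := Polynomial.natDegree_lt_natDegree h this
      omega
  have key : (a * p) % f = ∑ k ∈ Finset.range n, (p % f).coeff k • ((X ^ k * a) % f) := by
    rw [← mul_mod_left' f a p]
    conv_lhs => rw [Polynomial.as_sum_range' (p % f) n hdeg]
    rw [Finset.mul_sum, mod_sum]
    refine Finset.sum_congr rfl fun k _ => ?_
    rw [← mod_smul']
    congr 1
    rw [← Polynomial.C_mul_X_pow_eq_monomial, Polynomial.smul_eq_C_mul]
    ring
  funext i
  rw [key]
  simp only [Matrix.mulVec, dotProduct, mulMat, Polynomial.finset_sum_coeff,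
    Polynomial.coeff_smul, smul_eq_mul]
  rw [← Fin.sum_univ_eq_sum_range]
  exact Finset.sum_congr rfl fun k _ => mul_comm _ _

lemma mulMat_pow_mulVec {n : ℕ} (hn : 0 < n) (f a : K[X]) (hf0 : f ≠ 0) (hfn : f.natDegree = n)
    (k : ℕ) (p : K[X]) :
    (mulMat f a n) ^ k *ᵥ (fun i : Fin n => (p % f).coeff (i : ℕ)) =
      fun i : Fin n => ((a ^ k * p) % f).coeff (i : ℕ) := by
  induction k with
  | zero => simp
  | succ k ih =>
    rw [pow_succ', ← Matrix.mulVec_mulVec, ih, mulMat_mulVec hn f a hf0 hfn]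
    funext i
    congr 2
    ring

lemma aeval_mulVec {n : ℕ} (hn : 0 < n) (f a : K[X]) (hf0 : f ≠ 0) (hfn : f.natDegree = n)
    (q p : K[X]) :
    (aeval (mulMat f a n) q) *ᵥ (fun i : Fin n => (p % f).coeff (i : ℕ)) =
      fun i : Fin n => ((q.comp a * p) % f).coeff (i : ℕ) := by
  induction q using Polynomial.induction_on' with
  | add q r hq hr =>
    rw [map_add, Matrix.add_mulVec, hq, hr]
    funext i
    rw [Pi.add_apply, ← Polynomial.coeff_add, ← mod_add', ← add_mul, ← Polynomial.add_comp]
  | monomial e c =>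
    rw [Polynomial.aeval_monomial, ← Matrix.mulVec_mulVec,
      mulMat_pow_mulVec hn f a hf0 hfn e p]
    funext i
    have h1 : ((algebraMap K (Matrix (Fin n) (Fin n) K)) c) *ᵥ
        (fun i : Fin n => ((a ^ e * p) % f).coeff (i : ℕ)) =
        c • fun i : Fin n => ((a ^ e * p) % f).coeff (i : ℕ) := by
      rw [Algebra.algebraMap_eq_smul_one, Matrix.smul_mulVec, Matrix.one_mulVec]
    rw [h1]
    have h2 : (Polynomial.monomial e c).comp a * p = c • (a ^ e * p) := by
      rw [← Polynomial.C_mul_X_pow_eq_monomial, Polynomial.mul_comp, Polynomial.C_comp,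
        Polynomial.X_pow_comp, Polynomial.smul_eq_C_mul]
      ring
    rw [h2, mod_smul']
    simp [Polynomial.coeff_smul]

lemma mulVec_sum' {R : Type*} [CommRing R] {p q : ℕ} {ι : Type*} (s : Finset ι)
    (A : Matrix (Fin p) (Fin q) R) (x : ι → Fin q → R) :
    A *ᵥ (∑ j ∈ s, x j) = ∑ j ∈ s, A *ᵥ x j := by
  funext i
  simp only [Matrix.mulVec, dotProduct, Finset.sum_apply, Finset.mul_sum]
  exact Finset.sum_comm

lemma scalar_sub_aeval_dvd {n : ℕ} (M : Matrix (Fin n) (Fin n) K) (s : K[X]) :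
    ∃ Q : Matrix (Fin n) (Fin n) K[X],
      Matrix.scalar (Fin n) s - (C : K →+* K[X]).mapMatrix ((aeval M) s) = charmatrix M * Q := by
  induction s using Polynomial.induction_on with
  | C c =>
    refine ⟨0, ?_⟩
    rw [mul_zero]
    have h1 : (C : K →+* K[X]).mapMatrix ((aeval M) (C c : K[X])) =
        Matrix.scalar (Fin n) (C c) := by
      rw [Polynomial.aeval_C]
      ext i j
      simp [Matrix.algebraMap_matrix_apply, RingHom.mapMatrix_apply, Matrix.map_apply,
        Matrix.scalar_apply, Matrix.diagonal_apply, apply_ite (C : K → K[X])]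
    rw [h1, sub_self]
  | add p q hp hq =>
    obtain ⟨Qp, hQp⟩ := hp
    obtain ⟨Qq, hQq⟩ := hq
    refine ⟨Qp + Qq, ?_⟩
    rw [map_add, map_add, map_add, mul_add, ← hQp, ← hQq]
    abel
  | monomial e c ih =>
    obtain ⟨Q, hQ⟩ := ih
    refine ⟨Matrix.scalar (Fin n) (C c * X ^ e) + Q * (C : K →+* K[X]).mapMatrix M, ?_⟩
    have hs' : (C c * X ^ (e + 1) : K[X]) = (C c * X ^ e) * X := by ring
    have hX : Matrix.scalar (Fin n) (X : K[X]) =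
        charmatrix M + (C : K →+* K[X]).mapMatrix M := by
      rw [charmatrix]; abel
    have comm : Matrix.scalar (Fin n) (C c * X ^ e) * charmatrix M
        = charmatrix M * Matrix.scalar (Fin n) (C c * X ^ e) :=
      (Matrix.scalar_commute _ (fun r' => Commute.all _ _) _).eq
    have e1 : Matrix.scalar (Fin n) (C c * X ^ e * X) =
        Matrix.scalar (Fin n) (C c * X ^ e) * Matrix.scalar (Fin n) (X : K[X]) :=
      _root_.map_mul _ _ _
    have e2 : (C : K →+* K[X]).mapMatrix ((aeval M) (C c * X ^ e * X)) =
        (C : K →+* K[X]).mapMatrix ((aeval M) (C c * X ^ e)) *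
          (C : K →+* K[X]).mapMatrix M := by
      rw [_root_.map_mul, Polynomial.aeval_X, _root_.map_mul]
    rw [hs', e1, e2, hX, mul_add, comm, add_sub_assoc, ← sub_mul, hQ, mul_add, ← mul_assoc]

lemma charmatrix_vec {n : ℕ} (M : Matrix (Fin n) (Fin n) K) (s : K[X]) (w : Fin n → K) :
    ∃ q : Fin n → K[X],
      (fun i => s * C (w i)) =
        charmatrix M *ᵥ q + fun i => C (((aeval M) s *ᵥ w) i) := by
  obtain ⟨Q, hQ⟩ := scalar_sub_aeval_dvd M s
  refine ⟨Q *ᵥ fun i => C (w i), ?_⟩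
  have h1 : Matrix.scalar (Fin n) s *ᵥ (fun i => C (w i)) = fun i => s * C (w i) := by
    funext i
    simp [Matrix.scalar_apply, Matrix.mulVec, dotProduct, Matrix.diagonal_apply, ite_mul,
      Finset.sum_ite_eq]
  have h2 : ((C : K →+* K[X]).mapMatrix ((aeval M) s)) *ᵥ (fun i => C (w i)) =
      fun i => C (((aeval M) s *ᵥ w) i) := by
    funext i
    simp [Matrix.mulVec, dotProduct, RingHom.mapMatrix_apply, Matrix.map_apply, map_sum]
  have h3 : Matrix.scalar (Fin n) s =
      charmatrix M * Q + (C : K →+* K[X]).mapMatrix ((aeval M) s) :=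
    (sub_eq_iff_eq_add.mp hQ)
  calc (fun i => s * C (w i)) = Matrix.scalar (Fin n) s *ᵥ (fun i => C (w i)) := h1.symm
    _ = (charmatrix M * Q + (C : K →+* K[X]).mapMatrix ((aeval M) s)) *ᵥ
        (fun i => C (w i)) := by rw [← h3]
    _ = charmatrix M *ᵥ (Q *ᵥ fun i => C (w i)) +
        (fun i => C (((aeval M) s *ᵥ w) i)) := by
      rw [Matrix.add_mulVec, Matrix.mulVec_mulVec, h2]

lemma main_identity {n m : ℕ} (hn : 0 < n) (hmn : m ≤ n) (f a : K[X])
    (hf0 : f ≠ 0) (hfn : f.natDegree = n) (v : Fin m → K[X]) :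
    ∃ q : Fin n → K[X],
      Xup K[X] n m *ᵥ v =
        charmatrix (mulMat f a n) *ᵥ q +
          fun i : Fin n => C ((relEval a v % f).coeff (i : ℕ)) := by
  set M := mulMat f a n with hM
  have hw : ∀ j : Fin m, ∀ i : Fin n,
      ((X ^ (j : ℕ) % f : K[X])).coeff (i : ℕ) = if (i : ℕ) = (j : ℕ) then 1 else 0 := by
    intro j i
    have hXj : (X ^ (j : ℕ) % f : K[X]) = X ^ (j : ℕ) := by
      rw [Polynomial.mod_eq_self_iff hf0, Polynomial.degree_X_pow,
        Polynomial.degree_eq_natDegree hf0, hfn]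
      exact_mod_cast lt_of_lt_of_le j.2 hmn
    rw [hXj, Polynomial.coeff_X_pow]
  choose q hq using fun j : Fin m =>
    charmatrix_vec M (v j) (fun i : Fin n => (X ^ (j : ℕ) % f : K[X]).coeff (i : ℕ))
  refine ⟨∑ j, q j, ?_⟩
  funext i
  simp only [Pi.add_apply]
  have hrel : (relEval a v % f).coeff (i : ℕ) =
      ∑ j : Fin m, (((v j).comp a * X ^ (j : ℕ)) % f).coeff (i : ℕ) := by
    have hre : relEval a v = ∑ j : Fin m, (v j).comp a * X ^ (j : ℕ) :=
      Finset.sum_congr rfl fun j _ => mul_comm _ _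
    rw [hre, mod_sum, Polynomial.finset_sum_coeff]
  have hterm : ∀ j : Fin m,
      v j * C ((X ^ (j : ℕ) % f : K[X]).coeff (i : ℕ)) =
        (charmatrix M *ᵥ q j) i +
          C ((((v j).comp a * X ^ (j : ℕ)) % f).coeff (i : ℕ)) := by
    intro j
    have h1 := congrFun (hq j) i
    have h2 := congrFun (aeval_mulVec hn f a hf0 hfn (v j) (X ^ (j : ℕ))) i
    rw [h1, Pi.add_apply, h2]
  calc (Xup K[X] n m *ᵥ v) i
      = ∑ j : Fin m, v j * C ((X ^ (j : ℕ) % f : K[X]).coeff (i : ℕ)) := by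
        simp only [Matrix.mulVec, dotProduct, Xup]
        refine Finset.sum_congr rfl fun j _ => ?_
        rw [hw j i]
        split <;> simp
    _ = ∑ j : Fin m, ((charmatrix M *ᵥ q j) i +
          C ((((v j).comp a * X ^ (j : ℕ)) % f).coeff (i : ℕ))) :=
        Finset.sum_congr rfl fun j _ => hterm j
    _ = (charmatrix M *ᵥ ∑ j, q j) i + C ((relEval a v % f).coeff (i : ℕ)) := by
        rw [Finset.sum_add_distrib, mulVec_sum', Finset.sum_apply, hrel, map_sum]

lemma sum_mulVec' {R : Type*} [CommRing R] {p q : ℕ} {ι : Type*} (s : Finset ι)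
    (A : ι → Matrix (Fin p) (Fin q) R) (x : Fin q → R) :
    (∑ t ∈ s, A t) *ᵥ x = ∑ t ∈ s, A t *ᵥ x := by
  funext i
  simp only [Matrix.mulVec, dotProduct, Finset.sum_apply, Matrix.sum_apply, Finset.sum_mul]
  exact Finset.sum_comm

lemma pow_mulVec_entry_zero {n : ℕ} (hn : 0 < n) (M : Matrix (Fin n) (Fin n) K)
    (w : Fin n → K) (i : Fin n)
    (h : ∀ k < n, ((M ^ k) *ᵥ w) i = 0) : ∀ k, ((M ^ k) *ᵥ w) i = 0 := by
  have hnd : M.charpoly.natDegree = n := by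
    simp [Matrix.charpoly_natDegree_eq_dim]
  have hMn : M ^ n = -∑ t ∈ Finset.range n, M.charpoly.coeff t • M ^ t := by
    have h0 := M.aeval_self_charpoly
    rw [Polynomial.aeval_eq_sum_range, hnd, Finset.sum_range_succ] at h0
    have hc : M.charpoly.coeff n = 1 := by
      have hc0 := (Matrix.charpoly_monic M).coeff_natDegree
      rwa [hnd] at hc0
    rw [hc, one_smul] at h0
    exact eq_neg_of_add_eq_zero_right h0
  intro k
  induction k using Nat.strong_induction_on with
  | _ k ih =>
    by_cases hk : k < n
    · exact h k hk
    · push_neg at hk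
      have hkeq : M ^ k = M ^ (k - n) * M ^ n := by
        rw [← pow_add]; congr 1; omega
      have hexp : M ^ (k - n) * M ^ n =
          -∑ t ∈ Finset.range n, M.charpoly.coeff t • M ^ (k - n + t) := by
        rw [hMn, mul_neg, Finset.mul_sum]
        congr 1
        refine Finset.sum_congr rfl fun t _ => ?_
        rw [mul_smul_comm, ← pow_add]
      rw [hkeq, hexp, Matrix.neg_mulVec, sum_mulVec']
      have hz : ∀ t ∈ Finset.range n,
          ((M.charpoly.coeff t • M ^ (k - n + t)) *ᵥ w) i = 0 := by
        intro t ht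
        have ht' := Finset.mem_range.mp ht
        rw [Matrix.smul_mulVec, Pi.smul_apply, ih (k - n + t) (by omega), smul_zero]
      rw [Pi.neg_apply, Finset.sum_apply, Finset.sum_eq_zero hz, neg_zero]

lemma natDegree_adjugate_charmatrix_le {n : ℕ} (M : Matrix (Fin n) (Fin n) K) (i j : Fin n) :
    (adjugate (charmatrix M) i j).natDegree ≤ n - 1 := by
  rw [Matrix.adjugate_apply, Matrix.det_apply]
  refine Polynomial.natDegree_sum_le_of_forall_le _ _ fun σ _ => ?_
  have hsmul : (Equiv.Perm.sign σ •
      ∏ t, ((charmatrix M).updateRow j (Pi.single i 1)) (σ t) t).natDegree =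
      (∏ t, ((charmatrix M).updateRow j (Pi.single i 1)) (σ t) t).natDegree := by
    rcases Int.units_eq_one_or (Equiv.Perm.sign σ) with hσ | hσ <;>
      simp [hσ, Units.smul_def, Polynomial.natDegree_neg]
  rw [hsmul]
  refine (Polynomial.natDegree_prod_le _ _).trans ?_
  have hterm : ∀ t : Fin n,
      (((charmatrix M).updateRow j (Pi.single i 1)) (σ t) t).natDegree ≤
        if σ t = j then 0 else 1 := by
    intro t
    rw [Matrix.updateRow_apply]
    rcases eq_or_ne (σ t) j with hj | hj
    · rw [if_pos hj, if_pos hj, Pi.single_apply]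
      split <;> simp
    · rw [if_neg hj, if_neg hj]
      rcases eq_or_ne (σ t) t with he | he
      · rw [he, charmatrix_apply_eq, Polynomial.natDegree_X_sub_C]
      · rw [charmatrix_apply_ne _ _ _ he]
        simp
  calc ∑ t, (((charmatrix M).updateRow j (Pi.single i 1)) (σ t) t).natDegree
      ≤ ∑ t, (if σ t = j then 0 else 1) := Finset.sum_le_sum fun t _ => hterm t
    _ = ∑ s, (if s = j then 0 else 1) := Equiv.sum_comp σ fun s => if s = j then 0 else 1
    _ = n - 1 := by
      rw [← Finset.sum_erase_add _ _ (Finset.mem_univ j), if_pos rfl, add_zero]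
      have h1 : ∑ s ∈ Finset.univ.erase j, (if s = j then (0 : ℕ) else 1) =
          ∑ s ∈ Finset.univ.erase j, 1 :=
        Finset.sum_congr rfl fun s hs => if_neg (Finset.ne_of_mem_erase hs)
      rw [h1, Finset.sum_const, smul_eq_mul, mul_one,
        Finset.card_erase_of_mem (Finset.mem_univ j), Finset.card_univ, Fintype.card_fin]

lemma natDegree_adj_mulVec_le {n : ℕ} (M : Matrix (Fin n) (Fin n) K) (w : Fin n → K)
    (i : Fin n) :
    ((adjugate (charmatrix M) *ᵥ fun jj => C (w jj)) i).natDegree ≤ n - 1 := by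
  simp only [Matrix.mulVec, dotProduct]
  refine Polynomial.natDegree_sum_le_of_forall_le _ _ fun jj _ => ?_
  refine Polynomial.natDegree_mul_le.trans ?_
  simpa using natDegree_adjugate_charmatrix_le M i jj

lemma adjugate_vec_entry_zero_iff {n : ℕ} (hn : 0 < n) (M : Matrix (Fin n) (Fin n) K)
    (w : Fin n → K) (i : Fin n) :
    (adjugate (charmatrix M) *ᵥ fun jj => C (w jj)) i = 0 ↔
      ∀ k < n, ((M ^ k) *ᵥ w) i = 0 := by
  set g : Fin n → K[X] := adjugate (charmatrix M) *ᵥ fun jj => C (w jj) with hg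
  have hgdeg : ∀ jj, (g jj).natDegree ≤ n - 1 := fun jj => natDegree_adj_mulVec_le M w jj
  have hid : charmatrix M *ᵥ g = fun jj => M.charpoly * C (w jj) := by
    rw [hg, Matrix.mulVec_mulVec, Matrix.mul_adjugate]
    funext jj
    rw [Matrix.smul_mulVec, Matrix.one_mulVec, Pi.smul_apply, smul_eq_mul]
    rfl
  set G : ℕ → Fin n → K := fun k jj => (g jj).coeff k with hG
  have hrec : ∀ (k : ℕ) (jj : Fin n),
      G k jj = (M *ᵥ G (k + 1)) jj + M.charpoly.coeff (k + 1) * w jj := by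
    intro k jj
    have h0 := congrFun hid jj
    have hexp : (charmatrix M *ᵥ g) jj = X * g jj - ∑ j', C (M jj j') * g j' := by
      have e1 : (Matrix.scalar (Fin n) (X : K[X]) *ᵥ g) jj = X * g jj := by
        simp [Matrix.scalar_apply, Matrix.mulVec, dotProduct, Matrix.diagonal_apply, ite_mul,
          Finset.sum_ite_eq]
      have e2 : (((C : K →+* K[X]).mapMatrix M) *ᵥ g) jj = ∑ j', C (M jj j') * g j' := by
        simp [Matrix.mulVec, dotProduct, RingHom.mapMatrix_apply, Matrix.map_apply]
      rw [charmatrix, Matrix.sub_mulVec, Pi.sub_apply, e1, e2]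
    rw [hexp] at h0
    have h1 := congrArg (fun p => Polynomial.coeff p (k + 1)) h0
    simp only [Polynomial.coeff_sub, Polynomial.coeff_X_mul, Polynomial.finset_sum_coeff,
      Polynomial.coeff_C_mul, Polynomial.coeff_mul_C] at h1
    have h2 : (M *ᵥ G (k + 1)) jj = ∑ j', M jj j' * (g j').coeff (k + 1) := rfl
    rw [h2]
    linear_combination h1
  have hGhigh : ∀ k, n ≤ k → G k = 0 := by
    intro k hk
    funext jj
    exact Polynomial.coeff_eq_zero_of_natDegree_lt (lt_of_le_of_lt (hgdeg jj) (by omega))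
  have hform : ∀ s, s < n → ∀ jj : Fin n, G (n - 1 - s) jj =
      ∑ t ∈ Finset.range (s + 1), M.charpoly.coeff (n - s + t) * ((M ^ t) *ᵥ w) jj := by
    intro s
    induction s with
    | zero =>
      intro _ jj
      rw [show n - 1 - 0 = n - 1 from rfl, hrec (n - 1) jj, show n - 1 + 1 = n by omega,
        hGhigh n le_rfl]
      simp
    | succ s ih =>
      intro hs jj
      have hs' : s < n := by omega
      have h1 : n - 1 - (s + 1) + 1 = n - 1 - s := by omega
      rw [hrec (n - 1 - (s + 1)) jj, h1]
      have hMv : (M *ᵥ G (n - 1 - s)) jj =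
          ∑ t ∈ Finset.range (s + 1),
            M.charpoly.coeff (n - s + t) * ((M ^ (t + 1)) *ᵥ w) jj := by
        have hGf : G (n - 1 - s) = ∑ t ∈ Finset.range (s + 1),
            M.charpoly.coeff (n - s + t) • ((M ^ t) *ᵥ w) := by
          funext j'
          rw [ih hs' j', Finset.sum_apply]
          exact Finset.sum_congr rfl fun t _ => by
            simp [Pi.smul_apply, smul_eq_mul, Matrix.smul_mulVec]
        rw [hGf, mulVec_sum', Finset.sum_apply]
        refine Finset.sum_congr rfl fun t _ => ?_
        rw [Matrix.mulVec_smul, Matrix.mulVec_mulVec, ← pow_succ', Pi.smul_apply, smul_eq_mul]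
      rw [hMv, Finset.sum_range_succ'
        (fun t => M.charpoly.coeff (n - (s + 1) + t) * ((M ^ t) *ᵥ w) jj) (s + 1)]
      congr 1
      · refine Finset.sum_congr rfl fun t _ => ?_
        have he : n - (s + 1) + (t + 1) = n - s + t := by omega
        rw [he]
      · have he : n - (s + 1) + 0 = n - 1 - s := by omega
        rw [he, pow_zero, Matrix.one_mulVec]
  have hnd : M.charpoly.natDegree = n := by
    simp [Matrix.charpoly_natDegree_eq_dim]
  constructor
  · intro hgz k
    induction k using Nat.strong_induction_on with
    | _ k ih =>
      intro hk
      have h2 := hform k hk i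
      have h3 : G (n - 1 - k) i = 0 := by
        simp only [hG]
        rw [hgz, Polynomial.coeff_zero]
      have h4 : ∑ t ∈ Finset.range (k + 1),
          M.charpoly.coeff (n - k + t) * ((M ^ t) *ᵥ w) i = 0 := by
        rw [← h2]; exact h3
      rw [Finset.sum_range_succ] at h4
      have h6 : ∑ t ∈ Finset.range k, M.charpoly.coeff (n - k + t) * ((M ^ t) *ᵥ w) i = 0 :=
        Finset.sum_eq_zero fun t ht => by
          have htk := Finset.mem_range.mp ht
          rw [ih t htk (by omega), mul_zero]
      have hcn : M.charpoly.coeff (n - k + k) = 1 := by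
        have he : n - k + k = n := by omega
        rw [he]
        have hc0 := (Matrix.charpoly_monic M).coeff_natDegree
        rwa [hnd] at hc0
      rw [h6, zero_add, hcn, one_mul] at h4
      exact h4
  · intro hz
    refine Polynomial.ext fun k => ?_
    rw [Polynomial.coeff_zero]
    by_cases hk : k < n
    · have hs : n - 1 - (n - 1 - k) = k := by omega
      have h2 := hform (n - 1 - k) (by omega) i
      rw [hs] at h2
      rw [show (g i).coeff k = G k i from rfl, h2]
      exact Finset.sum_eq_zero fun t ht => by
        rw [hz t (by have := Finset.mem_range.mp ht; omega), mul_zero]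
    · exact Polynomial.coeff_eq_zero_of_natDegree_lt (lt_of_le_of_lt (hgdeg i) (by omega))

lemma ringHom_map_mulVec {R S : Type*} [CommSemiring R] [CommSemiring S] (φ : R →+* S)
    {p q : ℕ} (A : Matrix (Fin p) (Fin q) R) (x : Fin q → R) :
    A.map φ *ᵥ (fun j => φ (x j)) = fun i => φ ((A *ᵥ x) i) := by
  funext i
  simp [Matrix.mulVec, dotProduct, Matrix.map_apply, map_sum]

lemma projL_mulVec' {R : Type*} [NonAssocSemiring R] {l n : ℕ} (h : l ≤ n) (w : Fin n → R)
    (i : Fin l) :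
    (projL R l n *ᵥ w) i = w (Fin.castLE h i) := by
  simp only [Matrix.mulVec, dotProduct, projL]
  rw [Finset.sum_eq_single (Fin.castLE h i)]
  · simp
  · intro j _ hj
    rw [if_neg, zero_mul]
    intro hc
    exact hj (by ext; simpa using hc.symm)
  · intro hmem
    exact absurd (Finset.mem_univ _) hmem

end TDAux

/-- `R_{ℓ,m}^{(a,f)} = denom((I_ℓ 0)·(y I_n − M_a)⁻¹·X)`. -/
theorem truncRelations_eq_denom
    (n ℓ m : ℕ) (hn : 1 ≤ n) (hl : 1 ≤ ℓ) (hln : ℓ ≤ n) (hm : 1 ≤ m) (hmn : m ≤ n)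
    (f a : K[X]) (hf : f.natDegree = n) (ha : a.degree < (n : WithBot ℕ)) :
    ∀ v : Fin m → K[X], IsTruncRelation f a ℓ v ↔ memDenom (fracMat f a n ℓ m) v := by
  intro v
  have hf0 : f ≠ 0 := by
    intro h
    rw [h, Polynomial.natDegree_zero] at hf
    omega
  have hn0 : 0 < n := hn
  set M : Matrix (Fin n) (Fin n) K := mulMat f a n with hMdef
  set u0 : Fin n → K := fun i : Fin n => ((relEval a v) % f).coeff (i : ℕ) with hu0
  have hpow : ∀ k : ℕ, (M ^ k) *ᵥ u0 =
      fun i : Fin n => ((a ^ k * relEval a v) % f).coeff (i : ℕ) := by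
    intro k
    rw [hu0, hMdef]
    exact TDAux.mulMat_pow_mulVec hn0 f a hf0 hf k (relEval a v)
  have step1 : IsTruncRelation f a ℓ v ↔
      ∀ i : Fin n, (i : ℕ) < ℓ → ∀ k : ℕ, ((M ^ k) *ᵥ u0) i = 0 := by
    constructor
    · intro h i hi k
      rw [hpow k]
      exact h k (i : ℕ) hi
    · intro h k j hj
      have hjn : j < n := lt_of_lt_of_le hj hln
      have h2 := h ⟨j, hjn⟩ hj k
      rw [hpow k] at h2
      exact h2
  set φ : K[X] →+* RatFunc K := (algebraMap K[X] (RatFunc K) : K[X] →+* RatFunc K) with hφ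
  set A : Matrix (Fin n) (Fin n) (RatFunc K) := (charmatrix M).map φ with hAdef
  have hinj : Function.Injective φ := RatFunc.algebraMap_injective K
  have hχne : M.charpoly ≠ 0 := (Matrix.charpoly_monic M).ne_zero
  have hχ0 : φ M.charpoly ≠ 0 := fun h => hχne (hinj (by rw [h, map_zero]))
  have hdet : A.det = φ M.charpoly := by
    rw [hAdef, ← RingHom.mapMatrix_apply, ← RingHom.map_det]
    rfl
  have hAdet : IsUnit A.det := by
    rw [hdet]
    exact hχ0.isUnit
  obtain ⟨q, hq⟩ := TDAux.main_identity hn0 hmn f a hf0 hf v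
  set g : Fin n → K[X] := adjugate (charmatrix M) *ᵥ (fun jj => C (u0 jj)) with hgdef
  have hnd : M.charpoly.natDegree = n := by
    simp [Matrix.charpoly_natDegree_eq_dim]
  -- compute the entries of fracMat * v
  have hXup : Xup (RatFunc K) n m *ᵥ (fun j => φ (v j)) =
      A *ᵥ (fun i => φ (q i)) + fun i => φ (C (u0 i)) := by
    have h1 : Xup (RatFunc K) n m = (Xup K[X] n m).map φ := by
      ext i j
      simp [Xup, Matrix.map_apply, apply_ite φ]
    rw [h1, TDAux.ringHom_map_mulVec φ _ v]
    funext i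
    rw [congrFun hq i, Pi.add_apply, map_add, Pi.add_apply]
    congr 1
    rw [hAdef]
    rw [congrFun (TDAux.ringHom_map_mulVec φ (charmatrix M) q) i]
  have hAinv : A⁻¹ *ᵥ (fun i => φ (C (u0 i))) =
      fun i => (φ M.charpoly)⁻¹ * φ (g i) := by
    have hadj : A.adjugate = (adjugate (charmatrix M)).map φ := by
      rw [hAdef, ← RingHom.mapMatrix_apply, ← RingHom.map_adjugate, RingHom.mapMatrix_apply]
    have hA1 : A⁻¹ = (φ M.charpoly)⁻¹ • (adjugate (charmatrix M)).map φ := by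
      rw [Matrix.inv_def, hdet, Ring.inverse_eq_inv, hadj]
    rw [hA1]
    funext i
    have h2 := congrFun
      (TDAux.ringHom_map_mulVec φ (adjugate (charmatrix M)) (fun jj => C (u0 jj))) i
    calc (((φ M.charpoly)⁻¹ • (adjugate (charmatrix M)).map φ) *ᵥ fun i => φ (C (u0 i))) i
        = (φ M.charpoly)⁻¹ *
            (((adjugate (charmatrix M)).map φ *ᵥ fun i => φ (C (u0 i))) i) := by
          simp [Matrix.mulVec, dotProduct, Matrix.smul_apply, smul_eq_mul, Finset.mul_sum,
            mul_assoc]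
      _ = (φ M.charpoly)⁻¹ * φ (g i) := by rw [h2]
  have hcompute : ∀ i : Fin ℓ,
      (fracMat f a n ℓ m).mulVec (fun j => φ (v j)) i =
        φ (q (Fin.castLE hln i)) + (φ M.charpoly)⁻¹ * φ (g (Fin.castLE hln i)) := by
    intro i
    have h1 : (fracMat f a n ℓ m).mulVec (fun j => φ (v j)) =
        projL (RatFunc K) ℓ n *ᵥ (A⁻¹ *ᵥ (Xup (RatFunc K) n m *ᵥ (fun j => φ (v j)))) := by
      rw [Matrix.mulVec_mulVec, Matrix.mulVec_mulVec, fracMat]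
    rw [h1, TDAux.projL_mulVec' hln, hXup, Matrix.mulVec_add, Matrix.mulVec_mulVec,
      Matrix.nonsing_inv_mul A hAdet, Matrix.one_mulVec, hAinv]
    rfl
  have hmem : memDenom (fracMat f a n ℓ m) v ↔ ∀ i : Fin ℓ, g (Fin.castLE hln i) = 0 := by
    constructor
    · intro h i
      obtain ⟨p, hp⟩ := h i
      rw [hcompute i] at hp
      have h5 : (φ M.charpoly)⁻¹ * φ (g (Fin.castLE hln i)) =
          φ (p - q (Fin.castLE hln i)) := by
        rw [map_sub]
        linear_combination hp
      have h6 : φ (g (Fin.castLE hln i)) = φ (M.charpoly * (p - q (Fin.castLE hln i))) := by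
        rw [_root_.map_mul, ← h5, ← mul_assoc, mul_inv_cancel₀ hχ0, one_mul]
      have h7 : g (Fin.castLE hln i) = M.charpoly * (p - q (Fin.castLE hln i)) := hinj h6
      by_contra hne
      have hdvd : M.charpoly ∣ g (Fin.castLE hln i) := ⟨_, h7⟩
      have hle := Polynomial.natDegree_le_of_dvd hdvd hne
      have hbound : (g (Fin.castLE hln i)).natDegree ≤ n - 1 := by
        rw [hgdef]
        exact TDAux.natDegree_adj_mulVec_le M u0 (Fin.castLE hln i)
      omega
    · intro h i
      refine ⟨q (Fin.castLE hln i), ?_⟩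
      rw [hcompute i, h i, map_zero, mul_zero, add_zero]
  rw [step1, hmem]
  constructor
  · intro h i
    have h2 : ∀ k, k < n → ((M ^ k) *ᵥ u0) (Fin.castLE hln i) = 0 := fun k _ =>
      h (Fin.castLE hln i) (by simpa using i.2) k
    rw [hgdef]
    exact (TDAux.adjugate_vec_entry_zero_iff hn0 M u0 (Fin.castLE hln i)).mpr h2
  · intro h i hi k
    have hgi : g i = 0 := by
      have h2 := h ⟨(i : ℕ), hi⟩
      have h3 : Fin.castLE hln ⟨(i : ℕ), hi⟩ = i := by
        ext
        rfl
      rwa [h3] at h2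
    rw [hgdef] at hgi
    exact TDAux.pow_mulVec_entry_zero hn0 M u0 i
      ((TDAux.adjugate_vec_entry_zero_iff hn0 M u0 i).mp hgi) k
end
end

section
/- Let K be a field, f ∈ K[x] of degree n with f(0) ≠ 0, and a ∈ K[x] of degree exactly m, where 1 ≤ m < n. Then for every d ≥ ⌈n/m⌉, the block Hankel matrix Hk_{m,d}(a,f) ∈ K^{(md)×(md)} has rank n. -/
open Polynomial Matrix

noncomputable section

variable {K : Type*} [Field K]

/-- The block Hankel matrix `Hk_{m,d}(a,f)`, indexed by `Fin d × Fin m`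
(block row/column index first): its `((i,r),(j,c))` entry is `(Xᵀ · M_a^(i+j) · X) r c`. -/
def hankelMat (f a : K[X]) (n m d : ℕ) :
    Matrix (Fin d × Fin m) (Fin d × Fin m) K :=
  fun p q => ((Xup K n m)ᵀ * (mulMat f a n) ^ ((p.1 : ℕ) + (q.1 : ℕ)) * Xup K n m) p.2 q.2

lemma modW {g : K[X]} (p b : K[X]) (N : ℕ) (hp : p.natDegree < N) (r : ℕ) :
    ((p * b) %ₘ g).coeff r = ∑ j : Fin N, p.coeff j * ((X ^ (j : ℕ) * b) %ₘ g).coeff r := by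
  conv_lhs => rw [p.as_sum_range' N hp, Finset.sum_mul]
  rw [show (∑ i ∈ Finset.range N, monomial i (p.coeff i) * b) %ₘ g
      = ∑ i ∈ Finset.range N, ((monomial i (p.coeff i) * b) %ₘ g) from
      map_sum (Polynomial.modByMonicHom g) _ _]
  rw [finset_sum_coeff, ← Fin.sum_univ_eq_sum_range
    (fun j => ((monomial j (p.coeff j) * b) %ₘ g).coeff r) N]
  refine Finset.sum_congr rfl fun j _ => ?_
  rw [← smul_X_eq_monomial, smul_mul_assoc, smul_modByMonic, coeff_smul, smul_eq_mul]

lemma modM {g : K[X]} (hg : g.Monic) (p b : K[X]) : ((p %ₘ g) * b) %ₘ g = (p * b) %ₘ g := by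
  conv_lhs => rw [modByMonic_eq_sub_mul_div p g, sub_mul, sub_modByMonic]
  rw [show g * (p /ₘ g) * b = g * ((p /ₘ g) * b) by ring,
    (modByMonic_eq_zero_iff_dvd hg).mpr (dvd_mul_right g _), sub_zero]

section Main
variable {f : K[X]} {n : ℕ}

/-- the monic normalization of f -/
local notation "g" => f * C f.leadingCoeff⁻¹

lemma natDegree_mod_lt (hf : f.natDegree = n) (hn : 0 < n) (hfz : f ≠ 0) (p : K[X]) :
    (p %ₘ g).natDegree < n := by
  have h := degree_modByMonic_lt p (monic_mul_leadingCoeff_inv hfz)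
  rw [degree_mul_leadingCoeff_inv _ hfz, degree_eq_natDegree hfz, hf] at h
  rcases eq_or_ne (p %ₘ g) 0 with h0 | h0
  · simpa [h0] using hn
  · exact natDegree_lt_iff_degree_lt h0 |>.mpr h

lemma mulMat_pow (a : K[X]) (hf : f.natDegree = n) (hn : 0 < n) (hfz : f ≠ 0)
    (i : ℕ) (r k : Fin n) :
    ((mulMat f a n) ^ i) r k = ((X ^ (k : ℕ) * a ^ i) % f).coeff (r : ℕ) := by
  have hg : (g).Monic := monic_mul_leadingCoeff_inv hfz
  induction i generalizing k with
  | zero =>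
    rw [pow_zero, pow_zero, mul_one, Polynomial.mod_def,
      (modByMonic_eq_self_iff hg).mpr ?_, Matrix.one_apply, coeff_X_pow]
    · simp [Fin.ext_iff, eq_comm]
    · rw [degree_mul_leadingCoeff_inv _ hfz, degree_eq_natDegree hfz, hf]
      exact lt_of_le_of_lt (degree_X_pow_le _) (by exact_mod_cast k.2)
  | succ i ih =>
    rw [pow_succ, Matrix.mul_apply]
    simp only [ih]
    have hq : ((X ^ (k : ℕ) * a) % f).natDegree < n := by
      rw [Polynomial.mod_def]; exact natDegree_mod_lt hf hn hfz _
    calc ∑ j : Fin n, ((X ^ (j : ℕ) * a ^ i) % f).coeff (r : ℕ) * mulMat f a n j k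
        = ∑ j : Fin n, ((X ^ (k : ℕ) * a) % f).coeff j *
            ((X ^ (j : ℕ) * a ^ i) %ₘ g).coeff (r : ℕ) := by
          refine Finset.sum_congr rfl fun j _ => ?_
          rw [mulMat, Polynomial.mod_def, mul_comm]
      _ = ((((X ^ (k : ℕ) * a) % f) * a ^ i) %ₘ g).coeff (r : ℕ) :=
          (modW _ _ n hq _).symm
      _ = ((X ^ (k : ℕ) * a ^ (i + 1)) % f).coeff (r : ℕ) := by
          simp only [Polynomial.mod_def]
          rw [modM hg]
          ring_nf
end Main

lemma Xt_mul_apply {n m : ℕ} {ι : Type*} (h : m ≤ n) (B : Matrix (Fin n) ι K)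
    (r : Fin m) (k : ι) : ((Xup K n m)ᵀ * B) r k = B (Fin.castLE h r) k := by
  rw [Matrix.mul_apply]
  rw [Finset.sum_eq_single (Fin.castLE h r)]
  · simp [Xup]
  · intro t _ ht
    simp only [Xup, Matrix.transpose_apply]
    rw [if_neg, zero_mul]
    exact fun hc => ht (Fin.ext (by simpa using hc))
  · simp

lemma mul_Xup_apply {n m : ℕ} {ι : Type*} (h : m ≤ n) (B : Matrix ι (Fin n) K)
    (k : ι) (c : Fin m) : (B * Xup K n m) k c = B k (Fin.castLE h c) := by
  rw [Matrix.mul_apply]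
  rw [Finset.sum_eq_single (Fin.castLE h c)]
  · simp [Xup]
  · intro t _ ht
    simp only [Xup]
    rw [if_neg, mul_zero]
    exact fun hc => ht (Fin.ext (by simpa using hc))
  · simp

def KC (f a : K[X]) (n m d : ℕ) : Matrix (Fin n) (Fin d × Fin m) K :=
  fun k q => ((X ^ (q.2 : ℕ) * a ^ (q.1 : ℕ)) % f).coeff (k : ℕ)

def KO (f a : K[X]) (n m d : ℕ) : Matrix (Fin d × Fin m) (Fin n) K :=
  fun p k => ((X ^ (k : ℕ) * a ^ (p.1 : ℕ)) % f).coeff (p.2 : ℕ)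

def RedM (f : K[X]) (n m d : ℕ) : Matrix (Fin n) (Fin d × Fin m) K :=
  fun k p => ((X ^ ((p.2 : ℕ) + m * (p.1 : ℕ))) % f).coeff (k : ℕ)

def PM (a : K[X]) (m d : ℕ) : Matrix (Fin d × Fin m) (Fin d × Fin m) K :=
  fun p q => (X ^ (q.2 : ℕ) * a ^ (q.1 : ℕ)).coeff ((p.2 : ℕ) + m * (p.1 : ℕ))

def SM (K : Type*) [Field K] (n m d : ℕ) : Matrix (Fin d × Fin m) (Fin n) K :=
  fun p k => if ((p.2 : ℕ) + m * (p.1 : ℕ)) = (k : ℕ) then 1 else 0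

lemma natDegree_Xa {m : ℕ} {a : K[X]} (haz : a ≠ 0) (hna : a.natDegree = m)
    (c j : ℕ) : (X ^ c * a ^ j).natDegree = c + j * m := by
  rw [natDegree_mul (pow_ne_zero _ X_ne_zero) (pow_ne_zero _ haz),
    natDegree_X_pow, natDegree_pow, hna]

lemma deg_lt_dm {m d : ℕ} (q : Fin d × Fin m) : (q.2 : ℕ) + (q.1 : ℕ) * m < d * m :=
  calc (q.2 : ℕ) + (q.1 : ℕ) * m < m + (q.1 : ℕ) * m := by have := q.2.2; omega
    _ = ((q.1 : ℕ) + 1) * m := by ring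
    _ ≤ d * m := Nat.mul_le_mul_right m q.1.2

lemma X_pow_mod {n : ℕ} {f : K[X]} (hf : f.natDegree = n) (hfz : f ≠ 0)
    {k : ℕ} (hk : k < n) : (X ^ k : K[X]) % f = X ^ k := by
  rw [Polynomial.mod_def, (modByMonic_eq_self_iff (monic_mul_leadingCoeff_inv hfz)).mpr]
  rw [degree_mul_leadingCoeff_inv _ hfz, degree_eq_natDegree hfz, hf]
  exact lt_of_le_of_lt (degree_X_pow_le _) (by exact_mod_cast hk)

lemma KC_eq {n m d : ℕ} (f a : K[X]) (haz : a ≠ 0) (hna : a.natDegree = m) :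
    KC f a n m d = RedM f n m d * PM a m d := by
  ext k q
  rw [Matrix.mul_apply]
  rw [Fintype.sum_equiv (finProdFinEquiv (m := d) (n := m))
    (fun p : Fin d × Fin m => RedM f n m d k p * PM a m d p q)
    (fun s : Fin (d * m) =>
      ((X ^ (s : ℕ) % f).coeff (k : ℕ)) * (X ^ (q.2 : ℕ) * a ^ (q.1 : ℕ)).coeff (s : ℕ))
    (by intro p; simp [RedM, PM, finProdFinEquiv])]
  have hW := modW (g := f * C f.leadingCoeff⁻¹) (X ^ (q.2 : ℕ) * a ^ (q.1 : ℕ)) 1 (d * m)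
    (by rw [natDegree_Xa haz hna]; exact deg_lt_dm q) (k : ℕ)
  rw [mul_one] at hW
  show ((X ^ (q.2 : ℕ) * a ^ (q.1 : ℕ)) % f).coeff (k : ℕ) = _
  rw [Polynomial.mod_def, hW]
  exact Finset.sum_congr rfl fun s _ => by
    rw [mul_one, Polynomial.mod_def, mul_comm]

lemma RedM_mul_SM {n m d : ℕ} (hm : 0 < m) (hnd : n ≤ m * d) {f : K[X]}
    (hf : f.natDegree = n) (hfz : f ≠ 0) :
    RedM f n m d * SM K n m d = 1 := by
  ext k k'
  rw [Matrix.mul_apply]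
  have hk'dm : (k' : ℕ) < d * m := lt_of_lt_of_le k'.2 (hnd.trans_eq (Nat.mul_comm m d))
  have hb1 : (k' : ℕ) / m < d := (Nat.div_lt_iff_lt_mul hm).mpr hk'dm
  have hb2 : (k' : ℕ) % m < m := Nat.mod_lt _ hm
  have he : ((k' : ℕ) % m) + m * ((k' : ℕ) / m) = (k' : ℕ) := Nat.mod_add_div _ _
  rw [Finset.sum_eq_single ((⟨(k' : ℕ) / m, hb1⟩ : Fin d), (⟨(k' : ℕ) % m, hb2⟩ : Fin m))]
  · show ((X ^ (((k' : ℕ) % m) + m * ((k' : ℕ) / m)) : K[X]) % f).coeff (k : ℕ) *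
      (if (((k' : ℕ) % m) + m * ((k' : ℕ) / m)) = (k' : ℕ) then (1 : K) else 0) = _
    rw [if_pos he, mul_one, he, X_pow_mod hf hfz k'.2, coeff_X_pow, Matrix.one_apply]
    simp [Fin.ext_iff, eq_comm]
  · intro b _ hb
    show ((X ^ ((b.2 : ℕ) + m * (b.1 : ℕ)) : K[X]) % f).coeff (k : ℕ) *
      (if ((b.2 : ℕ) + m * (b.1 : ℕ)) = (k' : ℕ) then (1 : K) else 0) = 0
    rw [if_neg, mul_zero]
    intro hc
    apply hb
    have h1 : ((b.2 : ℕ) + m * (b.1 : ℕ)) / m = (b.1 : ℕ) := by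
      rw [Nat.add_mul_div_left _ _ hm, Nat.div_eq_of_lt b.2.2, Nat.zero_add]
    have h2 : ((b.2 : ℕ) + m * (b.1 : ℕ)) % m = (b.2 : ℕ) := by
      rw [Nat.add_mul_mod_self_left, Nat.mod_eq_of_lt b.2.2]
    refine Prod.ext (Fin.ext ?_) (Fin.ext ?_)
    · show (b.1 : ℕ) = (k' : ℕ) / m
      rw [← hc, h1]
    · show (b.2 : ℕ) = (k' : ℕ) % m
      rw [← hc, h2]
  · intro h; exact absurd (Finset.mem_univ _) h

lemma PM_det_ne_zero {m d : ℕ} {a : K[X]} (haz : a ≠ 0) (hna : a.natDegree = m) :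
    (PM (K := K) a m d).det ≠ 0 := by
  rw [← Matrix.det_reindex_self (finProdFinEquiv (m := d) (n := m)) (PM a m d)]
  set e := finProdFinEquiv (m := d) (n := m) with he
  have hval : ∀ w : Fin (d * m), ((e.symm w).2 : ℕ) + m * ((e.symm w).1 : ℕ) = (w : ℕ) := by
    intro w
    have := congrArg Fin.val (e.apply_symm_apply w)
    simpa [he, finProdFinEquiv] using this
  have hQ : ∀ s t : Fin (d * m), (reindex e e (PM a m d)) s t
      = (X ^ ((e.symm t).2 : ℕ) * a ^ ((e.symm t).1 : ℕ)).coeff (s : ℕ) := by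
    intro s t
    rw [Matrix.reindex_apply, Matrix.submatrix_apply, PM, hval]
  have hnatdeg : ∀ t : Fin (d * m),
      (X ^ ((e.symm t).2 : ℕ) * a ^ ((e.symm t).1 : ℕ)).natDegree = (t : ℕ) := by
    intro t
    rw [natDegree_Xa haz hna]
    rw [← hval t]; ring
  have htri : (reindex e e (PM a m d)).BlockTriangular id := by
    intro s t hst
    rw [hQ]
    exact coeff_eq_zero_of_natDegree_lt (by rw [hnatdeg]; exact hst)
  rw [Matrix.det_of_upperTriangular htri]
  refine Finset.prod_ne_zero_iff.mpr fun t _ => ?_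
  rw [hQ, ← hnatdeg t, coeff_natDegree, leadingCoeff_mul, leadingCoeff_pow,
    leadingCoeff_pow, leadingCoeff_X, one_pow, one_mul]
  exact pow_ne_zero _ (leadingCoeff_ne_zero.mpr haz)

lemma exists_KC_inv {n m d : ℕ} (hm : 0 < m) (hnd : n ≤ m * d)
    (f a : K[X]) (hf : f.natDegree = n) (hfz : f ≠ 0) (haz : a ≠ 0) (hna : a.natDegree = m) :
    ∃ R : Matrix (Fin d × Fin m) (Fin n) K, KC f a n m d * R = 1 := by
  refine ⟨(PM a m d)⁻¹ * SM K n m d, ?_⟩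
  rw [KC_eq f a haz hna, Matrix.mul_assoc, ← Matrix.mul_assoc (PM a m d),
    Matrix.mul_nonsing_inv _ (isUnit_iff_ne_zero.mpr (PM_det_ne_zero haz hna)),
    Matrix.one_mul, RedM_mul_SM hm hnd hf hfz]

lemma KO_inj {n m d : ℕ} (hm : 0 < m) (hnd : n ≤ m * d) (hn : 0 < n)
    (f a : K[X]) (hf : f.natDegree = n) (hf0 : f.coeff 0 ≠ 0)
    (haz : a ≠ 0) (hna : a.natDegree = m)
    (u : Fin n → K) (hu : KO f a n m d *ᵥ u = 0) : u = 0 := by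
  have hfz : f ≠ 0 := fun h => hf0 (by simp [h])
  have hg : (f * C f.leadingCoeff⁻¹).Monic := monic_mul_leadingCoeff_inv hfz
  set g : K[X] := f * C f.leadingCoeff⁻¹ with hgdef
  have hdegg : g.degree = (n : WithBot ℕ) := by
    rw [hgdef, degree_mul_leadingCoeff_inv _ hfz, degree_eq_natDegree hfz, hf]
  have hd0 : 0 < d := by
    rcases Nat.eq_zero_or_pos d with h | h
    · subst h; simp at hnd; omega
    · exact h
  set P : K[X] := ∑ k : Fin n, monomial (k : ℕ) (u k) with hP
  have hcoef : ∀ k : Fin n, P.coeff (k : ℕ) = u k := by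
    intro k
    rw [hP, finset_sum_coeff]
    rw [Finset.sum_eq_single k]
    · rw [coeff_monomial, if_pos rfl]
    · intro j _ hj
      rw [coeff_monomial, if_neg (fun hc => hj (Fin.ext hc))]
    · intro h; exact absurd (Finset.mem_univ _) h
  have hdeg : P.degree < (n : WithBot ℕ) := by
    refine lt_of_le_of_lt (degree_sum_le _ _) ?_
    rw [Finset.sup_lt_iff (by exact_mod_cast WithBot.bot_lt_coe n)]
    intro k _
    exact lt_of_le_of_lt (degree_monomial_le _ _) (by exact_mod_cast k.2)
  have hmod : P %ₘ g = P := (modByMonic_eq_self_iff hg).mpr (by rw [hdegg]; exact hdeg)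
  have hPdeg : P.natDegree < n := by
    rcases eq_or_ne P 0 with h | h
    · simpa [h] using hn
    · exact (natDegree_lt_iff_degree_lt h).mpr hdeg
  have hval : ∀ (i : Fin d) (r : Fin m), ((P * a ^ (i : ℕ)) %ₘ g).coeff (r : ℕ) = 0 := by
    intro i r
    have h0 : ∑ k, KO f a n m d (i, r) k * u k = 0 := by
      simpa [Matrix.mulVec, dotProduct] using congrFun hu (i, r)
    have hsum := modW (g := g) P (a ^ (i : ℕ)) n hPdeg (r : ℕ)
    rw [hsum, ← h0]
    refine Finset.sum_congr rfl fun k _ => ?_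
    simp only [KO]
    rw [hcoef, Polynomial.mod_def, ← hgdef, mul_comm]
  have hdvd : ∀ i : Fin d, (X : K[X]) ^ m ∣ (P * a ^ (i : ℕ)) %ₘ g := fun i =>
    X_pow_dvd_iff.mpr fun r hr => hval i ⟨r, hr⟩
  have hXP : (X : K[X]) ^ m ∣ P := by
    have := hdvd ⟨0, hd0⟩
    simpa [hmod] using this
  obtain ⟨w, hw⟩ := hXP
  rcases eq_or_ne w 0 with hw0 | hw0
  · rw [hw0, mul_zero] at hw
    funext k
    rw [Pi.zero_apply, ← hcoef k, hw, coeff_zero]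
  · exfalso
    have hgne : g ≠ 0 := hg.ne_zero
    have hg0 : g.coeff 0 ≠ 0 := by
      rw [hgdef, coeff_mul_C]
      exact mul_ne_zero hf0 (inv_ne_zero (leadingCoeff_ne_zero.mpr hfz))
    have hcop : IsCoprime ((X : K[X]) ^ m) g :=
      ((prime_X.coprime_iff_not_dvd).mpr (by rw [X_dvd_iff]; exact hg0)).pow_left
    have hgnat : g.natDegree = n := natDegree_eq_of_degree_eq_some hdegg
    have claim : ∀ i, i < d → (P * a ^ i) %ₘ g = X ^ m * (a ^ i * w)
        ∧ m + i * m + w.natDegree < n := by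
      intro i
      induction i with
      | zero =>
        intro _
        refine ⟨by rw [pow_zero, mul_one, one_mul, hmod, hw], ?_⟩
        have hPne : P ≠ 0 := by
          rw [hw]; exact mul_ne_zero (pow_ne_zero _ X_ne_zero) hw0
        have hh : P.natDegree < n := hPdeg
        rw [hw, natDegree_mul (pow_ne_zero _ X_ne_zero) hw0, natDegree_X_pow] at hh
        simpa using hh
      | succ i ih =>
        intro hid
        obtain ⟨hi, hDw⟩ := ih (Nat.lt_of_succ_lt hid)
        have key : (P * a ^ (i + 1)) %ₘ g = (X ^ m * (a ^ (i + 1) * w)) %ₘ g := by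
          rw [show P * a ^ (i + 1) = P * a ^ i * a by ring, ← modM hg (P * a ^ i) a, hi]
          congr 1
          ring
        have hdvd1 : (X : K[X]) ^ m ∣ (X ^ m * (a ^ (i + 1) * w)) %ₘ g := by
          rw [← key]; simpa using hdvd ⟨i + 1, hid⟩
        obtain ⟨s, hs⟩ := hdvd1
        set q : K[X] := (X ^ m * (a ^ (i + 1) * w)) /ₘ g with hq
        have hdm := modByMonic_add_div (X ^ m * (a ^ (i + 1) * w)) g
        rw [← hq, hs] at hdm
        have hgq : g * q = X ^ m * (a ^ (i + 1) * w - s) := by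
          linear_combination hdm
        have hXmq : (X : K[X]) ^ m ∣ g * q := ⟨_, hgq⟩
        obtain ⟨q', hq'⟩ := hcop.dvd_of_dvd_mul_left hXmq
        have hcanc : g * q' = a ^ (i + 1) * w - s := by
          refine mul_left_cancel₀ (pow_ne_zero m (X_ne_zero (R := K))) ?_
          rw [← hgq, hq']; ring
        have hq'0 : q' = 0 := by
          by_contra hq'z
          have h1 : (a ^ (i + 1) * w).natDegree < n := by
            rw [natDegree_mul (pow_ne_zero _ haz) hw0, natDegree_pow, hna]
            have e1 : (i + 1) * m = i * m + m := by ring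
            linarith
          have h2 : s.natDegree < n := by
            rcases eq_or_ne s 0 with h | h
            · simpa [h] using hn
            · have hrem : (X ^ m * (a ^ (i + 1) * w)) %ₘ g ≠ 0 := by
                rw [hs]; exact mul_ne_zero (pow_ne_zero _ X_ne_zero) h
              have hh := (natDegree_lt_iff_degree_lt hrem).mpr
                (by rw [← hdegg]; exact degree_modByMonic_lt _ hg)
              rw [hs, natDegree_mul (pow_ne_zero _ X_ne_zero) h, natDegree_X_pow] at hh
              omega
          have hL : (g * q').natDegree = n + q'.natDegree := by
            rw [natDegree_mul hgne hq'z, hgnat]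
          have hR : (g * q').natDegree < n := by
            rw [hcanc]
            exact lt_of_le_of_lt (natDegree_sub_le _ _) (max_lt h1 h2)
          omega
        have hqz : q = 0 := by rw [hq', hq'0, mul_zero]
        rw [hqz, mul_zero, add_zero] at hdm
        -- hdm : X ^ m * s = X ^ m * (a^(i+1) * w)  (after hs rewrite)
        have heq2 : (P * a ^ (i + 1)) %ₘ g = X ^ m * (a ^ (i + 1) * w) := by
          rw [key, hs, hdm]
        refine ⟨heq2, ?_⟩
        have hne : (X : K[X]) ^ m * (a ^ (i + 1) * w) ≠ 0 :=
          mul_ne_zero (pow_ne_zero _ X_ne_zero) (mul_ne_zero (pow_ne_zero _ haz) hw0)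
        have hdlt := degree_modByMonic_lt (P * a ^ (i + 1)) hg
        rw [heq2, hdegg] at hdlt
        have hh := (natDegree_lt_iff_degree_lt hne).mpr hdlt
        rw [natDegree_mul (pow_ne_zero _ X_ne_zero)
            (mul_ne_zero (pow_ne_zero _ haz) hw0), natDegree_X_pow,
          natDegree_mul (pow_ne_zero _ haz) hw0, natDegree_pow, hna] at hh
        have e1 : (i + 1) * m = i * m + m := by ring
        linarith
    obtain ⟨hlast, hdegb⟩ := claim (d - 1) (by omega)
    have h2 : m + (d - 1) * m = d * m := by
      have hdd : d - 1 + 1 = d := Nat.succ_pred_eq_of_pos hd0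
      calc m + (d - 1) * m = ((d - 1) + 1) * m := by ring
        _ = d * m := by rw [hdd]
    have h3 : n ≤ d * m := hnd.trans_eq (Nat.mul_comm m d)
    linarith

lemma hankel_eq {n m d : ℕ} (hmn : m ≤ n) (hn : 0 < n) (f a : K[X])
    (hf : f.natDegree = n) (hfz : f ≠ 0) :
    hankelMat f a n m d = KO f a n m d * KC f a n m d := by
  have hg : (f * C f.leadingCoeff⁻¹).Monic := monic_mul_leadingCoeff_inv hfz
  ext p q
  show ((Xup K n m)ᵀ * (mulMat f a n) ^ ((p.1 : ℕ) + (q.1 : ℕ)) * Xup K n m) p.2 q.2 = _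
  rw [mul_Xup_apply hmn, Xt_mul_apply hmn, mulMat_pow a hf hn hfz, Matrix.mul_apply]
  simp only [Fin.coe_castLE]
  have hqdeg : ((X ^ (q.2 : ℕ) * a ^ (q.1 : ℕ)) %ₘ (f * C f.leadingCoeff⁻¹)).natDegree < n :=
    natDegree_mod_lt hf hn hfz _
  have hW := modW (g := f * C f.leadingCoeff⁻¹)
    ((X ^ (q.2 : ℕ) * a ^ (q.1 : ℕ)) %ₘ (f * C f.leadingCoeff⁻¹))
    (a ^ (p.1 : ℕ)) n hqdeg ((p.2 : ℕ))
  calc ((X ^ (q.2 : ℕ) * a ^ ((p.1 : ℕ) + (q.1 : ℕ))) % f).coeff (p.2 : ℕ)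
      = (((X ^ (q.2 : ℕ) * a ^ (q.1 : ℕ)) * a ^ (p.1 : ℕ))
          %ₘ (f * C f.leadingCoeff⁻¹)).coeff (p.2 : ℕ) := by
        rw [Polynomial.mod_def]
        congr 2
        rw [pow_add]
        ring
    _ = ((((X ^ (q.2 : ℕ) * a ^ (q.1 : ℕ)) %ₘ (f * C f.leadingCoeff⁻¹)) * a ^ (p.1 : ℕ))
          %ₘ (f * C f.leadingCoeff⁻¹)).coeff (p.2 : ℕ) := by
        rw [modM hg]
    _ = ∑ k : Fin n, KO f a n m d p k * KC f a n m d k q := by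
        rw [hW]
        refine Finset.sum_congr rfl fun k _ => ?_
        simp only [KO, KC]
        rw [Polynomial.mod_def, Polynomial.mod_def, mul_comm]

/-- if `f(0) ≠ 0` and `deg a = m` with `1 ≤ m < n = deg f`,
the block Hankel matrix has rank `n` for every `d ≥ ⌈n/m⌉`. -/
theorem rank_hankel_of_deg_eq
    (n m : ℕ) (hm : 1 ≤ m) (hmn : m < n)
    (f a : K[X]) (hf : f.natDegree = n) (hf0 : f.eval 0 ≠ 0)
    (ha : a.degree = (m : WithBot ℕ))
    (d : ℕ) (hd : n ⌈/⌉ m ≤ d) :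
    (hankelMat f a n m d).rank = n := by
  have hmn' : m ≤ n := hmn.le
  have hn : 0 < n := by omega
  have haz : a ≠ 0 := fun h => by
    rw [h, degree_zero] at ha
    exact WithBot.bot_ne_coe ha
  have hna : a.natDegree = m := natDegree_eq_of_degree_eq_some ha
  have hfz : f ≠ 0 := fun h => by rw [h, natDegree_zero] at hf; omega
  have hf0c : f.coeff 0 ≠ 0 := by rwa [coeff_zero_eq_eval_zero]
  have hnd : n ≤ m * d := by
    have := (ceilDiv_le_iff_le_smul hm).mp hd
    simpa [smul_eq_mul] using this
  obtain ⟨R, hR⟩ := exists_KC_inv hm hnd f a hf hfz haz hna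
  rw [hankel_eq hmn' hn f a hf hfz, Matrix.rank, Matrix.mulVecLin_mul, LinearMap.range_comp]
  have hsurj : LinearMap.range (KC f a n m d).mulVecLin = ⊤ := by
    rw [LinearMap.range_eq_top]
    intro v
    exact ⟨R *ᵥ v, by rw [Matrix.mulVecLin_apply, Matrix.mulVec_mulVec, hR, Matrix.one_mulVec]⟩
  rw [hsurj, Submodule.map_top]
  have hinj : Function.Injective (KO f a n m d).mulVecLin := by
    rw [← LinearMap.ker_eq_bot, LinearMap.ker_eq_bot']
    intro u hu
    exact KO_inj hm hnd hn f a hf hf0c haz hna u (by rwa [Matrix.mulVecLin_apply] at hu)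
  rw [LinearMap.finrank_range_of_inj hinj]
  exact Module.finrank_fin_fun K
end
end

section
/- Let K be a field, f ∈ K[x] of degree n with f(0) ≠ 0, and let a ∈ K[x] be monic of degree m with 1 ≤ m < n. For 0 ≤ i ≤ m−1, set p_i = [ (a·x^{n−m+i}) mod f ]_0^{m−1} ∈ K[x]. (i) If 2m ≤ n, then the m polynomials p_0, …, p_{m−1} are linearly independent over K. (ii) If n < 2m, then the n−m polynomials p_{2m−n}, …, p_{m−1} are linearly independent over K. -/
open Polynomial

noncomputable section

variable {K : Type*} [Field K]

/-- Truncation `[p]_0^{m-1} = p_0 + p_1 x + ⋯ + p_{m-1} x^{m-1}` of a polynomial. -/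
def truncPoly (m : ℕ) (p : K[X]) : K[X] :=
  ∑ j ∈ Finset.range m, C (p.coeff j) * X ^ j

lemma coeff_truncPoly (m : ℕ) (p : K[X]) (j : ℕ) (hj : j < m) :
    (truncPoly m p).coeff j = p.coeff j := by
  simp [truncPoly, finset_sum_coeff, coeff_C_mul, coeff_X_pow, Finset.sum_ite_eq, hj]

lemma aux_li (n m t k : ℕ) (hm : 1 ≤ m) (hmn : m < n)
    (f a : K[X]) (hf : f.natDegree = n) (hf0 : f.coeff 0 ≠ 0)
    (ha : a.Monic) (hadeg : a.natDegree = m)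
    (htm : m ≤ t) (htn : n ≤ m + t) (htk : t + k ≤ n) :
    LinearIndependent K fun i : Fin k => truncPoly m ((a * X ^ (t + (i : ℕ))) % f) := by
  have hfne : f ≠ 0 := fun h => hf0 (by simp [h])
  have hfdeg : f.degree = (n : ℕ∞) := by rw [degree_eq_natDegree hfne, hf]; rfl
  rw [Fintype.linearIndependent_iff]
  intro c hc
  set h : K[X] := ∑ i : Fin k, C (c i) * X ^ (i : ℕ) with hh
  have hcoeffh : ∀ i : Fin k, h.coeff (i : ℕ) = c i := by
    intro i
    rw [hh, finset_sum_coeff]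
    simp only [coeff_C_mul, coeff_X_pow]
    rw [Finset.sum_eq_single i]
    · simp
    · intro b _ hb
      have : (b : ℕ) ≠ (i : ℕ) := fun e => hb (Fin.ext e)
      simp [this, Ne.symm this]
    · simp
  suffices hzero : h = 0 by
    intro i; rw [← hcoeffh i, hzero, coeff_zero]
  by_contra hne
  have hk : 1 ≤ k := by
    by_contra hk0
    apply hne
    rw [hh]
    have : k = 0 := by omega
    subst this
    simp
  set r : K[X] := ∑ i : Fin k, c i • ((a * X ^ (t + (i : ℕ))) % f) with hr
  set q : K[X] := ∑ i : Fin k, c i • ((a * X ^ (t + (i : ℕ))) / f) with hq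
  have key : f * q + r = a * (X ^ t * h) := by
    rw [hq, hr, hh, Finset.mul_sum, ← Finset.sum_add_distrib]
    rw [Finset.mul_sum, Finset.mul_sum]
    refine Finset.sum_congr rfl fun i _ => ?_
    have hdm := EuclideanDomain.div_add_mod (a * X ^ (t + (i : ℕ))) f
    calc f * (c i • ((a * X ^ (t + (i : ℕ))) / f)) + c i • ((a * X ^ (t + (i : ℕ))) % f)
        = c i • (f * ((a * X ^ (t + (i : ℕ))) / f) + (a * X ^ (t + (i : ℕ))) % f) := by
          rw [smul_add, mul_smul_comm]
      _ = c i • (a * X ^ (t + (i : ℕ))) := by rw [hdm]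
      _ = a * (X ^ t * (C (c i) * X ^ (i : ℕ))) := by
          rw [smul_eq_C_mul, pow_add]; ring
  -- degree of r is < n
  have hrdeg : r.degree < f.degree := by
    rw [hr]
    refine lt_of_le_of_lt (degree_sum_le _ _) ?_
    rw [Finset.sup_lt_iff (by rw [hfdeg]; exact WithBot.bot_lt_coe _)]
    intro i _
    refine lt_of_le_of_lt (degree_smul_le _ _) ?_
    exact EuclideanDomain.mod_lt _ hfne
  -- low coefficients of r vanish
  have hlow : ∀ d < m, r.coeff d = 0 := by
    intro d hd
    have h1 := congrArg (fun p : K[X] => p.coeff d) hc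
    simp only [finset_sum_coeff, coeff_smul, smul_eq_mul, coeff_zero] at h1
    rw [hr, finset_sum_coeff]
    simp only [coeff_smul, smul_eq_mul]
    rw [← h1]
    refine Finset.sum_congr rfl fun i _ => ?_
    rw [coeff_truncPoly m _ d hd]
  have hXr : X ^ m ∣ r := X_pow_dvd_iff.mpr hlow
  have hXag : X ^ m ∣ a * (X ^ t * h) :=
    Dvd.dvd.trans (pow_dvd_pow X htm) ⟨a * h, by ring⟩
  have hXfq : X ^ m ∣ f * q := by
    have : f * q = a * (X ^ t * h) - r := by rw [← key]; ring
    rw [this]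
    exact dvd_sub hXag hXr
  have hXf : ¬ X ∣ f := fun hd => hf0 (X_dvd_iff.mp hd)
  have hXq : X ^ m ∣ q := Polynomial.prime_X.pow_dvd_of_dvd_mul_left m hXf hXfq
  -- degree bounds
  have hXt : (X : K[X]) ^ t ≠ 0 := pow_ne_zero _ X_ne_zero
  have hane : a ≠ 0 := ha.ne_zero
  have hgne : a * (X ^ t * h) ≠ 0 := mul_ne_zero hane (mul_ne_zero hXt hne)
  have hhdeg : h.natDegree ≤ k - 1 := by
    rw [hh]
    refine natDegree_sum_le_of_forall_le _ _ fun i _ => ?_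
    refine le_trans (natDegree_C_mul_le _ _) ?_
    rw [natDegree_X_pow]
    omega
  have hagdeg : (a * (X ^ t * h)).natDegree = m + t + h.natDegree := by
    rw [natDegree_mul hane (mul_ne_zero hXt hne), natDegree_mul hXt hne,
      natDegree_X_pow, hadeg]
    ring
  have hq0 : q = 0 := by
    by_contra hqne
    have h1 : m ≤ q.natDegree :=
      le_trans (by rw [natDegree_X_pow]) (natDegree_le_of_dvd hXq hqne)
    have h2 : (f * q).natDegree = n + q.natDegree := by
      rw [natDegree_mul hfne hqne, hf]
    have h3 : (f * q).natDegree ≤ n + m - 1 := by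
      have : f * q = a * (X ^ t * h) - r := by rw [← key]; ring
      rw [this]
      refine le_trans (natDegree_sub_le _ _) ?_
      have hr1 : r.natDegree ≤ n - 1 := by
        rcases eq_or_ne r 0 with h0 | h0
        · simp [h0]
        · have := (natDegree_lt_iff_degree_lt h0).mpr (hrdeg.trans_le (le_of_eq hfdeg))
          omega
      have hg1 : (a * (X ^ t * h)).natDegree ≤ n + m - 1 := by
        rw [hagdeg]; omega
      omega
    omega
  rw [hq0, mul_zero, zero_add] at key
  have : r.natDegree < n := by
    have := (natDegree_lt_iff_degree_lt (key ▸ hgne)).mpr (hrdeg.trans_le (le_of_eq hfdeg))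
    exact this
  rw [key, hagdeg] at this
  omega

/-- with `p_i = [(a·x^(n-m+i)) mod f]_0^{m-1}`,
(i) if `2m ≤ n` the polynomials `p_0, …, p_{m-1}` are linearly independent over `K`;
(ii) if `n < 2m` the polynomials `p_{2m-n}, …, p_{m-1}` are linearly independent over `K`. -/
theorem truncations_linearIndependent
    (n m : ℕ) (hm : 1 ≤ m) (hmn : m < n)
    (f a : K[X]) (hf : f.natDegree = n) (hf0 : f.eval 0 ≠ 0)
    (ha : a.Monic) (hadeg : a.natDegree = m) :
    (2 * m ≤ n →
      LinearIndependent K fun i : Fin m =>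
        truncPoly m ((a * X ^ (n - m + (i : ℕ))) % f)) ∧
    (n < 2 * m →
      LinearIndependent K fun i : Fin (n - m) =>
        truncPoly m ((a * X ^ (m + (i : ℕ))) % f)) := by
  have hf0' : f.coeff 0 ≠ 0 := by rwa [coeff_zero_eq_eval_zero]
  constructor
  · intro h2m
    exact aux_li n m (n - m) m hm hmn f a hf hf0' ha hadeg (by omega) (by omega) (by omega)
  · intro h2m
    exact aux_li n m m (n - m) hm hmn f a hf hf0' ha hadeg (by omega) (by omega) (by omega)
end
end

section
/- Let m ≤ n be positive integers and let R = ℤ[ā_0, …, ā_{n−1}, f̄_0, …, f̄_{n−1}] be the polynomial ring over ℤ in 2n indeterminates. Set f̄ = f̄_0 + ⋯ + f̄_{n−1}·x^{n−1} + x^n and ā = ā_0 + ⋯ + ā_{n−1}·x^{n−1} in R[x], and let Hk_{m,⌈n/m⌉}(ā,f̄) be the block Hankel matrix over R built from M_{ā}. Then every n×n minor Δ of Hk_{m,⌈n/m⌉}(ā,f̄) satisfies m·deg_{ā}(Δ) ≤ 2n² and m·deg_{f̄}(Δ) ≤ 2n²·(n−1), where deg_{ā} (resp. deg_{f̄}) denotes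 the total degree in the variables ā_0, …, ā_{n−1} (resp. f̄_0, …, f̄_{n−1}). -/
open Polynomial Matrix

noncomputable section

/-- Matrix of multiplication by `a` modulo the monic polynomial `f` over a commutative ring,
in the basis `1, x, ..., x^(n-1)`: its `k`-th column is the coefficient vector of
`(x^k * a) mod f` (remainder in division by the monic `f`). -/
def mulMatM {R : Type*} [CommRing R] (f a : R[X]) (n : ℕ) : Matrix (Fin n) (Fin n) R :=
  fun i k => ((X ^ (k : ℕ) * a) %ₘ f).coeff (i : ℕ)

/-- The `n×m` matrix `X` whose top `m×m` block is the identity. -/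
def XupM (R : Type*) [Zero R] [One R] (n m : ℕ) : Matrix (Fin n) (Fin m) R :=
  fun i j => if (i : ℕ) = (j : ℕ) then 1 else 0

/-- The block Hankel matrix `Hk_{m,d}(a,f)` over a commutative ring, indexed by
`Fin d × Fin m`; its `((i,r),(j,c))` entry is `(Xᵀ · M_a^(i+j) · X) r c`. -/
def hankelMatM {R : Type*} [CommRing R] (f a : R[X]) (n m d : ℕ) :
    Matrix (Fin d × Fin m) (Fin d × Fin m) R :=
  fun p q => ((XupM R n m)ᵀ * (mulMatM f a n) ^ ((p.1 : ℕ) + (q.1 : ℕ)) * XupM R n m) p.2 q.2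

/-- The generic polynomial `ā = ā_0 + ā_1 x + ⋯ + ā_{n-1} x^{n-1}`
(`Sum.inl` indexes the `ā` variables). -/
def genericA (n : ℕ) : Polynomial (MvPolynomial (Fin n ⊕ Fin n) ℤ) :=
  ∑ i : Fin n, C (MvPolynomial.X (Sum.inl i)) * X ^ (i : ℕ)

/-- The generic monic polynomial `f̄ = f̄_0 + ⋯ + f̄_{n-1} x^{n-1} + x^n`
(`Sum.inr` indexes the `f̄` variables). -/
def genericF (n : ℕ) : Polynomial (MvPolynomial (Fin n ⊕ Fin n) ℤ) :=
  X ^ n + ∑ i : Fin n, C (MvPolynomial.X (Sum.inr i)) * X ^ (i : ℕ)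

/-- Total degree in the `ā`-variables (the `Sum.inl` ones). -/
def degInA {n : ℕ} (p : MvPolynomial (Fin n ⊕ Fin n) ℤ) : ℕ :=
  p.support.sup fun s => ∑ i : Fin n, s (Sum.inl i)

/-- Total degree in the `f̄`-variables (the `Sum.inr` ones). -/
def degInF {n : ℕ} (p : MvPolynomial (Fin n ⊕ Fin n) ℤ) : ℕ :=
  p.support.sup fun s => ∑ i : Fin n, s (Sum.inr i)

variable {n : ℕ}

def degE (e : Fin n → Fin n ⊕ Fin n) (p : MvPolynomial (Fin n ⊕ Fin n) ℤ) : ℕ :=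
  p.support.sup fun s => ∑ i : Fin n, s (e i)

lemma degE_le_iff {e} {p : MvPolynomial (Fin n ⊕ Fin n) ℤ} {k : ℕ} :
    degE e p ≤ k ↔ ∀ s ∈ p.support, (∑ i : Fin n, s (e i)) ≤ k := Finset.sup_le_iff

lemma le_degE {e} {p : MvPolynomial (Fin n ⊕ Fin n) ℤ} {s} (hs : s ∈ p.support) :
    (∑ i : Fin n, s (e i)) ≤ degE e p :=
  Finset.le_sup (f := fun s => ∑ i : Fin n, s (e i)) hs

lemma degE_zero {e} : degE e (0 : MvPolynomial (Fin n ⊕ Fin n) ℤ) = 0 := by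
  simp [degE]

lemma degE_add_le {e} (p q : MvPolynomial (Fin n ⊕ Fin n) ℤ) :
    degE e (p + q) ≤ max (degE e p) (degE e q) := by
  rw [degE_le_iff]
  intro s hs
  rcases Finset.mem_union.1 (MvPolynomial.support_add hs) with h | h
  · exact le_max_of_le_left (le_degE h)
  · exact le_max_of_le_right (le_degE h)

lemma degE_mul_le {e} (p q : MvPolynomial (Fin n ⊕ Fin n) ℤ) :
    degE e (p * q) ≤ degE e p + degE e q := by
  classical
  rw [degE_le_iff]
  intro s hs
  obtain ⟨a, ha, b, hb, rfl⟩ := Finset.mem_add.1 (MvPolynomial.support_mul p q hs)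
  simp only [Finsupp.add_apply, Finset.sum_add_distrib]
  exact add_le_add (le_degE ha) (le_degE hb)

lemma degE_monomial {e} (s) (z : ℤ) :
    degE e (MvPolynomial.monomial s z : MvPolynomial (Fin n ⊕ Fin n) ℤ) ≤ ∑ i : Fin n, s (e i) := by
  rw [degE_le_iff]
  intro t ht
  have := MvPolynomial.support_monomial_subset ht
  simp only [Finset.mem_singleton] at this
  subst this; rfl

lemma degE_C {e} (z : ℤ) : degE e (MvPolynomial.C z : MvPolynomial (Fin n ⊕ Fin n) ℤ) = 0 := by
  apply Nat.le_zero.1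
  simpa using degE_monomial (e := e) 0 z

lemma degE_one {e} : degE e (1 : MvPolynomial (Fin n ⊕ Fin n) ℤ) = 0 := by
  simpa using degE_C (e := e) 1

lemma degE_smul_le {e} (z : ℤ) (p : MvPolynomial (Fin n ⊕ Fin n) ℤ) :
    degE e (z • p) ≤ degE e p := by
  rw [degE_le_iff]
  intro s hs
  exact le_degE (MvPolynomial.support_smul hs)

lemma degE_neg {e} (p : MvPolynomial (Fin n ⊕ Fin n) ℤ) : degE e (-p) ≤ degE e p := by
  simpa using degE_smul_le (e := e) (-1) p

lemma degE_sub_le {e} (p q : MvPolynomial (Fin n ⊕ Fin n) ℤ) :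
    degE e (p - q) ≤ max (degE e p) (degE e q) := by
  rw [sub_eq_add_neg]
  exact le_trans (degE_add_le p (-q)) (max_le_max le_rfl (degE_neg q))

lemma degE_sum_le {e} {ι : Type*} (s : Finset ι) (f : ι → MvPolynomial (Fin n ⊕ Fin n) ℤ)
    (k : ℕ) (h : ∀ x ∈ s, degE e (f x) ≤ k) : degE e (∑ x ∈ s, f x) ≤ k := by
  classical
  induction s using Finset.induction_on with
  | empty => simp [degE_zero]
  | insert a t hx ih =>
    rw [Finset.sum_insert hx]
    refine le_trans (degE_add_le _ _) (max_le (h a (Finset.mem_insert_self a t)) ?_)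
    exact ih fun x hx' => h x (Finset.mem_insert_of_mem hx')

lemma degE_prod_le {e} {ι : Type*} (s : Finset ι) (f : ι → MvPolynomial (Fin n ⊕ Fin n) ℤ)
    (b : ι → ℕ) (h : ∀ x ∈ s, degE e (f x) ≤ b x) :
    degE e (∏ x ∈ s, f x) ≤ ∑ x ∈ s, b x := by
  classical
  induction s using Finset.induction_on with
  | empty => simp [degE_one]
  | insert a t hx ih =>
    rw [Finset.prod_insert hx, Finset.sum_insert hx]
    refine le_trans (degE_mul_le _ _) (add_le_add (h a (Finset.mem_insert_self a t)) ?_)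
    exact ih fun x hx' => h x (Finset.mem_insert_of_mem hx')

lemma degE_X_le (e : Fin n → Fin n ⊕ Fin n) (he : Function.Injective e) (j : Fin n ⊕ Fin n) :
    degE e (MvPolynomial.X j : MvPolynomial (Fin n ⊕ Fin n) ℤ) ≤ 1 := by
  classical
  refine le_trans (degE_monomial _ _) ?_
  simp only [Finsupp.single_apply]
  rw [Finset.sum_boole]
  rw [Nat.cast_id]
  apply Finset.card_le_one.2
  intro a ha b hb
  simp only [Finset.mem_filter] at ha hb
  exact he (ha.2.symm.trans hb.2)

lemma degE_X_eq_zero (e : Fin n → Fin n ⊕ Fin n) (j : Fin n ⊕ Fin n)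
    (hj : ∀ i, e i ≠ j) :
    degE e (MvPolynomial.X j : MvPolynomial (Fin n ⊕ Fin n) ℤ) = 0 := by
  classical
  apply Nat.le_zero.1
  refine le_trans (degE_monomial _ _) ?_
  simp only [Finsupp.single_apply]
  apply Nat.le_zero.2
  apply Finset.sum_eq_zero
  intro i _
  simp [Ne.symm (hj i)]



variable {n : ℕ}

lemma genericF_tail_degree_lt (hn : 0 < n) :
    (∑ i : Fin n, C (MvPolynomial.X (Sum.inr i)) * X ^ (i : ℕ) :
      Polynomial (MvPolynomial (Fin n ⊕ Fin n) ℤ)).degree < (n : ℕ) := by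
  refine lt_of_le_of_lt (degree_sum_le _ _) ?_
  rw [Finset.sup_lt_iff (by exact_mod_cast WithBot.bot_lt_coe n)]
  intro i _
  refine lt_of_le_of_lt (degree_C_mul_X_pow_le _ _) ?_
  exact_mod_cast i.2

lemma genericF_monic (hn : 0 < n) : (genericF n).Monic :=
  monic_X_pow_add (genericF_tail_degree_lt hn)

lemma genericF_degree (hn : 0 < n) : (genericF n).degree = n := by
  rw [genericF, degree_add_eq_left_of_degree_lt, degree_X_pow]
  rw [degree_X_pow]
  exact genericF_tail_degree_lt hn

lemma genericF_coeff_self (hn : 0 < n) : (genericF n).coeff n = 1 := by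
  have h := genericF_monic hn
  have h2 : (genericF n).natDegree = n := natDegree_eq_of_degree_eq_some (genericF_degree hn)
  simpa [Monic, Polynomial.leadingCoeff, h2] using h

lemma genericF_coeff_gt (hn : 0 < n) {i : ℕ} (h : n < i) : (genericF n).coeff i = 0 := by
  apply coeff_eq_zero_of_degree_lt
  rw [genericF_degree hn]
  exact_mod_cast h

lemma degE_ite01 {e : Fin n → Fin n ⊕ Fin n} (P : Prop) [Decidable P] :
    degE e (if P then (1 : MvPolynomial (Fin n ⊕ Fin n) ℤ) else 0) = 0 := by
  split <;> simp [degE_one, degE_zero]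

lemma genericF_coeff_degA (i : ℕ) : degE Sum.inl ((genericF n).coeff i) = 0 := by
  apply Nat.le_zero.1
  rw [genericF, coeff_add, coeff_X_pow, finset_sum_coeff]
  refine le_trans (degE_add_le _ _) (max_le (le_of_eq (degE_ite01 _)) ?_)
  refine degE_sum_le _ _ _ fun j _ => ?_
  rw [coeff_C_mul, coeff_X_pow]
  refine le_trans (degE_mul_le _ _) ?_
  rw [degE_X_eq_zero Sum.inl _ (fun i => by simp), degE_ite01]

lemma genericF_coeff_degF (i : ℕ) : degE Sum.inr ((genericF n).coeff i) ≤ 1 := by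
  rw [genericF, coeff_add, coeff_X_pow, finset_sum_coeff]
  refine le_trans (degE_add_le _ _) (max_le (by rw [degE_ite01]; omega) ?_)
  refine degE_sum_le _ _ _ fun j _ => ?_
  rw [coeff_C_mul, coeff_X_pow]
  refine le_trans (degE_mul_le _ _) ?_
  have := degE_X_le (n := n) Sum.inr Sum.inr_injective (Sum.inr j)
  rw [degE_ite01]
  omega

lemma pow_mod_coeff_bound (hn : 0 < n) (j : ℕ) :
    ∀ i : ℕ, degE Sum.inl ((X ^ j %ₘ genericF n).coeff i) = 0 ∧
      degE Sum.inr ((X ^ j %ₘ genericF n).coeff i) ≤ j + 1 - n := by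
  induction j with
  | zero =>
    intro i
    rw [pow_zero, (modByMonic_eq_self_iff (genericF_monic hn)).2
      (by rw [degree_one, genericF_degree hn]; exact_mod_cast hn), coeff_one]
    exact ⟨degE_ite01 _, by rw [degE_ite01]; omega⟩
  | succ j ih =>
    intro i
    by_cases hj : j + 1 < n
    · rw [(modByMonic_eq_self_iff (genericF_monic hn)).2
        (by rw [degree_X_pow, genericF_degree hn]; exact_mod_cast hj), coeff_X_pow]
      exact ⟨degE_ite01 _, by rw [degE_ite01]; omega⟩
    · have hjn : n ≤ j + 1 := not_lt.1 hj
      have hmon := genericF_monic hn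
      set F := genericF n with hF
      set r := X ^ j %ₘ F with hr
      have hdr : r.degree < (n : WithBot ℕ) := by
        rw [← genericF_degree hn]; exact degree_modByMonic_lt _ hmon
      set c := r.coeff (n - 1) with hc
      have hcoeffr : ∀ k, n ≤ k → r.coeff k = 0 := fun k hk =>
        coeff_eq_zero_of_degree_lt (lt_of_lt_of_le hdr (by exact_mod_cast hk))
      have key : X ^ (j + 1) %ₘ F = X * r - C c * F := by
        have h1 : X ^ (j + 1) %ₘ F = (X * r) %ₘ F := by
          apply modByMonic_eq_of_dvd_sub hmon
          refine ⟨X * (X ^ j /ₘ F), ?_⟩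
          have hq : r + F * (X ^ j /ₘ F) = X ^ j := modByMonic_add_div _ F
          linear_combination (-X : (MvPolynomial (Fin n ⊕ Fin n) ℤ)[X]) * hq
        have h2 : (X * r) %ₘ F = (X * r - C c * F) %ₘ F := by
          apply modByMonic_eq_of_dvd_sub hmon
          exact ⟨C c, by ring⟩
        have h3 : (X * r - C c * F).degree < F.degree := by
          rw [genericF_degree hn, degree_lt_iff_coeff_zero]
          intro k hk
          have hk' : n ≤ k := by exact_mod_cast hk
          obtain ⟨k', rfl⟩ : ∃ k', k = k' + 1 := ⟨k - 1, by omega⟩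
          rw [coeff_sub, coeff_X_mul, coeff_C_mul]
          rcases eq_or_lt_of_le hk' with he | hlt
          · rw [hc]
            have hk'' : k' = n - 1 := by omega
            rw [← he, genericF_coeff_self hn, hk'']
            ring
          · rw [hcoeffr k' (by omega), genericF_coeff_gt hn hlt, mul_zero, sub_zero]
        rw [h1, h2]
        exact (modByMonic_eq_self_iff hmon).2 h3
      have hXr : ∀ (e : Fin n → Fin n ⊕ Fin n) (bnd : ℕ),
          (∀ i', degE e (r.coeff i') ≤ bnd) → ∀ i', degE e ((X * r).coeff i') ≤ bnd := by
        intro e bnd hb i'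
        cases i' with
        | zero => rw [mul_coeff_zero, coeff_X_zero, zero_mul, degE_zero]; exact Nat.zero_le _
        | succ i'' => rw [coeff_X_mul]; exact hb i''
      rw [key]
      constructor
      · apply Nat.le_zero.1
        rw [coeff_sub, coeff_C_mul]
        refine le_trans (degE_sub_le _ _) (max_le ?_ ?_)
        · exact hXr Sum.inl 0 (fun i' => le_of_eq (ih i').1) i
        · refine le_trans (degE_mul_le _ _) ?_
          rw [(ih (n - 1)).1, genericF_coeff_degA]
      · rw [coeff_sub, coeff_C_mul]
        refine le_trans (degE_sub_le _ _) (max_le ?_ ?_)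
        · refine le_trans (hXr Sum.inr (j + 1 - n) (fun i' => (ih i').2) i) (by omega)
        · refine le_trans (degE_mul_le _ _) ?_
          have h1 : degE Sum.inr c ≤ j + 1 - n := (ih (n - 1)).2
          have h2 : degE Sum.inr (F.coeff i) ≤ 1 := genericF_coeff_degF i
          omega


lemma X_pow_mul_genericA_mod (k : ℕ) :
    (X ^ k * genericA n) %ₘ genericF n =
      ∑ j : Fin n, (MvPolynomial.X (Sum.inl j) : MvPolynomial (Fin n ⊕ Fin n) ℤ) • (X ^ (k + (j : ℕ)) %ₘ genericF n) := by
  have : X ^ k * genericA n =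
      ∑ j : Fin n, (MvPolynomial.X (Sum.inl j) : MvPolynomial (Fin n ⊕ Fin n) ℤ) • (X ^ (k + (j : ℕ)) :
        Polynomial (MvPolynomial (Fin n ⊕ Fin n) ℤ)) := by
    rw [genericA, Finset.mul_sum]
    refine Finset.sum_congr rfl fun j _ => ?_
    rw [smul_eq_C_mul, pow_add]
    ring
  rw [this]
  have hs := map_sum (Polynomial.modByMonicHom (genericF n))
      (fun j : Fin n => (MvPolynomial.X (Sum.inl j) : MvPolynomial (Fin n ⊕ Fin n) ℤ) •
        (X ^ (k + (j : ℕ)) : Polynomial (MvPolynomial (Fin n ⊕ Fin n) ℤ))) Finset.univ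
  simp only [Polynomial.modByMonicHom_apply] at hs
  rw [hs]
  exact Finset.sum_congr rfl fun j _ => smul_modByMonic _ _

lemma mulMat_bound (hn : 0 < n) (i k : Fin n) :
    degE Sum.inl (mulMatM (genericF n) (genericA n) n i k) ≤ 1 ∧
      degE Sum.inr (mulMatM (genericF n) (genericA n) n i k) ≤ n - 1 := by
  rw [mulMatM, X_pow_mul_genericA_mod, finset_sum_coeff]
  constructor
  · refine degE_sum_le _ _ _ fun j _ => ?_
    rw [coeff_smul, smul_eq_mul]
    refine le_trans (degE_mul_le _ _) ?_
    have h1 := degE_X_le (n := n) Sum.inl Sum.inl_injective (Sum.inl j)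
    have h2 := (pow_mod_coeff_bound hn ((k : ℕ) + (j : ℕ)) (i : ℕ)).1
    omega
  · refine degE_sum_le _ _ _ fun j _ => ?_
    rw [coeff_smul, smul_eq_mul]
    refine le_trans (degE_mul_le _ _) ?_
    have h1 := degE_X_eq_zero (n := n) Sum.inr (Sum.inl j) (fun i => by simp)
    have h2 := (pow_mod_coeff_bound hn ((k : ℕ) + (j : ℕ)) (i : ℕ)).2
    have hk : (k : ℕ) ≤ n - 1 := by omega
    have hj : (j : ℕ) ≤ n - 1 := by omega
    omega

lemma mulMat_pow_bound (hn : 0 < n) (p : ℕ) (i k : Fin n) :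
    degE Sum.inl ((mulMatM (genericF n) (genericA n) n ^ p) i k) ≤ p ∧
      degE Sum.inr ((mulMatM (genericF n) (genericA n) n ^ p) i k) ≤ p * (n - 1) := by
  induction p generalizing i k with
  | zero =>
    rw [pow_zero, Matrix.one_apply]
    exact ⟨by simp [degE_ite01], by simp [degE_ite01]⟩
  | succ p ih =>
    rw [pow_succ, Matrix.mul_apply]
    constructor
    · refine degE_sum_le _ _ _ fun j _ => ?_
      refine le_trans (degE_mul_le _ _) ?_
      have h1 := (ih i j).1
      have h2 := (mulMat_bound hn j k).1
      omega
    · refine degE_sum_le _ _ _ fun j _ => ?_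
      refine le_trans (degE_mul_le _ _) ?_
      have h1 := (ih i j).2
      have h2 := (mulMat_bound hn j k).2
      have : (p + 1) * (n - 1) = p * (n - 1) + (n - 1) := by ring
      omega



lemma hankel_bound (hn : 0 < n) (m d : ℕ) (p q : Fin d × Fin m) :
    degE Sum.inl (hankelMatM (genericF n) (genericA n) n m d p q) ≤ (p.1 : ℕ) + (q.1 : ℕ) ∧
      degE Sum.inr (hankelMatM (genericF n) (genericA n) n m d p q)
        ≤ ((p.1 : ℕ) + (q.1 : ℕ)) * (n - 1) := by
  rw [hankelMatM]
  rw [Matrix.mul_apply]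
  constructor
  · refine degE_sum_le _ _ _ fun j _ => ?_
    refine le_trans (degE_mul_le _ _) ?_
    have h2 : degE (n := n) Sum.inl (XupM (MvPolynomial (Fin n ⊕ Fin n) ℤ) n m j q.2) = 0 := by
      rw [XupM]; exact degE_ite01 _
    rw [Matrix.mul_apply]
    have h1 : degE Sum.inl (∑ i, (XupM (MvPolynomial (Fin n ⊕ Fin n) ℤ) n m)ᵀ p.2 i *
        (mulMatM (genericF n) (genericA n) n ^ ((p.1 : ℕ) + (q.1 : ℕ))) i j)
        ≤ (p.1 : ℕ) + (q.1 : ℕ) := by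
      refine degE_sum_le _ _ _ fun i _ => ?_
      refine le_trans (degE_mul_le _ _) ?_
      have h3 : degE (n := n) Sum.inl ((XupM (MvPolynomial (Fin n ⊕ Fin n) ℤ) n m)ᵀ p.2 i) = 0 := by
        rw [Matrix.transpose_apply, XupM]; exact degE_ite01 _
      have h4 := (mulMat_pow_bound hn ((p.1 : ℕ) + (q.1 : ℕ)) i j).1
      omega
    omega
  · refine degE_sum_le _ _ _ fun j _ => ?_
    refine le_trans (degE_mul_le _ _) ?_
    have h2 : degE (n := n) Sum.inr (XupM (MvPolynomial (Fin n ⊕ Fin n) ℤ) n m j q.2) = 0 := by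
      rw [XupM]; exact degE_ite01 _
    rw [Matrix.mul_apply]
    have h1 : degE Sum.inr (∑ i, (XupM (MvPolynomial (Fin n ⊕ Fin n) ℤ) n m)ᵀ p.2 i *
        (mulMatM (genericF n) (genericA n) n ^ ((p.1 : ℕ) + (q.1 : ℕ))) i j)
        ≤ ((p.1 : ℕ) + (q.1 : ℕ)) * (n - 1) := by
      refine degE_sum_le _ _ _ fun i _ => ?_
      refine le_trans (degE_mul_le _ _) ?_
      have h3 : degE (n := n) Sum.inr ((XupM (MvPolynomial (Fin n ⊕ Fin n) ℤ) n m)ᵀ p.2 i) = 0 := by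
        rw [Matrix.transpose_apply, XupM]; exact degE_ite01 _
      have h4 := (mulMat_pow_bound hn ((p.1 : ℕ) + (q.1 : ℕ)) i j).2
      omega
    omega



lemma degInA_eq (p : MvPolynomial (Fin n ⊕ Fin n) ℤ) : degInA p = degE Sum.inl p := rfl
lemma degInF_eq (p : MvPolynomial (Fin n ⊕ Fin n) ℤ) : degInF p = degE Sum.inr p := rfl

set_option maxHeartbeats 1000000 in
/-- every `n×n` minor `Δ` of the generic block Hankel matrix
`Hk_{m,⌈n/m⌉}(ā,f̄)` satisfies `m·deg_ā Δ ≤ 2n²` and `m·deg_f̄ Δ ≤ 2n²(n-1)`. -/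
theorem minor_degree_bound
    (n m : ℕ) (hm : 1 ≤ m) (hmn : m ≤ n)
    (r c : Fin n → Fin (n ⌈/⌉ m) × Fin m)
    (hr : Function.Injective r) (hc : Function.Injective c) :
    m * degInA (((hankelMatM (genericF n) (genericA n) n m (n ⌈/⌉ m)).submatrix r c).det)
        ≤ 2 * n ^ 2 ∧
    m * degInF (((hankelMatM (genericF n) (genericA n) n m (n ⌈/⌉ m)).submatrix r c).det)
        ≤ 2 * n ^ 2 * (n - 1) := by
  have hn : 0 < n := le_trans hm hmn
  set s : ℕ := ∑ i ∈ Finset.range (n ⌈/⌉ m), i with hs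
  set T : ℕ := (∑ i : Fin n, ((r i).1 : ℕ)) + (∑ i : Fin n, ((c i).1 : ℕ)) with hT
  -- determinant degree bounds
  have hdet : degE Sum.inl ((hankelMatM (genericF n) (genericA n) n m (n ⌈/⌉ m)).submatrix r c).det ≤ T ∧
      degE Sum.inr ((hankelMatM (genericF n) (genericA n) n m (n ⌈/⌉ m)).submatrix r c).det ≤ T * (n - 1) := by
    rw [Matrix.det_apply]
    constructor
    · refine degE_sum_le _ _ _ fun σ _ => ?_
      rw [Units.smul_def]
      refine le_trans (degE_smul_le _ _) ?_
      refine le_trans (degE_prod_le _ _ (fun i => ((r (σ i)).1 : ℕ) + ((c i).1 : ℕ)) ?_) ?_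
      · intro i _
        rw [Matrix.submatrix_apply]
        exact (hankel_bound hn m (n ⌈/⌉ m) (r (σ i)) (c i)).1
      · rw [Finset.sum_add_distrib, Equiv.sum_comp σ (fun i => ((r i).1 : ℕ))]
    · refine degE_sum_le _ _ _ fun σ _ => ?_
      rw [Units.smul_def]
      refine le_trans (degE_smul_le _ _) ?_
      refine le_trans (degE_prod_le _ _
        (fun i => (((r (σ i)).1 : ℕ) + ((c i).1 : ℕ)) * (n - 1)) ?_) ?_
      · intro i _
        rw [Matrix.submatrix_apply]
        exact (hankel_bound hn m (n ⌈/⌉ m) (r (σ i)) (c i)).2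
      · rw [← Finset.sum_mul]
        apply Nat.mul_le_mul_right
        rw [Finset.sum_add_distrib, Equiv.sum_comp σ (fun i => ((r i).1 : ℕ))]
  -- combinatorial bound on T
  have hsum : ∀ g : Fin n → Fin (n ⌈/⌉ m) × Fin m, Function.Injective g →
      (∑ i : Fin n, ((g i).1 : ℕ)) ≤ m * s := by
    intro g hg
    have h1 : (∑ p ∈ Finset.univ.image g, ((p.1 : ℕ))) = ∑ i : Fin n, ((g i).1 : ℕ) :=
      Finset.sum_image (fun a _ b _ h => hg h)
    rw [← h1]
    refine le_trans (Finset.sum_le_sum_of_subset (Finset.subset_univ _)) ?_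
    rw [Fintype.sum_prod_type]
    simp only [Finset.sum_const, Finset.card_univ, Fintype.card_fin, smul_eq_mul]
    rw [← Finset.mul_sum, hs, Fin.sum_univ_eq_sum_range (fun i => i) (n ⌈/⌉ m)]
  have hTs : T ≤ 2 * (m * s) := by
    have h1 := hsum r hr
    have h2 := hsum c hc
    omega
  -- arithmetic
  have h2s : 2 * s = (n ⌈/⌉ m) * ((n ⌈/⌉ m) - 1) := by
    have := Finset.sum_range_id_mul_two (n ⌈/⌉ m)
    omega
  have hmd : m * (n ⌈/⌉ m) ≤ n + m - 1 := by
    rw [Nat.ceilDiv_eq_add_pred_div, mul_comm]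
    exact Nat.div_mul_le_self _ _
  have hnd : n ≤ m * (n ⌈/⌉ m) := by
    have := le_smul_ceilDiv (α := ℕ) (β := ℕ) (b := n) (Nat.lt_of_lt_of_le Nat.zero_lt_one hm)
    simpa [smul_eq_mul] using this
  have hd1 : 1 ≤ (n ⌈/⌉ m) := by
    rcases Nat.eq_zero_or_pos (n ⌈/⌉ m) with h | h
    · rw [h, mul_zero] at hnd; omega
    · exact h
  obtain ⟨d', hd'⟩ : ∃ d', (n ⌈/⌉ m) = d' + 1 := ⟨(n ⌈/⌉ m) - 1, by omega⟩
  have hmd2 : m * d' + m ≤ n + m - 1 := by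
    have : m * d' + m = m * (n ⌈/⌉ m) := by rw [hd']; ring
    omega
  have hmd3 : m * d' ≤ n - 1 := by omega
  have hkey : m * T ≤ (2 * n - 1) * (n - 1) := by
    calc m * T ≤ m * (2 * (m * s)) := Nat.mul_le_mul_left _ hTs
    _ = m * m * (2 * s) := by ring
    _ = m * m * ((d' + 1) * d') := by rw [h2s, hd', Nat.add_sub_cancel]
    _ = (m * (n ⌈/⌉ m)) * (m * d') := by rw [hd']; ring
    _ ≤ (2 * n - 1) * (n - 1) := Nat.mul_le_mul (by omega) hmd3
  have hfinal : (2 * n - 1) * (n - 1) ≤ 2 * n ^ 2 := by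
    calc (2 * n - 1) * (n - 1) ≤ (2 * n) * n := Nat.mul_le_mul (by omega) (by omega)
    _ = 2 * n ^ 2 := by ring
  constructor
  · rw [degInA_eq]
    calc m * degE Sum.inl ((hankelMatM (genericF n) (genericA n) n m (n ⌈/⌉ m)).submatrix r c).det
        ≤ m * T := Nat.mul_le_mul_left _ hdet.1
    _ ≤ (2 * n - 1) * (n - 1) := hkey
    _ ≤ 2 * n ^ 2 := hfinal
  · rw [degInF_eq]
    calc m * degE Sum.inr ((hankelMatM (genericF n) (genericA n) n m (n ⌈/⌉ m)).submatrix r c).det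
        ≤ m * (T * (n - 1)) := Nat.mul_le_mul_left _ hdet.2
    _ = (m * T) * (n - 1) := by ring
    _ ≤ ((2 * n - 1) * (n - 1)) * (n - 1) := Nat.mul_le_mul_right _ hkey
    _ ≤ 2 * n ^ 2 * (n - 1) := Nat.mul_le_mul_right _ hfinal
end
end

section
/- Let K be a field, f ∈ K[x] of degree n with f(0) ≠ 0, and 1 ≤ m ≤ n. There exists a nonzero polynomial Δ_{f,m} ∈ K[ā_0, …, ā_{n−1}] whose total degree satisfies m·deg(Δ_{f,m}) ≤ 2n² such that, for every a = a_0 + a_1·x + ⋯ + a_{n−1}·x^{n−1} ∈ K[x], if Δ_{f,m}(a_0, …, a_{n−1}) ≠ 0 then the block Hankel matrix Hk_{m,d}(a,f) ∈ K^{(md)×(md)} has rank n for every d ≥ ⌈n/m⌉. -/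
open Polynomial Matrix

noncomputable section

variable {K : Type*} [Field K]

namespace HkAux

set_option linter.unusedSectionVars false

def fm (f : K[X]) : K[X] := f * C f.leadingCoeff⁻¹

variable {f : K[X]} {n : ℕ}

lemma mod_eq (p : K[X]) : p % f = p %ₘ fm f := Polynomial.mod_def

section Basic
variable (hn : 0 < n) (hf : f.natDegree = n)
include hn hf

lemma f_ne : f ≠ 0 := fun h => by simp [h] at hf; omega

lemma monic_fm : (fm f).Monic := monic_mul_leadingCoeff_inv (f_ne hn hf)

lemma degree_fm : (fm f).degree = (n : WithBot ℕ) := by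
  rw [fm, degree_mul_leadingCoeff_inv _ (f_ne hn hf), degree_eq_natDegree (f_ne hn hf), hf]

lemma degree_mod_lt (p : K[X]) : (p %ₘ fm f).degree < (n : WithBot ℕ) := by
  rw [← degree_fm hn hf]; exact degree_modByMonic_lt _ (monic_fm hn hf)

lemma mod_self_of_lt {p : K[X]} (hp : p.degree < (n : WithBot ℕ)) : p %ₘ fm f = p := by
  rw [modByMonic_eq_self_iff (monic_fm hn hf), degree_fm hn hf]; exact hp

lemma natDegree_lt_of_degree_lt {p : K[X]} (hp : p.degree < (n : WithBot ℕ)) :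
    p.natDegree < n := by
  rcases eq_or_ne p 0 with h | h
  · simpa [h]
  · exact (Polynomial.natDegree_lt_iff_degree_lt h).2 hp

lemma mod_absorb (p q : K[X]) : (p * (q %ₘ fm f)) %ₘ fm f = (p * q) %ₘ fm f := by
  conv_rhs => rw [← modByMonic_add_div q (fm f)]
  rw [mul_add, add_modByMonic, ← mul_assoc, mul_comm p (fm f), mul_assoc,
    (modByMonic_eq_zero_iff_dvd (monic_fm hn hf)).2 (dvd_mul_right _ _), add_zero]

lemma mod_congr {p q : K[X]} (h : fm f ∣ p - q) : p %ₘ fm f = q %ₘ fm f := by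
  have := (modByMonic_eq_zero_iff_dvd (monic_fm hn hf)).2 h
  rw [sub_modByMonic] at this
  exact sub_eq_zero.1 this

lemma mul_mod_expand {b : K[X]} (hb : b.natDegree < n) (g : K[X]) :
    (b * g) %ₘ fm f = ∑ j ∈ Finset.range n, C (b.coeff j) * ((X ^ j * g) %ₘ fm f) := by
  conv_lhs => rw [b.as_sum_range' n hb, Finset.sum_mul]
  have h1 : ∀ j ∈ Finset.range n, (monomial j (b.coeff j)) * g
      = b.coeff j • (X ^ j * g) := by
    intro j _
    rw [smul_eq_C_mul, ← mul_assoc, ← C_mul_X_pow_eq_monomial]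
  rw [Finset.sum_congr rfl h1]
  have h2 := map_sum (modByMonicHom (fm f)) (fun j => b.coeff j • (X ^ j * g)) (Finset.range n)
  simp only [modByMonicHom_apply] at h2
  rw [h2]
  refine Finset.sum_congr rfl fun j _ => ?_
  rw [smul_modByMonic, smul_eq_C_mul]

/-- Multiplication matrix acts as multiplication followed by reduction. -/
lemma mulVec_coeff (a : K[X]) {r : K[X]} (hr : r.degree < (n : WithBot ℕ)) :
    (mulMat f a n).mulVec (fun i : Fin n => r.coeff (i : ℕ))
      = fun i : Fin n => ((a * r) %ₘ fm f).coeff (i : ℕ) := by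
  funext i
  have hre : (a * r) %ₘ fm f = (r * a) %ₘ fm f := by rw [mul_comm]
  rw [hre, mul_mod_expand hn hf (natDegree_lt_of_degree_lt hn hf hr) a]
  rw [finset_sum_coeff]
  rw [Matrix.mulVec, ← Fin.sum_univ_eq_sum_range
    (fun j => (C (r.coeff j) * ((X ^ j * a) %ₘ fm f)).coeff (i : ℕ)) n]
  refine Finset.sum_congr rfl fun k _ => ?_
  rw [coeff_C_mul]
  show ((X ^ (k : ℕ) * a) % f).coeff (i : ℕ) * r.coeff (k : ℕ) = _
  rw [mod_eq, mul_comm]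

lemma pow_mulVec (a : K[X]) (i : ℕ) {r : K[X]} (hr : r.degree < (n : WithBot ℕ)) :
    ((mulMat f a n) ^ i).mulVec (fun t : Fin n => r.coeff (t : ℕ))
      = fun t : Fin n => ((a ^ i * r) %ₘ fm f).coeff (t : ℕ) := by
  induction i with
  | zero =>
    simp only [pow_zero, Matrix.one_mulVec, one_mul]
    rw [mod_self_of_lt hn hf hr]
  | succ i ih =>
    rw [pow_succ', ← Matrix.mulVec_mulVec, ih, mulVec_coeff hn hf a
      (degree_mod_lt hn hf _), mod_absorb hn hf, ← mul_assoc, ← pow_succ']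

lemma dvd_mod_sub_self (b : K[X]) : fm f ∣ (b %ₘ fm f) - b := by
  have h := modByMonic_add_div b (fm f)
  have h2 : (b %ₘ fm f) - b = -(fm f * (b /ₘ fm f)) := by linear_combination h
  rw [h2]
  exact (dvd_neg).2 (Dvd.intro _ rfl)

lemma pow_mod_congr (b g : K[X]) (i : ℕ) :
    ((b %ₘ fm f) ^ i * g) %ₘ fm f = (b ^ i * g) %ₘ fm f := by
  apply mod_congr hn hf
  have h1 : fm f ∣ (b %ₘ fm f) ^ i - b ^ i :=
    (dvd_mod_sub_self hn hf b).trans (sub_dvd_pow_sub_pow _ _ i)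
  have h2 : (b %ₘ fm f) ^ i * g - b ^ i * g
      = ((b %ₘ fm f) ^ i - b ^ i) * g := by ring
  rw [h2]
  exact h1.mul_right _

lemma coprime_fm_Xpow (hf0 : f.eval 0 ≠ 0) (k : ℕ) : IsCoprime (fm f) ((X : K[X]) ^ k) := by
  have hX : ¬ (X : K[X]) ∣ fm f := by
    rw [X_dvd_iff, fm, coeff_mul_C]
    exact mul_ne_zero (by rwa [coeff_zero_eq_eval_zero])
      (inv_ne_zero (leadingCoeff_ne_zero.2 (f_ne hn hf)))
  exact ((Polynomial.irreducible_X.coprime_iff_not_dvd.2 hX).symm).pow_right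

lemma key_inj {m : ℕ} (hm : 0 < m) (hf0 : f.eval 0 ≠ 0) {p : K[X]}
    (hp : p.degree < (n : WithBot ℕ)) (d0 : ℕ) (hnd : n ≤ m * d0)
    (h : ∀ i < d0, ∀ j < m, ((X ^ (m * i) * p) %ₘ fm f).coeff j = 0) : p = 0 := by
  by_contra hp0
  have hd0pos : 0 < d0 := by
    rcases Nat.eq_zero_or_pos d0 with h0 | h0
    · subst h0; simp at hnd; omega
    · exact h0
  set r : ℕ → K[X] := fun i => (X ^ (m * i) * p) %ₘ fm f with hrdef
  have hrdeg : ∀ i, (r i).degree < (n : WithBot ℕ) := fun i => degree_mod_lt hn hf _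
  have hdvd : ∀ i < d0, (X : K[X]) ^ m ∣ r i := by
    intro i hi; rw [X_pow_dvd_iff]; exact fun j hj => h i hi j hj
  have hr0 : r 0 = p := by
    have : r 0 = p %ₘ fm f := by rw [hrdef]; simp
    rw [this, mod_self_of_lt hn hf hp]
  have hstep : ∀ i, i + 1 < d0 → r (i + 1) = X ^ m * r i := by
    intro i hi
    have e1 : (X ^ m * r i) %ₘ fm f = r (i + 1) := by
      rw [hrdef]; dsimp only
      rw [mod_absorb hn hf, ← mul_assoc, ← pow_add]
      ring_nf
    have hfd : fm f ∣ X ^ m * r i - r (i + 1) := by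
      have h2 := modByMonic_add_div (X ^ m * r i) (fm f)
      rw [e1] at h2
      exact ⟨(X ^ m * r i) /ₘ fm f, by linear_combination -h2⟩
    have hXd : (X : K[X]) ^ m ∣ X ^ m * r i - r (i + 1) :=
      dvd_sub (dvd_mul_right _ _) (hdvd _ hi)
    have hmul : fm f * X ^ m ∣ X ^ m * r i - r (i + 1) :=
      (coprime_fm_Xpow hn hf hf0 m).mul_dvd hfd hXd
    have hdlt : (X ^ m * r i - r (i + 1)).degree < (fm f * X ^ m).degree := by
      rw [degree_mul, degree_fm hn hf, degree_X_pow]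
      refine lt_of_le_of_lt (degree_sub_le _ _) ?_
      rw [max_lt_iff]
      constructor
      · rw [degree_mul, degree_X_pow, add_comm (n : WithBot ℕ) (m : WithBot ℕ)]
        exact WithBot.add_lt_add_left (by simp) (hrdeg i)
      · refine lt_of_lt_of_le (hrdeg (i + 1)) ?_
        rw [← Nat.cast_add]
        exact_mod_cast Nat.le_add_right n m
    have hD0 : X ^ m * r i - r (i + 1) = 0 := eq_zero_of_dvd_of_degree_lt hmul hdlt
    exact (sub_eq_zero.1 hD0).symm
  have hchain : ∀ i, i < d0 → r i = X ^ (m * i) * p := by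
    intro i
    induction i with
    | zero => intro _; simpa using hr0
    | succ i ih =>
      intro hi
      rw [hstep i hi, ih (by omega), ← mul_assoc, ← pow_add]
      ring_nf
  have hXp : (X : K[X]) ^ m ∣ p := hr0 ▸ hdvd 0 hd0pos
  have hdegp : m ≤ p.natDegree := by
    have := natDegree_le_of_dvd hXp hp0
    simpa using this
  have hlast := hchain (d0 - 1) (by omega)
  have hlt : (X ^ (m * (d0 - 1)) * p).natDegree < n := by
    rw [← hlast]; exact natDegree_lt_of_degree_lt hn hf (hrdeg _)
  rw [natDegree_mul (pow_ne_zero _ X_ne_zero) hp0, natDegree_X_pow] at hlt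
  have hmd : m * (d0 - 1) + m = m * d0 := by
    have h1 : d0 - 1 + 1 = d0 := Nat.sub_add_cancel hd0pos
    calc m * (d0 - 1) + m = m * (d0 - 1 + 1) := by ring
    _ = m * d0 := by rw [h1]
  omega

end Basic

/-- Left factor of the Hankel matrix. -/
def Lm (f a : K[X]) (n m d : ℕ) : Matrix (Fin d × Fin m) (Fin n) K :=
  fun p k => ((Xup K n m)ᵀ * (mulMat f a n) ^ (p.1 : ℕ)) p.2 k

/-- Right factor of the Hankel matrix. -/
def Rm (f a : K[X]) (n m d : ℕ) : Matrix (Fin n) (Fin d × Fin m) K :=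
  fun k q => ((mulMat f a n) ^ (q.1 : ℕ) * Xup K n m) k q.2

lemma hankel_factor (f a : K[X]) (n m d : ℕ) :
    hankelMat f a n m d = Lm f a n m d * Rm f a n m d := by
  ext p q
  rw [Matrix.mul_apply]
  have h : (Xup K n m)ᵀ * (mulMat f a n) ^ ((p.1 : ℕ) + (q.1 : ℕ)) * Xup K n m
      = ((Xup K n m)ᵀ * (mulMat f a n) ^ (p.1 : ℕ))
        * ((mulMat f a n) ^ (q.1 : ℕ) * Xup K n m) := by
    rw [pow_add, ← Matrix.mul_assoc, ← Matrix.mul_assoc]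
  show ((Xup K n m)ᵀ * (mulMat f a n) ^ ((p.1 : ℕ) + (q.1 : ℕ)) * Xup K n m) p.2 q.2 = _
  rw [h, Matrix.mul_apply]
  rfl

lemma rank_hankel_le (f a : K[X]) (n m d : ℕ) : (hankelMat f a n m d).rank ≤ n := by
  rw [hankel_factor]
  refine le_trans (Matrix.rank_mul_le_left _ _) ?_
  simpa using Matrix.rank_le_card_width (Lm f a n m d)

section Mat
variable {m d : ℕ} (hn : 0 < n) (hf : f.natDegree = n) (hm : 0 < m) (hmn : m ≤ n)
include hn hf hmn

lemma Rm_col_coeff (a : K[X]) (q : Fin d × Fin m) (k : Fin n) :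
    Rm f a n m d k q = ((a ^ (q.1 : ℕ) * X ^ (q.2 : ℕ)) %ₘ fm f).coeff (k : ℕ) := by
  have hdeg : ((X : K[X]) ^ (q.2 : ℕ)).degree < (n : WithBot ℕ) := by
    rw [degree_X_pow]
    exact_mod_cast lt_of_lt_of_le q.2.2 hmn
  have hv : (fun l : Fin n => ((X : K[X]) ^ (q.2 : ℕ)).coeff (l : ℕ))
      = fun l : Fin n => Xup K n m l q.2 := by
    funext l
    rw [coeff_X_pow, Xup]
  have := congrFun (pow_mulVec hn hf a (q.1 : ℕ) hdeg) k
  rw [hv] at this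
  rw [← this]
  rfl

lemma Lm_mulVec (a : K[X]) (v : Fin n → K) (p : Fin d × Fin m) :
    (Lm f a n m d).mulVec v p
      = ((a ^ (p.1 : ℕ) * (∑ t : Fin n, C (v t) * X ^ (t : ℕ))) %ₘ fm f).coeff (p.2 : ℕ) := by
  set pv : K[X] := ∑ t : Fin n, C (v t) * X ^ (t : ℕ) with hpv
  have hdegpv : pv.degree < (n : WithBot ℕ) := by
    refine lt_of_le_of_lt (degree_sum_le _ _) ?_
    rw [Finset.sup_lt_iff (by exact_mod_cast WithBot.bot_lt_coe n)]
    intro t _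
    refine lt_of_le_of_lt (degree_C_mul_X_pow_le _ _) ?_
    exact_mod_cast t.2
  have hcoeff : (fun t : Fin n => pv.coeff (t : ℕ)) = v := by
    funext t
    rw [hpv, finset_sum_coeff]
    have h1 : ∀ t' : Fin n, (C (v t') * X ^ (t' : ℕ)).coeff (t : ℕ)
        = if t' = t then v t' else 0 := by
      intro t'
      rw [coeff_C_mul, coeff_X_pow]
      by_cases h : t' = t
      · subst h; simp
      · have : ¬ ((t : ℕ) = (t' : ℕ)) := fun hh => h (Fin.ext hh.symm)
        simp [h, this]
    rw [Finset.sum_congr rfl fun t' _ => h1 t', Finset.sum_ite_eq' Finset.univ t v]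
    simp
  set j' : Fin n := ⟨(p.2 : ℕ), lt_of_lt_of_le p.2.2 hmn⟩ with hj'
  have hLm : ∀ k : Fin n, Lm f a n m d p k = ((mulMat f a n) ^ (p.1 : ℕ)) j' k := by
    intro k
    show ((Xup K n m)ᵀ * (mulMat f a n) ^ (p.1 : ℕ)) p.2 k = _
    rw [Matrix.mul_apply]
    have h2 : ∀ l : Fin n, (Xup K n m)ᵀ p.2 l * ((mulMat f a n) ^ (p.1 : ℕ)) l k
        = if l = j' then ((mulMat f a n) ^ (p.1 : ℕ)) l k else 0 := by
      intro l
      show (if (l : ℕ) = ((p.2 : Fin m) : ℕ) then (1:K) else 0) * _ = _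
      by_cases h : l = j'
      · subst h; simp [hj']
      · have : ¬ ((l : ℕ) = (p.2 : ℕ)) := fun hh => h (Fin.ext hh)
        simp [h, this]
    rw [Finset.sum_congr rfl fun l _ => h2 l, Finset.sum_ite_eq' Finset.univ j' _]
    simp
  have : (Lm f a n m d).mulVec v p = ((mulMat f a n) ^ (p.1 : ℕ)).mulVec v j' := by
    rw [Matrix.mulVec, Matrix.mulVec]
    apply Finset.sum_congr rfl
    intro k _
    show Lm f a n m d p k * v k = (mulMat f a n ^ (p.1:ℕ)) j' k * v k
    rw [hLm k]
  rw [this, ← hcoeff, pow_mulVec hn hf a _ hdegpv]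
end Mat

section Generic
variable {m d0 : ℕ} (hn : 0 < n) (hf : f.natDegree = n) (hm : 0 < m) (hmn : m ≤ n)
  (hf0 : f.eval 0 ≠ 0) (hnd : n ≤ m * d0)

/-- The reference polynomial `x^m mod f`. -/
def a0 (f : K[X]) (m : ℕ) : K[X] := (X : K[X]) ^ m %ₘ fm f

include hn hf in
lemma a0_degree_lt : (a0 f m).degree < (n : WithBot ℕ) := degree_mod_lt hn hf _

include hn hf in
lemma a0_pow_mod (g : K[X]) (i : ℕ) :
    ((a0 f m) ^ i * g) %ₘ fm f = (X ^ (m * i) * g) %ₘ fm f := by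
  rw [a0, pow_mod_congr hn hf, ← pow_mul]

/-- The explicit right inverse of `Rm`. -/
def Sm (α : Type*) [Zero α] [One α] (n m d0 : ℕ) (hm : 0 < m) (hnd : n ≤ m * d0) :
    Matrix (Fin d0 × Fin m) (Fin n) α :=
  fun q t => if q = (⟨(t : ℕ) / m, by
      rw [Nat.div_lt_iff_lt_mul hm]
      exact lt_of_lt_of_le t.2 (by rw [mul_comm] at hnd; exact hnd)⟩,
      ⟨(t : ℕ) % m, Nat.mod_lt _ hm⟩) then 1 else 0

include hn hf hmn in
lemma Rm_mul_Sm : Rm f (a0 f m) n m d0 * Sm K n m d0 hm hnd = 1 := by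
  ext k t
  rw [Matrix.mul_apply]
  have ht1 : (t : ℕ) / m < d0 := by
    rw [Nat.div_lt_iff_lt_mul hm]
    exact lt_of_lt_of_le t.2 (by rw [mul_comm] at hnd; exact hnd)
  have ht2 : (t : ℕ) % m < m := Nat.mod_lt _ hm
  have h1 : ∀ q : Fin d0 × Fin m, Rm f (a0 f m) n m d0 k q * Sm K n m d0 hm hnd q t
      = if q = ((⟨(t : ℕ) / m, ht1⟩ : Fin d0), (⟨(t : ℕ) % m, ht2⟩ : Fin m))
        then Rm f (a0 f m) n m d0 k q else 0 := by
    intro q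
    have hS : Sm K n m d0 hm hnd q t
        = if q = ((⟨(t : ℕ) / m, ht1⟩ : Fin d0), (⟨(t : ℕ) % m, ht2⟩ : Fin m))
          then 1 else 0 := rfl
    rw [hS]
    split_ifs <;> simp
  rw [Finset.sum_congr rfl fun q _ => h1 q, Finset.sum_ite_eq' Finset.univ _ _]
  simp only [Finset.mem_univ, if_true]
  rw [Rm_col_coeff hn hf hmn, a0_pow_mod hn hf]
  show ((X ^ (m * ((t:ℕ)/m)) * X ^ ((t:ℕ) % m)) %ₘ fm f).coeff (k:ℕ) = _
  rw [← pow_add, Nat.div_add_mod]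
  rw [mod_self_of_lt hn hf (by rw [degree_X_pow]; exact_mod_cast t.2)]
  rw [coeff_X_pow, Matrix.one_apply]
  by_cases h : k = t
  · simp [h]
  · have : ¬ ((k:ℕ) = (t:ℕ)) := fun hh => h (Fin.ext hh)
    simp [h, this]

include hn hf hm hmn hf0 hnd in
lemma exists_U : ∃ U : Matrix (Fin n) (Fin d0 × Fin m) K,
    U * Lm f (a0 f m) n m d0 = 1 := by
  have hker : LinearMap.ker (Matrix.toLin' (Lm f (a0 f m) n m d0)) = ⊥ := by
    rw [LinearMap.ker_eq_bot']
    intro v hv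
    have hv' : ∀ p : Fin d0 × Fin m, (Lm f (a0 f m) n m d0).mulVec v p = 0 := by
      intro p
      have := congrFun hv p
      rwa [Matrix.toLin'_apply] at this
    set pv : K[X] := ∑ t : Fin n, C (v t) * X ^ (t : ℕ) with hpv
    have hcv : ∀ p : Fin d0 × Fin m,
        ((X ^ (m * (p.1 : ℕ)) * pv) %ₘ fm f).coeff (p.2 : ℕ) = 0 := by
      intro p
      have := hv' p
      rwa [Lm_mulVec hn hf hmn, a0_pow_mod hn hf] at this
    have hdegpv : pv.degree < (n : WithBot ℕ) := by
      refine lt_of_le_of_lt (degree_sum_le _ _) ?_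
      rw [Finset.sup_lt_iff (by exact_mod_cast WithBot.bot_lt_coe n)]
      intro t _
      refine lt_of_le_of_lt (degree_C_mul_X_pow_le _ _) ?_
      exact_mod_cast t.2
    have hpv0 : pv = 0 := by
      refine key_inj hn hf hm hf0 hdegpv d0 hnd ?_
      intro i hi j hj
      exact hcv (⟨i, hi⟩, ⟨j, hj⟩)
    funext t
    have : pv.coeff (t : ℕ) = v t := by
      rw [hpv, finset_sum_coeff]
      have h1 : ∀ t' : Fin n, (C (v t') * X ^ (t' : ℕ)).coeff (t : ℕ)
          = if t' = t then v t' else 0 := by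
        intro t'
        rw [coeff_C_mul, coeff_X_pow]
        by_cases h : t' = t
        · subst h; simp
        · have : ¬ ((t : ℕ) = (t' : ℕ)) := fun hh => h (Fin.ext hh.symm)
          simp [h, this]
      rw [Finset.sum_congr rfl fun t' _ => h1 t', Finset.sum_ite_eq' Finset.univ t v]
      simp
    rw [← this, hpv0]
    simp
  obtain ⟨g, hg⟩ := LinearMap.exists_leftInverse_of_injective _ hker
  refine ⟨LinearMap.toMatrix' g, ?_⟩
  have h2 := LinearMap.toMatrix'_comp g (Matrix.toLin' (Lm f (a0 f m) n m d0))
  rw [hg, LinearMap.toMatrix'_id, LinearMap.toMatrix'_toLin'] at h2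
  exact h2.symm

include hn hf hm hmn hf0 hnd in
lemma exists_UV : ∃ (U : Matrix (Fin n) (Fin d0 × Fin m) K)
    (V : Matrix (Fin d0 × Fin m) (Fin n) K),
    U * hankelMat f (a0 f m) n m d0 * V = 1 := by
  obtain ⟨U, hU⟩ := exists_U hn hf hm hmn hf0 hnd
  refine ⟨U, Sm K n m d0 hm hnd, ?_⟩
  rw [hankel_factor, ← Matrix.mul_assoc U, Matrix.mul_assoc (U * _),
    Rm_mul_Sm hn hf hm hmn hnd, hU]
  simp

end Generic

/-- Generic multiplication matrix with multivariate polynomial entries. -/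
def Mgen (f : K[X]) (n : ℕ) : Matrix (Fin n) (Fin n) (MvPolynomial (Fin n) K) :=
  fun i k => ∑ j : Fin n, MvPolynomial.X j
    * MvPolynomial.C (((X ^ ((k : ℕ) + (j : ℕ))) %ₘ fm f).coeff (i : ℕ))

/-- Generic block Hankel matrix. -/
def HkGen (f : K[X]) (n m d : ℕ) :
    Matrix (Fin d × Fin m) (Fin d × Fin m) (MvPolynomial (Fin n) K) :=
  fun p q => ((Xup (MvPolynomial (Fin n) K) n m)ᵀ
    * (Mgen f n) ^ ((p.1 : ℕ) + (q.1 : ℕ)) * Xup (MvPolynomial (Fin n) K) n m) p.2 q.2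

section Eval
variable (hn : 0 < n) (hf : f.natDegree = n)
include hn hf

lemma eval_Mgen {a : K[X]} (ha : a.degree < (n : WithBot ℕ)) :
    (Mgen f n).map (MvPolynomial.eval fun i : Fin n => a.coeff (i : ℕ)) = mulMat f a n := by
  ext i k
  rw [Matrix.map_apply, Mgen]
  rw [map_sum]
  simp only [_root_.map_mul, MvPolynomial.eval_X, MvPolynomial.eval_C]
  show _ = ((X ^ (k : ℕ) * a) % f).coeff (i : ℕ)
  rw [mod_eq, mul_comm, mul_mod_expand hn hf (natDegree_lt_of_degree_lt hn hf ha),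
    finset_sum_coeff, ← Fin.sum_univ_eq_sum_range
      (fun j => (C (a.coeff j) * ((X ^ j * X ^ (k : ℕ)) %ₘ fm f)).coeff (i : ℕ)) n]
  refine Finset.sum_congr rfl fun j _ => ?_
  rw [coeff_C_mul, ← pow_add, add_comm (j : ℕ) (k : ℕ)]

lemma eval_HkGen {a : K[X]} (ha : a.degree < (n : WithBot ℕ)) {m d : ℕ}
    (p q : Fin d × Fin m) :
    MvPolynomial.eval (fun i : Fin n => a.coeff (i : ℕ)) (HkGen f n m d p q)
      = hankelMat f a n m d p q := by
  set ψ : MvPolynomial (Fin n) K →+* K :=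
    (MvPolynomial.eval fun i : Fin n => a.coeff (i : ℕ)) with hψ
  have hXup : (Xup (MvPolynomial (Fin n) K) n m).map ψ = Xup K n m := by
    ext i j
    rw [Matrix.map_apply, Xup, Xup, apply_ite ψ, _root_.map_one, _root_.map_zero]
  have hMp : ∀ e : ℕ, ((Mgen f n) ^ e).map ψ = (mulMat f a n) ^ e := by
    intro e
    have h1 : ((Mgen f n) ^ e).map ψ = ψ.mapMatrix ((Mgen f n) ^ e) := rfl
    rw [h1, map_pow]
    congr 1
    exact eval_Mgen hn hf ha
  have hbig : ((Xup (MvPolynomial (Fin n) K) n m)ᵀ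
      * (Mgen f n) ^ ((p.1 : ℕ) + (q.1 : ℕ)) * Xup (MvPolynomial (Fin n) K) n m).map ψ
      = (Xup K n m)ᵀ * (mulMat f a n) ^ ((p.1 : ℕ) + (q.1 : ℕ)) * Xup K n m := by
    rw [Matrix.map_mul, Matrix.map_mul, Matrix.transpose_map, hXup, hMp]

  have := congrFun (congrFun hbig p.2) q.2
  exact this

end Eval

section Deg

lemma totalDegree_Mgen (i k : Fin n) : (Mgen f n i k).totalDegree ≤ 1 := by
  refine le_trans (MvPolynomial.totalDegree_finset_sum _ _) ?_
  refine Finset.sup_le fun j _ => ?_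
  refine le_trans (MvPolynomial.totalDegree_mul _ _) ?_
  rw [MvPolynomial.totalDegree_X, MvPolynomial.totalDegree_C]

lemma totalDegree_matmul {R : Type*} [CommRing R] {σ : Type*}
    {I J L : Type*} [Fintype J]
    (A : Matrix I J (MvPolynomial σ R)) (B : Matrix J L (MvPolynomial σ R))
    (da db : ℕ) (hA : ∀ i j, (A i j).totalDegree ≤ da)
    (hB : ∀ j l, (B j l).totalDegree ≤ db) (i : I) (l : L) :
    ((A * B) i l).totalDegree ≤ da + db := by
  rw [Matrix.mul_apply]
  refine le_trans (MvPolynomial.totalDegree_finset_sum _ _) ?_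
  refine Finset.sup_le fun j _ => ?_
  exact le_trans (MvPolynomial.totalDegree_mul _ _) (add_le_add (hA i j) (hB j l))

lemma totalDegree_Mgen_pow (e : ℕ) (i k : Fin n) :
    (((Mgen f n) ^ e) i k).totalDegree ≤ e := by
  induction e generalizing i k with
  | zero =>
    rw [pow_zero, Matrix.one_apply]
    split_ifs <;> simp [MvPolynomial.totalDegree_one]
  | succ e ih =>
    rw [pow_succ]
    exact totalDegree_matmul _ _ e 1 ih (fun i k => totalDegree_Mgen i k) i k

lemma totalDegree_Xup_entry {m : ℕ} (i : Fin n) (j : Fin m) :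
    ((Xup (MvPolynomial (Fin n) K) n m) i j).totalDegree ≤ 0 := by
  rw [Xup]
  split_ifs <;> simp [MvPolynomial.totalDegree_one]

lemma totalDegree_HkGen {m d : ℕ} (p q : Fin d × Fin m) :
    (HkGen f n m d p q).totalDegree ≤ (p.1 : ℕ) + (q.1 : ℕ) := by
  have h1 : ∀ (j : Fin m) (k : Fin n),
      (((Xup (MvPolynomial (Fin n) K) n m)ᵀ
        * (Mgen f n) ^ ((p.1 : ℕ) + (q.1 : ℕ))) j k).totalDegree
      ≤ 0 + ((p.1 : ℕ) + (q.1 : ℕ)) := by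
    intro j k
    exact totalDegree_matmul _ _ 0 _ (fun a b => totalDegree_Xup_entry b a)
      (fun a b => totalDegree_Mgen_pow _ a b) j k
  have h2 := totalDegree_matmul
    ((Xup (MvPolynomial (Fin n) K) n m)ᵀ * (Mgen f n) ^ ((p.1 : ℕ) + (q.1 : ℕ)))
    (Xup (MvPolynomial (Fin n) K) n m) (0 + ((p.1 : ℕ) + (q.1 : ℕ))) 0
    h1 (fun a b => totalDegree_Xup_entry a b) p.2 q.2
  simpa [HkGen] using h2

lemma totalDegree_det {R : Type*} [CommRing R] {σ : Type*} {N : ℕ}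
    (A : Matrix (Fin N) (Fin N) (MvPolynomial σ R)) (D : ℕ)
    (hA : ∀ i j, (A i j).totalDegree ≤ D) : A.det.totalDegree ≤ N * D := by
  rw [Matrix.det_apply]
  refine le_trans (MvPolynomial.totalDegree_finset_sum _ _) ?_
  refine Finset.sup_le fun σ' _ => ?_
  refine le_trans (MvPolynomial.totalDegree_smul_le _ _) ?_
  refine le_trans (MvPolynomial.totalDegree_finset_prod _ _) ?_
  refine le_trans (Finset.sum_le_sum fun i _ => hA (σ' i) i) ?_
  simp [Finset.sum_const, Finset.card_univ, mul_comm]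

end Deg

section Final
variable (hn : 0 < n) (hf : f.natDegree = n)

include hn hf in
lemma eval_det {m d0 : ℕ} {a : K[X]} (ha : a.degree < (n : WithBot ℕ))
    (U : Matrix (Fin n) (Fin d0 × Fin m) K) (V : Matrix (Fin d0 × Fin m) (Fin n) K) :
    MvPolynomial.eval (fun i : Fin n => a.coeff (i : ℕ))
      ((U.map (MvPolynomial.C (σ := Fin n)) * HkGen f n m d0 * V.map (MvPolynomial.C (σ := Fin n))).det)
      = (U * hankelMat f a n m d0 * V).det := by
  set ψ : MvPolynomial (Fin n) K →+* K :=
    (MvPolynomial.eval fun i : Fin n => a.coeff (i : ℕ)) with hψ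
  rw [RingHom.map_det]
  congr 1
  show (U.map (MvPolynomial.C (σ := Fin n)) * HkGen f n m d0 * V.map (MvPolynomial.C (σ := Fin n))).map ψ = _
  rw [Matrix.map_mul, Matrix.map_mul]
  have hU : (U.map MvPolynomial.C).map ψ = U := by
    ext i j; simp [Matrix.map_apply, hψ]
  have hV : (V.map MvPolynomial.C).map ψ = V := by
    ext i j; simp [Matrix.map_apply, hψ]
  have hH : (HkGen f n m d0).map ψ = hankelMat f a n m d0 := by
    ext p q; rw [Matrix.map_apply, hψ]; exact eval_HkGen hn hf ha p q
  rw [hU, hV, hH]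

end Final
end HkAux

open HkAux in
/-- for `f` with `f(0) ≠ 0` there is a nonzero polynomial `Δ_{f,m}` in the
coefficients of `a`, of total degree at most `2n²/m`, whose nonvanishing at the coefficients
of `a` ensures that the block Hankel matrix has rank `n` for all `d ≥ ⌈n/m⌉`. -/
theorem exists_generic_rank_polynomial
    (n m : ℕ) (hm : 1 ≤ m) (hmn : m ≤ n)
    (f : K[X]) (hf : f.natDegree = n) (hf0 : f.eval 0 ≠ 0) :
    ∃ Δ : MvPolynomial (Fin n) K, Δ ≠ 0 ∧ m * Δ.totalDegree ≤ 2 * n ^ 2 ∧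
      ∀ a : K[X], a.degree < (n : WithBot ℕ) →
        MvPolynomial.eval (fun i : Fin n => a.coeff (i : ℕ)) Δ ≠ 0 →
        ∀ d : ℕ, n ⌈/⌉ m ≤ d → (hankelMat f a n m d).rank = n := by
  classical
  have hn : 0 < n := le_trans hm hmn
  have hm' : 0 < m := hm
  set d0 : ℕ := n ⌈/⌉ m with hd0def
  have hnd : n ≤ m * d0 := by
    have := le_smul_ceilDiv (α := ℕ) (β := ℕ) hm' (b := n)
    simpa [smul_eq_mul] using this
  have hd0pos : 0 < d0 := by
    rcases Nat.eq_zero_or_pos d0 with h0 | h0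
    · rw [h0, Nat.mul_zero] at hnd; omega
    · exact h0
  have hd0m : m * (d0 - 1) < n := by
    by_contra hcon
    push_neg at hcon
    have : d0 ≤ d0 - 1 := by
      rw [hd0def]
      exact (ceilDiv_le_iff_le_smul hm').2 (by simpa [smul_eq_mul] using hcon)
    omega
  obtain ⟨U, V, hUV⟩ := exists_UV hn hf hm' hmn hf0 hnd
  set W : Matrix (Fin n) (Fin n) (MvPolynomial (Fin n) K) :=
    U.map (MvPolynomial.C (σ := Fin n)) * HkGen f n m d0 * V.map (MvPolynomial.C (σ := Fin n)) with hW
  refine ⟨W.det, ?_, ?_, ?_⟩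
  · -- nonzero: evaluate at the coefficients of a0
    intro hzero
    have h1 := eval_det hn hf (a := a0 f m) (a0_degree_lt hn hf) U V
    rw [hzero] at h1
    rw [hUV] at h1
    simp at h1
  · -- degree bound
    have hent : ∀ i j : Fin n,
        (W i j).totalDegree ≤ 0 + (2 * (d0 - 1)) + 0 := by
      intro i j
      rw [hW]
      refine totalDegree_matmul _ _ (0 + (2 * (d0 - 1))) 0 ?_ ?_ i j
      · intro i' j'
        refine totalDegree_matmul _ _ 0 (2 * (d0 - 1)) ?_ ?_ i' j'
        · intro i'' j''; simp [Matrix.map_apply, MvPolynomial.totalDegree_C]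
        · intro i'' j''
          refine le_trans (totalDegree_HkGen i'' j'') ?_
          have h1 : (i''.1 : ℕ) < d0 := i''.1.2
          have h2 : (j''.1 : ℕ) < d0 := j''.1.2
          omega
      · intro i' j'; simp [Matrix.map_apply, MvPolynomial.totalDegree_C]
    have hdet := totalDegree_det W (0 + (2 * (d0 - 1)) + 0) hent
    refine le_trans (Nat.mul_le_mul_left m hdet) ?_
    have e1 : m * (n * (0 + 2 * (d0 - 1) + 0)) = 2 * (n * (m * (d0 - 1))) := by ring
    rw [e1]
    have e2 : n * (m * (d0 - 1)) ≤ n * n := Nat.mul_le_mul_left n (le_of_lt hd0m)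
    refine le_trans (Nat.mul_le_mul_left 2 e2) ?_
    have : 2 * (n * n) = 2 * n ^ 2 := by ring
    omega
  · intro a ha hΔa d hd
    have hdet : (U * hankelMat f a n m d0 * V).det ≠ 0 := by
      rw [← eval_det hn hf ha U V]
      exact hΔa
    have hrank1 : (U * hankelMat f a n m d0 * V).rank = n := by
      rw [Matrix.rank_of_isUnit _ ((Matrix.isUnit_iff_isUnit_det _).2
        (isUnit_iff_ne_zero.2 hdet))]
      simp
    have h1 : n ≤ (hankelMat f a n m d0).rank := by
      calc n = (U * hankelMat f a n m d0 * V).rank := hrank1.symm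
        _ ≤ (U * hankelMat f a n m d0).rank := Matrix.rank_mul_le_left _ _
        _ ≤ (hankelMat f a n m d0).rank := Matrix.rank_mul_le_right _ _
    have hdle : d0 ≤ d := hd
    set ι : Fin d0 × Fin m → Fin d × Fin m :=
      fun p => (⟨(p.1 : ℕ), lt_of_lt_of_le p.1.2 hdle⟩, p.2) with hι
    set P : Matrix (Fin d0 × Fin m) (Fin d × Fin m) K :=
      fun p q => if q = ι p then 1 else 0 with hP
    have hPA : ∀ (p : Fin d0 × Fin m) (c : Fin d × Fin m),
        (P * hankelMat f a n m d) p c = hankelMat f a n m d (ι p) c := by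
      intro p c
      rw [Matrix.mul_apply]
      have h3 : ∀ q : Fin d × Fin m, P p q * hankelMat f a n m d q c
          = if q = ι p then hankelMat f a n m d q c else 0 := by
        intro q
        rw [hP]
        dsimp only
        split_ifs <;> simp
      rw [Finset.sum_congr rfl fun q _ => h3 q, Finset.sum_ite_eq' Finset.univ (ι p) _]
      simp
    have hemb : P * hankelMat f a n m d * Pᵀ = hankelMat f a n m d0 := by
      ext p q
      rw [Matrix.mul_apply]
      have h4 : ∀ c : Fin d × Fin m,
          (P * hankelMat f a n m d) p c * Pᵀ c q
            = if c = ι q then (P * hankelMat f a n m d) p c else 0 := by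
        intro c
        show _ * (P q c) = _
        rw [hP]
        dsimp only
        split_ifs <;> simp
      rw [Finset.sum_congr rfl fun c _ => h4 c, Finset.sum_ite_eq' Finset.univ (ι q) _]
      simp only [Finset.mem_univ, if_true]
      rw [hPA]
      rfl
    have h2 : (hankelMat f a n m d0).rank ≤ (hankelMat f a n m d).rank := by
      rw [← hemb]
      exact le_trans (Matrix.rank_mul_le_left _ _) (Matrix.rank_mul_le_right _ _)
    exact le_antisymm (rank_hankel_le f a n m d) (le_trans h1 h2)
end
end

section
/- Let K be a field, ξ_1, …, ξ_n ∈ K pairwise distinct, c ∈ K∖{0}, f = c·(x−ξ_1)⋯(x−ξ_n) ∈ K[x], and let a ∈ K[x] of degree < n take the values λ_1, …, λ_r at ξ_1, …, ξ_n with multiplicities ℓ_1, …, ℓ_r; let 1 ≤ m ≤ n and d ≥ 1. Then rank K_{m,d}(a,f) = rank P_{ℓ,m,d}(ξ_1, …, ξ_n, λ_1, …, λ_r). If moreover all ξ_k are nonzero, then rank L_{m,d}(a,f) = rank P_{ℓ,m,d}(1/ξ_1, …, 1/ξ_n, λ_1, …, λ_r). -/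
open Polynomial Matrix

noncomputable section

variable {K : Type*} [Field K]

/-- `s_i = ℓ_1 + ⋯ + ℓ_{i-1}`. -/
def partialSum {r : ℕ} (ℓ : Fin r → ℕ) (i : Fin r) : ℕ :=
  ∑ j ∈ Finset.Iio i, ℓ j

/-- `a` takes the (pairwise distinct) values `lam 1, …, lam r` at `ξ 1, …, ξ n` with
multiplicities `ℓ 1, …, ℓ r`. -/
def TakesValues {n r : ℕ} (a : K[X]) (ξ : Fin n → K) (lam : Fin r → K) (ℓ : Fin r → ℕ) : Prop :=
  Function.Injective lam ∧ (∀ i, 1 ≤ ℓ i) ∧ (∑ i, ℓ i = n) ∧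
    ∀ (k : Fin n) (i : Fin r), partialSum ℓ i ≤ (k : ℕ) →
      (k : ℕ) < partialSum ℓ i + ℓ i → a.eval (ξ k) = lam i

/-- The block Krylov matrix `K_{m,d}(a,f) = (X  M_a X  ⋯  M_a^{d-1} X)`,
with columns indexed by `Fin d × Fin m` (power first). -/
def krylovR (f a : K[X]) (n m d : ℕ) : Matrix (Fin n) (Fin d × Fin m) K :=
  fun i p => ((mulMat f a n) ^ ((p.1 : ℕ)) * Xup K n m) i p.2

/-- The block Krylov matrix `L_{m,d}(a,f)`, the vertical stack of `Xᵀ M_a^j`, `0 ≤ j < d`,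
with rows indexed by `Fin d × Fin m` (power first). -/
def krylovL (f a : K[X]) (n m d : ℕ) : Matrix (Fin d × Fin m) (Fin n) K :=
  fun p i => ((Xup K n m)ᵀ * (mulMat f a n) ^ ((p.1 : ℕ))) p.2 i

/-- The matrix `P_{ℓ,m,d}(u, w) = (V  D V  ⋯  D^{d-1} V)` where `V` is the Vandermonde-type
matrix with entries `u_k^j` (`j < m`) and `D = diag w`; columns indexed by `Fin d × Fin m`.
For the values `w k = λ_{i(k)}` grouped with multiplicities, `D` is the block-scalar diagonal
matrix of the λ's. -/
def pointsMat {n : ℕ} (u w : Fin n → K) (m d : ℕ) : Matrix (Fin n) (Fin d × Fin m) K :=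
  fun k p => w k ^ ((p.1 : ℕ)) * u k ^ ((p.2 : ℕ))

/-! ### Auxiliary lemmas -/

open Finset Kronecker

lemma aux_pow_inv (x : K) (hx : x ≠ 0) {u k : ℕ} (h : u ≤ k) :
    (x⁻¹)^(k+1) * x^(k-u) = (x⁻¹)^(u+1) := by
  have h1 : x^(k-u) * x^(u+1) = x^(k+1) := by rw [← pow_add]; congr 1; omega
  have h2 : (x⁻¹)^(u+1) * x^(u+1) = 1 := by rw [← mul_pow, inv_mul_cancel₀ hx, one_pow]
  have h3 : (x⁻¹)^(k+1) * x^(k+1) = 1 := by rw [← mul_pow, inv_mul_cancel₀ hx, one_pow]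
  apply mul_right_cancel₀ (pow_ne_zero (u+1) hx)
  rw [mul_assoc, h1, h3, h2]

lemma aux_ifsum {m : ℕ} {k : ℕ} (hk : k < m) (g : ℕ → K) :
    ∑ u : Fin m, (if (u:ℕ) ≤ k then g (u:ℕ) else 0) = ∑ u ∈ Finset.range (k+1), g u := by
  rw [Fin.sum_univ_eq_sum_range (fun u => if u ≤ k then g u else 0) m, ← Finset.sum_filter]
  congr 1
  ext x
  simp only [Finset.mem_filter, Finset.mem_range, Nat.lt_succ_iff]
  omega

lemma modByMonic_mul_right_mod {F : K[X]} (hF : F.Monic) (q r : K[X]) :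
    (q %ₘ F * r) %ₘ F = (q * r) %ₘ F := by
  conv_rhs => rw [← modByMonic_add_div q F]
  rw [add_mul, add_modByMonic]
  have h0 : (F * (q /ₘ F) * r) %ₘ F = 0 :=
    (modByMonic_eq_zero_iff_dvd hF).mpr ⟨q /ₘ F * r, by ring⟩
  rw [h0, add_zero]

lemma natDegree_modByMonic_lt' {F : K[X]} (hF : F.Monic) {n : ℕ} (hn : 1 ≤ n)
    (hdeg : F.natDegree = n) (p : K[X]) : (p %ₘ F).natDegree < n := by
  by_cases h0 : p %ₘ F = 0
  · rw [h0, natDegree_zero]; omega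
  · rw [← hdeg]
    exact natDegree_lt_natDegree h0 (degree_modByMonic_lt p hF)

lemma mulMat_pow_apply {n : ℕ} (hn : 1 ≤ n) (F f a : K[X]) (hF : F.Monic)
    (hdeg : F.natDegree = n) (hmod : ∀ p : K[X], p % f = p %ₘ F) (j : ℕ) :
    ∀ i k : Fin n, ((mulMat f a n) ^ j) i k = ((X ^ (k : ℕ) * a ^ j) %ₘ F).coeff (i : ℕ) := by
  have hFdeg : F.degree = (n : WithBot ℕ) := by
    rw [degree_eq_natDegree hF.ne_zero, hdeg]
  induction j with
  | zero =>
    intro i k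
    rw [pow_zero, pow_zero, mul_one]
    have hself : (X ^ (k : ℕ) : K[X]) %ₘ F = X ^ (k : ℕ) := by
      rw [modByMonic_eq_self_iff hF, degree_X_pow, hFdeg]
      exact_mod_cast k.isLt
    rw [hself, Matrix.one_apply, coeff_X_pow]
    simp [Fin.val_eq_val, eq_comm]
  | succ j ih =>
    intro i k
    rw [pow_succ]
    set p : K[X] := (X ^ (k : ℕ) * a) %ₘ F with hp
    have hpdeg : p.natDegree < n := natDegree_modByMonic_lt' hF hn hdeg _
    have hM : ∀ ℓ : Fin n, (mulMat f a n) ℓ k = p.coeff ℓ := by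
      intro ℓ; rw [mulMat, hmod]
    have expand : p * a ^ j = ∑ ℓ ∈ range n, p.coeff ℓ • (X ^ ℓ * a ^ j) := by
      conv_lhs => rw [as_sum_range' p n hpdeg, Finset.sum_mul]
      refine Finset.sum_congr rfl fun ℓ _ => ?_
      rw [← C_mul_X_pow_eq_monomial, smul_eq_C_mul, mul_assoc]
    have hmodsum : (p * a ^ j) %ₘ F = ∑ ℓ ∈ range n, p.coeff ℓ • ((X ^ ℓ * a ^ j) %ₘ F) := by
      rw [expand, ← modByMonicHom_apply, map_sum]
      simp only [modByMonicHom_apply, smul_modByMonic]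
    have hcong : (p * a ^ j) %ₘ F = (X ^ (k : ℕ) * a ^ (j + 1)) %ₘ F := by
      rw [hp, modByMonic_mul_right_mod hF]
      congr 1; ring
    rw [Matrix.mul_apply]
    calc (∑ ℓ : Fin n, ((mulMat f a n) ^ j) i ℓ * (mulMat f a n) ℓ k)
        = ∑ ℓ : Fin n, p.coeff ℓ * ((X ^ (ℓ : ℕ) * a ^ j) %ₘ F).coeff (i : ℕ) := by
          refine Finset.sum_congr rfl fun ℓ _ => ?_
          rw [ih i ℓ, hM ℓ, mul_comm]
      _ = ∑ ℓ ∈ range n, p.coeff ℓ * ((X ^ ℓ * a ^ j) %ₘ F).coeff (i : ℕ) := by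
          rw [Fin.sum_univ_eq_sum_range
            (fun ℓ => p.coeff ℓ * ((X ^ ℓ * a ^ j) %ₘ F).coeff (i : ℕ)) n]
      _ = ((X ^ (k : ℕ) * a ^ (j + 1)) %ₘ F).coeff (i : ℕ) := by
          rw [← hcong, hmodsum, finset_sum_coeff]
          refine Finset.sum_congr rfl fun ℓ _ => ?_
          rw [coeff_smul, smul_eq_mul]

lemma aux_N_coeff {x : K} (hx : x ≠ 0) {F N : K[X]} (hFN : F = (X - C x) * N) :
    ∀ k : ℕ, N.coeff k = -(x⁻¹)^(k+1) * ∑ s ∈ Finset.range (k+1), F.coeff s * x^s := by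
  have h0 : F.coeff 0 = -x * N.coeff 0 := by
    rw [hFN, mul_coeff_zero, coeff_sub, coeff_X_zero, coeff_C_zero]; ring
  have hrec : ∀ k : ℕ, F.coeff (k+1) = N.coeff k - x * N.coeff (k+1) := by
    intro k
    rw [hFN, sub_mul, coeff_sub, coeff_X_mul, coeff_C_mul]
  intro k
  induction k with
  | zero =>
    rw [Finset.sum_range_one, pow_zero, mul_one, pow_one, h0]
    field_simp
  | succ k ih =>
    have h1 : N.coeff (k+1) = x⁻¹ * (N.coeff k - F.coeff (k+1)) := by
      rw [hrec k]; field_simp; ring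
    rw [h1, ih, Finset.sum_range_succ (fun s => F.coeff s * x ^ s) (k+1)]
    have h2 : (x⁻¹)^(k+1) * x^(k+1) = 1 := by rw [← mul_pow, inv_mul_cancel₀ hx, one_pow]
    linear_combination (x⁻¹ * F.coeff (k+1)) * h2

lemma aux_lagrange_coeff {n : ℕ} (hn : 1 ≤ n) (ξ : Fin n → K) (hξ : Function.Injective ξ)
    (N : Fin n → K[X]) (hNd : ∀ t, N t = ∏ s ∈ Finset.univ.erase t, (X - C (ξ s)))
    (p : K[X]) (hp : p.natDegree < n) (k : ℕ) :
    p.coeff k = ∑ t : Fin n, p.eval (ξ t) * ((N t).eval (ξ t))⁻¹ * (N t).coeff k := by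
  classical
  have hNevne : ∀ t, (N t).eval (ξ t) ≠ 0 := by
    intro t
    rw [hNd, eval_prod]
    refine Finset.prod_ne_zero_iff.mpr fun s hs => ?_
    simp only [eval_sub, eval_X, eval_C]
    exact sub_ne_zero.mpr fun h => (Finset.mem_erase.mp hs).1 (hξ h).symm
  have hNev0 : ∀ s t : Fin n, s ≠ t → (N t).eval (ξ s) = 0 := by
    intro s t hst
    rw [hNd, eval_prod]
    refine Finset.prod_eq_zero (Finset.mem_erase.mpr ⟨hst, Finset.mem_univ s⟩) ?_
    simp
  have hNdeg : ∀ t, (N t).natDegree < n := by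
    intro t
    have h : (N t).natDegree = ∑ s ∈ Finset.univ.erase t, (X - C (ξ s)).natDegree := by
      rw [hNd]; exact natDegree_prod _ _ fun s _ => X_sub_C_ne_zero _
    rw [h]
    simp only [natDegree_X_sub_C, Finset.sum_const, smul_eq_mul, mul_one]
    calc (Finset.univ.erase t).card < Finset.univ.card :=
          Finset.card_erase_lt_of_mem (Finset.mem_univ t)
      _ = n := by simp
  have hq : p - ∑ t : Fin n, C (p.eval (ξ t) * ((N t).eval (ξ t))⁻¹) * N t = 0 := by
    apply Polynomial.eq_zero_of_natDegree_lt_card_of_eval_eq_zero'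
      _ (Finset.univ.image ξ)
    · intro x hx
      obtain ⟨s, _, rfl⟩ := Finset.mem_image.mp hx
      rw [eval_sub, eval_finset_sum, Finset.sum_eq_single s]
      · simp only [eval_mul, eval_C]
        rw [mul_assoc, inv_mul_cancel₀ (hNevne s), mul_one, sub_self]
      · intro t _ hts
        rw [eval_mul, hNev0 s t (fun h => hts h.symm), mul_zero]
      · intro h; exact absurd (Finset.mem_univ s) h
    · rw [Finset.card_image_of_injective _ hξ]
      refine lt_of_le_of_lt (natDegree_sub_le _ _) (max_lt ?_ ?_)
      · simpa using hp
      · simp only [Finset.card_univ, Fintype.card_fin]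
        refine lt_of_le_of_lt (natDegree_sum_le_of_forall_le _ _ fun t _ => ?_)
          (Nat.sub_lt_of_pos_le Nat.one_pos hn : n - 1 < n)
        exact le_trans (natDegree_C_mul_le _ _) (Nat.le_sub_one_of_lt (hNdeg t))
  have hrep : p = ∑ t : Fin n, C (p.eval (ξ t) * ((N t).eval (ξ t))⁻¹) * N t :=
    sub_eq_zero.mp hq
  conv_lhs => rw [hrep]
  rw [finset_sum_coeff]
  refine Finset.sum_congr rfl fun t _ => ?_
  rw [coeff_C_mul, mul_assoc]

theorem rank_krylov_eq_rank_points
    (n r m d : ℕ) (hn : 1 ≤ n) (hr : 1 ≤ r) (hm : 1 ≤ m) (hmn : m ≤ n) (hd : 1 ≤ d)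
    (ξ : Fin n → K) (hξ : Function.Injective ξ) (c : K) (hc : c ≠ 0)
    (f : K[X]) (hfdef : f = C c * ∏ k : Fin n, (X - C (ξ k)))
    (a : K[X]) (ha : a.degree < (n : WithBot ℕ))
    (lam : Fin r → K) (ℓ : Fin r → ℕ) (hval : TakesValues a ξ lam ℓ) :
    (krylovR f a n m d).rank = (pointsMat ξ (fun k => a.eval (ξ k)) m d).rank ∧
    ((∀ k, ξ k ≠ 0) →
      (krylovL f a n m d).rank
        = (pointsMat (fun k => (ξ k)⁻¹) (fun k => a.eval (ξ k)) m d).rank) := by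
  classical
  set F : K[X] := ∏ k : Fin n, (X - C (ξ k)) with hFdef2
  have hFmonic : F.Monic := monic_prod_of_monic _ _ fun s _ => monic_X_sub_C _
  have hFdeg : F.natDegree = n := by
    rw [hFdef2, natDegree_prod _ _ fun s _ => X_sub_C_ne_zero _]
    simp
  have hmod : ∀ p : K[X], p % f = p %ₘ F := by
    intro p
    rw [Polynomial.mod_def]
    congr 1
    have hlc : f.leadingCoeff = c := by
      rw [hfdef, leadingCoeff_mul, leadingCoeff_C, hFmonic.leadingCoeff, mul_one]
    rw [hlc, hfdef, mul_comm (C c) F, mul_assoc, ← C_mul, mul_inv_cancel₀ hc, C_1, mul_one]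
  have hFroot : ∀ t, F.eval (ξ t) = 0 := by
    intro t
    rw [hFdef2, eval_prod]
    exact Finset.prod_eq_zero (Finset.mem_univ t) (by simp)
  have hevalmod : ∀ (p : K[X]) (t : Fin n), (p %ₘ F).eval (ξ t) = p.eval (ξ t) := by
    intro p t
    conv_rhs => rw [← modByMonic_add_div p F]
    simp [hFroot t]
  have hMpow := mulMat_pow_apply hn F f a hFmonic hFdeg hmod
  -- entries of the Krylov matrices
  have hKR : ∀ (i : Fin n) (j : Fin d) (k : Fin m),
      krylovR f a n m d i (j, k) = ((X ^ (k:ℕ) * a ^ (j:ℕ)) %ₘ F).coeff (i:ℕ) := by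
    intro i j k
    have hk0 : (k:ℕ) < n := lt_of_lt_of_le k.isLt hmn
    have h1 : krylovR f a n m d i (j, k)
        = ∑ ℓ : Fin n, ((mulMat f a n) ^ (j:ℕ)) i ℓ * Xup K n m ℓ k := Matrix.mul_apply
    rw [h1]
    calc (∑ ℓ : Fin n, ((mulMat f a n) ^ (j:ℕ)) i ℓ * Xup K n m ℓ k)
        = ∑ ℓ : Fin n, (if ℓ = (⟨(k:ℕ), hk0⟩ : Fin n)
            then ((mulMat f a n) ^ (j:ℕ)) i ℓ else 0) := by
          refine Finset.sum_congr rfl fun ℓ _ => ?_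
          by_cases h : ℓ = (⟨(k:ℕ), hk0⟩ : Fin n)
          · have : (ℓ:ℕ) = (k:ℕ) := by rw [h]
            simp [Xup, this, h]
          · have : (ℓ:ℕ) ≠ (k:ℕ) := fun hh => h (Fin.ext hh)
            simp [Xup, this, h]
      _ = ((mulMat f a n) ^ (j:ℕ)) i ⟨(k:ℕ), hk0⟩ := by
          rw [Finset.sum_ite_eq' Finset.univ (⟨(k:ℕ), hk0⟩ : Fin n)]
          simp
      _ = ((X ^ (k:ℕ) * a ^ (j:ℕ)) %ₘ F).coeff (i:ℕ) := hMpow (j:ℕ) i ⟨(k:ℕ), hk0⟩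
  have hKL : ∀ (j : Fin d) (k : Fin m) (i : Fin n),
      krylovL f a n m d (j, k) i = ((X ^ (i:ℕ) * a ^ (j:ℕ)) %ₘ F).coeff (k:ℕ) := by
    intro j k i
    have hk0 : (k:ℕ) < n := lt_of_lt_of_le k.isLt hmn
    have h1 : krylovL f a n m d (j, k) i
        = ∑ ℓ : Fin n, (Xup K n m)ᵀ k ℓ * ((mulMat f a n) ^ (j:ℕ)) ℓ i := Matrix.mul_apply
    rw [h1]
    calc (∑ ℓ : Fin n, (Xup K n m)ᵀ k ℓ * ((mulMat f a n) ^ (j:ℕ)) ℓ i)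
        = ∑ ℓ : Fin n, (if ℓ = (⟨(k:ℕ), hk0⟩ : Fin n)
            then ((mulMat f a n) ^ (j:ℕ)) ℓ i else 0) := by
          refine Finset.sum_congr rfl fun ℓ _ => ?_
          by_cases h : ℓ = (⟨(k:ℕ), hk0⟩ : Fin n)
          · have : (ℓ:ℕ) = (k:ℕ) := by rw [h]
            simp [Xup, Matrix.transpose_apply, this, h]
          · have : (ℓ:ℕ) ≠ (k:ℕ) := fun hh => h (Fin.ext hh)
            simp [Xup, Matrix.transpose_apply, this, h]
      _ = ((mulMat f a n) ^ (j:ℕ)) ⟨(k:ℕ), hk0⟩ i := by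
          rw [Finset.sum_ite_eq' Finset.univ (⟨(k:ℕ), hk0⟩ : Fin n)]
          simp
      _ = ((X ^ (i:ℕ) * a ^ (j:ℕ)) %ₘ F).coeff (k:ℕ) := hMpow (j:ℕ) ⟨(k:ℕ), hk0⟩ i
  have hvdet : IsUnit (Matrix.vandermonde ξ).det :=
    isUnit_iff_ne_zero.mpr (by
      rw [Ne, Matrix.det_vandermonde_eq_zero_iff]
      rintro ⟨i, j, h, hne⟩
      exact hne (hξ h))
  constructor
  · -- Part 1
    have h1 : Matrix.vandermonde ξ * krylovR f a n m d
        = pointsMat ξ (fun k => a.eval (ξ k)) m d := by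
      ext t p
      obtain ⟨j, k⟩ := p
      rw [Matrix.mul_apply]
      have hdeg' : ((X ^ (k:ℕ) * a ^ (j:ℕ)) %ₘ F).natDegree < n :=
        natDegree_modByMonic_lt' hFmonic hn hFdeg _
      calc (∑ i : Fin n, Matrix.vandermonde ξ t i * krylovR f a n m d i (j, k))
          = ∑ i : Fin n, ((X ^ (k:ℕ) * a ^ (j:ℕ)) %ₘ F).coeff (i:ℕ) * ξ t ^ (i:ℕ) := by
            refine Finset.sum_congr rfl fun i _ => ?_
            rw [hKR i j k, Matrix.vandermonde_apply, mul_comm]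
        _ = ∑ i ∈ range n, ((X ^ (k:ℕ) * a ^ (j:ℕ)) %ₘ F).coeff i * ξ t ^ i :=
            Fin.sum_univ_eq_sum_range
              (fun i => ((X ^ (k:ℕ) * a ^ (j:ℕ)) %ₘ F).coeff i * ξ t ^ i) n
        _ = ((X ^ (k:ℕ) * a ^ (j:ℕ)) %ₘ F).eval (ξ t) :=
            (eval_eq_sum_range' hdeg' (ξ t)).symm
        _ = (a.eval (ξ t)) ^ (j:ℕ) * ξ t ^ (k:ℕ) := by
            rw [hevalmod, eval_mul, eval_pow, eval_pow, eval_X, mul_comm]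
        _ = pointsMat ξ (fun k => a.eval (ξ k)) m d t (j, k) := rfl
    rw [← h1, Matrix.rank_mul_eq_right_of_isUnit_det _ _ hvdet]
  · -- Part 2
    intro hξ0
    set N : Fin n → K[X] := fun t => ∏ s ∈ Finset.univ.erase t, (X - C (ξ s)) with hNdef
    have hNd : ∀ t, N t = ∏ s ∈ Finset.univ.erase t, (X - C (ξ s)) := fun t => rfl
    have hFN : ∀ t, F = (X - C (ξ t)) * N t := fun t => by
      rw [hFdef2, hNd]
      exact (Finset.mul_prod_erase Finset.univ _ (Finset.mem_univ t)).symm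
    have hNevne : ∀ t, (N t).eval (ξ t) ≠ 0 := by
      intro t
      rw [hNd, eval_prod]
      refine Finset.prod_ne_zero_iff.mpr fun s hs => ?_
      simp only [eval_sub, eval_X, eval_C]
      exact sub_ne_zero.mpr fun h => (Finset.mem_erase.mp hs).1 (hξ h).symm
    set dvec : Fin n → K := fun t => -((ξ t)⁻¹ * ((N t).eval (ξ t))⁻¹) with hdvec
    set T0 : Matrix (Fin m) (Fin m) K :=
      fun k u => if (u:ℕ) ≤ (k:ℕ) then F.coeff ((k:ℕ) - (u:ℕ)) else 0 with hT0
    set P2 : Matrix (Fin n) (Fin d × Fin m) K :=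
      pointsMat (fun t => (ξ t)⁻¹) (fun t => a.eval (ξ t)) m d with hP2
    have h2 : krylovL f a n m d
        = ((1 : Matrix (Fin d) (Fin d) K) ⊗ₖ T0)
          * (P2ᵀ * (Matrix.diagonal dvec * Matrix.vandermonde ξ)) := by
      ext p i
      obtain ⟨j, k⟩ := p
      rw [hKL j k i,
        aux_lagrange_coeff hn ξ hξ N hNd _ (natDegree_modByMonic_lt' hFmonic hn hFdeg _) (k:ℕ)]
      have hB : ∀ u : Fin m, (P2ᵀ * (Matrix.diagonal dvec * Matrix.vandermonde ξ)) (j, u) i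
          = ∑ t : Fin n, eval (ξ t) a ^ (j:ℕ) * ((ξ t)⁻¹) ^ ((u:ℕ)) * (dvec t * ξ t ^ (i:ℕ)) := by
        intro u
        rw [Matrix.mul_apply]
        refine Finset.sum_congr rfl fun t _ => ?_
        rw [Matrix.transpose_apply, Matrix.diagonal_mul, Matrix.vandermonde_apply]
        simp only [hP2, pointsMat]
      have hRHS : (((1 : Matrix (Fin d) (Fin d) K) ⊗ₖ T0)
            * (P2ᵀ * (Matrix.diagonal dvec * Matrix.vandermonde ξ))) (j, k) i
          = ∑ u ∈ range ((k:ℕ)+1), F.coeff ((k:ℕ) - u) *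
              ∑ t : Fin n, eval (ξ t) a ^ (j:ℕ) * ((ξ t)⁻¹) ^ u * (dvec t * ξ t ^ (i:ℕ)) := by
        rw [Matrix.mul_apply, Fintype.sum_prod_type]
        calc (∑ j' : Fin d, ∑ u : Fin m,
                ((1 : Matrix (Fin d) (Fin d) K) ⊗ₖ T0) (j, k) (j', u)
                * (P2ᵀ * (Matrix.diagonal dvec * Matrix.vandermonde ξ)) (j', u) i)
            = ∑ u : Fin m, ((1 : Matrix (Fin d) (Fin d) K) ⊗ₖ T0) (j, k) (j, u)
                * (P2ᵀ * (Matrix.diagonal dvec * Matrix.vandermonde ξ)) (j, u) i := by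
              rw [Finset.sum_eq_single j]
              · intro b _ hb
                refine Finset.sum_eq_zero fun u _ => ?_
                simp [Matrix.kroneckerMap_apply, Matrix.one_apply, (Ne.symm hb)]
              · intro h; exact absurd (Finset.mem_univ j) h
          _ = ∑ u : Fin m, (if (u:ℕ) ≤ (k:ℕ) then F.coeff ((k:ℕ) - (u:ℕ)) *
                (∑ t : Fin n, eval (ξ t) a ^ (j:ℕ) * ((ξ t)⁻¹) ^ ((u:ℕ))
                  * (dvec t * ξ t ^ (i:ℕ))) else 0) := by
              refine Finset.sum_congr rfl fun u _ => ?_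
              rw [hB u]
              rw [Matrix.kroneckerMap_apply, Matrix.one_apply_eq, one_mul]
              simp only [hT0, ite_mul, zero_mul]
          _ = ∑ u ∈ range ((k:ℕ)+1), F.coeff ((k:ℕ) - u) *
                ∑ t : Fin n, eval (ξ t) a ^ (j:ℕ) * ((ξ t)⁻¹) ^ u * (dvec t * ξ t ^ (i:ℕ)) := by
              exact aux_ifsum k.isLt
                (fun u => F.coeff ((k:ℕ) - u) *
                  ∑ t : Fin n, eval (ξ t) a ^ (j:ℕ) * ((ξ t)⁻¹) ^ u * (dvec t * ξ t ^ (i:ℕ)))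
      rw [hRHS]
      have key : ∀ t : Fin n,
          eval (ξ t) ((X ^ (i:ℕ) * a ^ (j:ℕ)) %ₘ F) * (eval (ξ t) (N t))⁻¹ * (N t).coeff (k:ℕ)
          = ∑ u ∈ range ((k:ℕ)+1),
              ξ t ^ (i:ℕ) * eval (ξ t) a ^ (j:ℕ) * (eval (ξ t) (N t))⁻¹ *
                (-(ξ t)⁻¹ ^ ((k:ℕ)+1) * (F.coeff ((k:ℕ)-u) * ξ t ^ ((k:ℕ)-u))) := by
        intro t
        rw [hevalmod, eval_mul, eval_pow, eval_pow, eval_X,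
          aux_N_coeff (hξ0 t) (hFN t) (k:ℕ),
          ← Finset.sum_range_reflect (fun s => F.coeff s * ξ t ^ s) ((k:ℕ)+1)]
        simp only [Nat.add_sub_cancel]
        rw [Finset.mul_sum, Finset.mul_sum]
      calc (∑ t : Fin n,
              eval (ξ t) ((X ^ (i:ℕ) * a ^ (j:ℕ)) %ₘ F) * (eval (ξ t) (N t))⁻¹
                * (N t).coeff (k:ℕ))
          = ∑ t : Fin n, ∑ u ∈ range ((k:ℕ)+1),
              ξ t ^ (i:ℕ) * eval (ξ t) a ^ (j:ℕ) * (eval (ξ t) (N t))⁻¹ *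
                (-(ξ t)⁻¹ ^ ((k:ℕ)+1) * (F.coeff ((k:ℕ)-u) * ξ t ^ ((k:ℕ)-u))) :=
            Finset.sum_congr rfl fun t _ => key t
        _ = ∑ u ∈ range ((k:ℕ)+1), ∑ t : Fin n,
              ξ t ^ (i:ℕ) * eval (ξ t) a ^ (j:ℕ) * (eval (ξ t) (N t))⁻¹ *
                (-(ξ t)⁻¹ ^ ((k:ℕ)+1) * (F.coeff ((k:ℕ)-u) * ξ t ^ ((k:ℕ)-u))) :=
            Finset.sum_comm
        _ = ∑ u ∈ range ((k:ℕ)+1), F.coeff ((k:ℕ) - u) *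
              ∑ t : Fin n, eval (ξ t) a ^ (j:ℕ) * ((ξ t)⁻¹) ^ u * (dvec t * ξ t ^ (i:ℕ)) := by
            refine Finset.sum_congr rfl fun u hu => ?_
            rw [Finset.mul_sum]
            refine Finset.sum_congr rfl fun t _ => ?_
            have hu' : u ≤ (k:ℕ) := Nat.lt_succ_iff.mp (Finset.mem_range.mp hu)
            have hpw := aux_pow_inv (ξ t) (hξ0 t) hu'
            simp only [hdvec]
            linear_combination
              (-(ξ t ^ (i:ℕ) * eval (ξ t) a ^ (j:ℕ) * (eval (ξ t) (N t))⁻¹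
                * F.coeff ((k:ℕ) - u))) * hpw
    -- rank computation
    have hF0 : F.coeff 0 ≠ 0 := by
      rw [coeff_zero_eq_eval_zero, hFdef2, eval_prod]
      refine Finset.prod_ne_zero_iff.mpr fun s _ => ?_
      simp only [eval_sub, eval_X, eval_C, zero_sub, neg_ne_zero]
      exact hξ0 s
    have hTdet : IsUnit ((1 : Matrix (Fin d) (Fin d) K) ⊗ₖ T0).det := by
      rw [Matrix.det_kronecker, Matrix.det_one, one_pow, one_mul]
      have hT0tri : T0.BlockTriangular OrderDual.toDual := by
        intro x y hxy
        have : (x:ℕ) < (y:ℕ) := hxy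
        simp only [hT0]
        rw [if_neg (by omega)]
      have hT0det : T0.det = F.coeff 0 ^ m := by
        rw [Matrix.det_of_lowerTriangular T0 hT0tri]
        have : ∀ u : Fin m, T0 u u = F.coeff 0 := by
          intro u; simp [hT0]
        simp [this]
      rw [hT0det]
      exact isUnit_iff_ne_zero.mpr (pow_ne_zero _ (pow_ne_zero _ hF0))
    have hZdet : IsUnit (Matrix.diagonal dvec * Matrix.vandermonde ξ).det := by
      rw [Matrix.det_mul, Matrix.det_diagonal]
      refine IsUnit.mul (isUnit_iff_ne_zero.mpr (Finset.prod_ne_zero_iff.mpr fun t _ => ?_)) hvdet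
      simp only [hdvec, neg_ne_zero]
      exact mul_ne_zero (inv_ne_zero (hξ0 t)) (inv_ne_zero (hNevne t))
    rw [h2, Matrix.rank_mul_eq_right_of_isUnit_det _ _ hTdet,
      Matrix.rank_mul_eq_left_of_isUnit_det _ _ hZdet, Matrix.rank_transpose]
end
end

section
/- Let K be a field, ξ_1, …, ξ_n ∈ K pairwise distinct, c ∈ K∖{0}, f = c·(x−ξ_1)⋯(x−ξ_n) ∈ K[x], and let a ∈ K[x] of degree < n take the values λ_1, …, λ_r at ξ_1, …, ξ_n with multiplicities ℓ_1, …, ℓ_r; set s_i = ℓ_1 + ⋯ + ℓ_{i−1} and S_i = {s_i+1, …, s_i+ℓ_i}. Let L_k = ∏_{j≠k} (x−ξ_j)/(ξ_k−ξ_j) be the Lagrange interpolation polynomials and, for 1 ≤ i ≤ r and j ≥ 0, let P_{i,j} = Σ_{k∈S_i} ξ_k^j·L_k ∈ K[x]. Then, for every m with 1 ≤ m ≤ n, the Σ_{i=1}^r min(ℓ_i,m) polynomials P_{i,j} (1 ≤ i ≤ r, 0 ≤ j < min(ℓ_i,m)) are linearly independent over K, and for every g ∈ K[x,y] with deg_x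 g < m, the polynomial g(x, a(x)) mod f lies in their K-linear span. -/
open Polynomial

noncomputable section

variable {K : Type*} [Field K]

/-- The Lagrange interpolation polynomial `L_k = ∏_{j ≠ k} (x − ξ_j)/(ξ_k − ξ_j)`. -/
def lagrangeP {n : ℕ} (ξ : Fin n → K) (k : Fin n) : K[X] :=
  ∏ j ∈ Finset.univ.erase k, (C (ξ k - ξ j)⁻¹ * (X - C (ξ j)))

/-- The index set `S_i = {s_i + 1, …, s_i + ℓ_i}` of the `i`-th group. -/
def groupSet {n r : ℕ} (ℓ : Fin r → ℕ) (i : Fin r) : Finset (Fin n) :=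
  Finset.univ.filter fun k => partialSum ℓ i ≤ (k : ℕ) ∧ (k : ℕ) < partialSum ℓ i + ℓ i

/-- `P_{i,j} = Σ_{k ∈ S_i} ξ_k^j · L_k`. -/
def Ppoly {n r : ℕ} (ξ : Fin n → K) (ℓ : Fin r → ℕ) (i : Fin r) (j : ℕ) : K[X] :=
  ∑ k ∈ (groupSet ℓ i : Finset (Fin n)), C (ξ k ^ j) * lagrangeP ξ k

lemma partialSum_succ {r : ℕ} (ℓ : Fin r → ℕ) (i j : Fin r) (h : (j:ℕ) = (i:ℕ) + 1) :
    partialSum ℓ j = partialSum ℓ i + ℓ i := by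
  unfold partialSum
  have : Finset.Iio j = insert i (Finset.Iio i) := by
    ext x
    simp only [Finset.mem_Iio, Finset.mem_insert, Fin.lt_def, Fin.ext_iff]
    omega
  rw [this, Finset.sum_insert (by simp [Fin.lt_def])]
  ring

lemma partialSum_add_le {r : ℕ} (ℓ : Fin r → ℕ) (i : Fin r) :
    partialSum ℓ i + ℓ i ≤ ∑ j, ℓ j := by
  unfold partialSum
  rw [add_comm, ← Finset.sum_insert (by simp [Fin.lt_def] : i ∉ Finset.Iio i)]
  exact Finset.sum_le_sum_of_subset (Finset.subset_univ _)

lemma partialSum_mono {r : ℕ} (ℓ : Fin r → ℕ) {i i' : Fin r} (h : i < i') :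
    partialSum ℓ i + ℓ i ≤ partialSum ℓ i' := by
  unfold partialSum
  rw [add_comm, ← Finset.sum_insert (by simp [Fin.lt_def] : i ∉ Finset.Iio i)]
  refine Finset.sum_le_sum_of_subset ?_
  intro x hx
  simp only [Finset.mem_insert, Finset.mem_Iio] at *
  rcases hx with rfl | hx
  · exact h
  · exact hx.trans h

lemma exists_group {n r : ℕ} (ℓ : Fin r → ℕ) (hr : 1 ≤ r) (hsum : ∑ i, ℓ i = n) (k : Fin n) :
    ∃ i : Fin r, partialSum ℓ i ≤ (k:ℕ) ∧ (k:ℕ) < partialSum ℓ i + ℓ i := by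
  classical
  set T : Finset (Fin r) := Finset.univ.filter fun i => (k:ℕ) < partialSum ℓ i + ℓ i with hT
  have hlast : (⟨r-1, by omega⟩ : Fin r) ∈ T := by
    have huniv : insert (⟨r-1, by omega⟩ : Fin r) (Finset.Iio (⟨r-1, by omega⟩ : Fin r))
        = Finset.univ := by
      ext x
      simp only [Finset.mem_insert, Finset.mem_Iio, Finset.mem_univ, iff_true, Fin.lt_def,
        Fin.ext_iff]
      omega
    have : partialSum ℓ ⟨r-1, by omega⟩ + ℓ ⟨r-1, by omega⟩ = n := by
      unfold partialSum
      rw [add_comm, ← Finset.sum_insert (by simp [Fin.lt_def] : (⟨r-1, by omega⟩ : Fin r) ∉ _),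
        huniv, hsum]
    simp only [hT, Finset.mem_filter, Finset.mem_univ, true_and, this]
    exact k.isLt
  have hTne : T.Nonempty := ⟨_, hlast⟩
  set i₀ := T.min' hTne with hi₀
  have hi₀T : i₀ ∈ T := T.min'_mem hTne
  refine ⟨i₀, ?_, by simpa [hT, Finset.mem_filter] using hi₀T⟩
  rcases Nat.eq_zero_or_pos (i₀ : ℕ) with h0 | hpos
  · have : partialSum ℓ i₀ = 0 := by
      unfold partialSum
      have : Finset.Iio i₀ = ∅ := by
        ext x; simp only [Finset.mem_Iio, Finset.notMem_empty, iff_false, Fin.lt_def]; omega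
      simp [this]
    omega
  · set i' : Fin r := ⟨(i₀:ℕ) - 1, by omega⟩ with hi'
    have hsucc : partialSum ℓ i₀ = partialSum ℓ i' + ℓ i' := partialSum_succ ℓ i' i₀ (by simp [hi']; omega)
    have hnot : i' ∉ T := by
      intro hmem
      have := T.min'_le i' hmem
      rw [← hi₀] at this
      have : (i₀:ℕ) ≤ (i':ℕ) := this
      simp [hi'] at this
      omega
    simp only [hT, Finset.mem_filter, Finset.mem_univ, true_and, not_lt] at hnot
    omega





lemma lagrangeP_eq_basis {n : ℕ} (ξ : Fin n → K) (k : Fin n) :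
    lagrangeP ξ k = Lagrange.basis Finset.univ ξ k := rfl

lemma eval_lagrangeP {n : ℕ} (ξ : Fin n → K) (hξ : Function.Injective ξ) (k k' : Fin n) :
    (lagrangeP ξ k).eval (ξ k') = if k' = k then 1 else 0 := by
  rw [lagrangeP_eq_basis]
  split_ifs with h
  · subst h; exact Lagrange.eval_basis_self (hξ.injOn) (Finset.mem_univ _)
  · exact Lagrange.eval_basis_of_ne (fun hh => h hh.symm) (Finset.mem_univ k')

lemma card_groupSet {n r : ℕ} (ℓ : Fin r → ℕ) (i : Fin r)
    (hle : partialSum ℓ i + ℓ i ≤ n) :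
    (groupSet (n := n) ℓ i).card = ℓ i := by
  classical
  rw [show ℓ i = (Finset.Ico (partialSum ℓ i) (partialSum ℓ i + ℓ i)).card by
    rw [Nat.card_Ico]; omega]
  apply Finset.card_bij (fun (k : Fin n) (_ : k ∈ groupSet ℓ i) => (k : ℕ))
  · intro k hk; simp only [groupSet, Finset.mem_filter] at hk; simp [Finset.mem_Ico, hk.2]
  · intro k hk k' hk' h; exact Fin.ext h
  · intro b hb
    simp only [Finset.mem_Ico] at hb
    exact ⟨⟨b, by omega⟩, by simp [groupSet, hb], rfl⟩

lemma eval_Ppoly {n r : ℕ} (ξ : Fin n → K) (hξ : Function.Injective ξ) (ℓ : Fin r → ℕ)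
    (i : Fin r) (j : ℕ) (k : Fin n) :
    (Ppoly ξ ℓ i j).eval (ξ k) = if k ∈ groupSet ℓ i then ξ k ^ j else 0 := by
  unfold Ppoly
  rw [eval_finset_sum]
  have : ∀ k' ∈ groupSet (n := n) ℓ i,
      (C (ξ k' ^ j) * lagrangeP ξ k').eval (ξ k)
        = if k = k' then ξ k' ^ j else 0 := by
    intro k' _
    rw [eval_mul, eval_C, eval_lagrangeP ξ hξ k' k]
    split_ifs <;> simp
  rw [Finset.sum_congr rfl this, Finset.sum_ite_eq]

lemma group_eq_of_mem {n r : ℕ} (ℓ : Fin r → ℕ) {i i' : Fin r} {k : Fin n}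
    (h : k ∈ groupSet ℓ i) (h' : k ∈ groupSet ℓ i') : i = i' := by
  simp only [groupSet, Finset.mem_filter, Finset.mem_univ, true_and] at h h'
  by_contra hne
  rcases lt_trichotomy i i' with hlt | heq | hlt
  · have := partialSum_mono ℓ hlt; omega
  · exact hne heq
  · have := partialSum_mono ℓ hlt; omega

lemma sum_groups {n r : ℕ} {M : Type*} [AddCommMonoid M] (ℓ : Fin r → ℕ) (hr : 1 ≤ r)
    (hsum : ∑ i, ℓ i = n) (F : Fin n → M) :
    ∑ k, F k = ∑ i : Fin r, ∑ k ∈ groupSet ℓ i, F k := by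
  classical
  have huniv : (Finset.univ : Finset (Fin r)).biUnion (groupSet (n := n) ℓ) = Finset.univ := by
    ext k
    simp only [Finset.mem_biUnion, Finset.mem_univ, true_and, iff_true]
    obtain ⟨i, h1, h2⟩ := exists_group ℓ hr hsum k
    exact ⟨i, by simp [groupSet, h1, h2]⟩
  rw [← huniv, Finset.sum_biUnion]
  intro i _ i' _ hne
  rw [Function.onFun, Finset.disjoint_left]
  intro k hk hk'
  exact hne (group_eq_of_mem ℓ hk hk')

lemma sum_eval_lagrange {n r : ℕ} (ξ : Fin n → K) (ℓ : Fin r → ℕ) (i : Fin r)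
    (R : K[X]) (d : ℕ) (hd : R.natDegree < d) :
    ∑ k ∈ groupSet (n := n) ℓ i, C (R.eval (ξ k)) * lagrangeP ξ k
      = ∑ j ∈ Finset.range d, C (R.coeff j) * Ppoly ξ ℓ i j := by
  unfold Ppoly
  simp_rw [Finset.mul_sum]
  rw [Finset.sum_comm]
  refine Finset.sum_congr rfl fun k _ => ?_
  have h1 : ∀ j ∈ Finset.range d, C (R.coeff j) * (C (ξ k ^ j) * lagrangeP ξ k)
      = C (R.coeff j * ξ k ^ j) * lagrangeP ξ k := fun j _ => by rw [← mul_assoc, ← C_mul]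
  rw [Finset.sum_congr rfl h1, ← Finset.sum_mul, ← map_sum, eval_eq_sum_range' hd]

lemma eval_aeval_pair (q : K[X]) (x : K) (g : MvPolynomial (Fin 2) K) :
    (MvPolynomial.aeval ![X, q] g).eval x = MvPolynomial.eval ![x, q.eval x] g := by
  induction g using MvPolynomial.induction_on with
  | C a => simp
  | add p p' hp hp' => simp [hp, hp']
  | mul_X p i hp =>
      simp only [map_mul, eval_mul, hp, MvPolynomial.aeval_X, MvPolynomial.eval_X]
      congr 1
      fin_cases i <;> simp

lemma natDegree_aeval_le (lamv : K) (g : MvPolynomial (Fin 2) K) :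
    (MvPolynomial.aeval ![X, (C lamv : K[X])] g).natDegree ≤ g.degreeOf 0 := by
  conv_lhs => rw [g.as_sum]
  rw [map_sum]
  apply Polynomial.natDegree_sum_le_of_forall_le
  intro d hd
  have hmon : (MvPolynomial.aeval ![X, (C lamv : K[X])]
      (MvPolynomial.monomial d (MvPolynomial.coeff d g)))
      = C (MvPolynomial.coeff d g) * (X ^ (d 0) * C (lamv ^ (d 1))) := by
    rw [MvPolynomial.aeval_monomial, Finsupp.prod_fintype _ _ (fun i => pow_zero _),
      Fin.prod_univ_two]
    simp only [Matrix.cons_val_zero, Matrix.cons_val_one, Matrix.head_cons, ← C_pow,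
      algebraMap_eq]
  rw [hmon]
  refine (natDegree_C_mul_le _ _).trans ?_
  refine natDegree_mul_le.trans ?_
  rw [natDegree_X_pow, natDegree_C, add_zero, MvPolynomial.degreeOf_eq_sup]
  exact Finset.le_sup (f := fun m => m 0) hd

lemma Ppoly_mem_span {n r : ℕ} (m : ℕ) (ξ : Fin n → K) (ℓ : Fin r → ℕ) (hℓ : ∀ i, 1 ≤ ℓ i)
    (hle : ∀ i, partialSum ℓ i + ℓ i ≤ n) (hξ : Function.Injective ξ)
    (i : Fin r) (j : ℕ) (hj : j < m) :
    Ppoly ξ ℓ i j ∈ Submodule.span K (Set.range fun p : (Σ i : Fin r, Fin (min (ℓ i) m)) =>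
      Ppoly ξ ℓ p.1 ((p.2 : ℕ))) := by
  by_cases hcase : j < min (ℓ i) m
  · exact Submodule.subset_span ⟨⟨i, ⟨j, hcase⟩⟩, rfl⟩
  push_neg at hcase
  have hmin : min (ℓ i) m = ℓ i := by omega
  set Fi : K[X] := ∏ k ∈ groupSet (n := n) ℓ i, (X - C (ξ k)) with hFi
  have hmonic : Fi.Monic := monic_prod_of_monic _ _ (fun k _ => monic_X_sub_C _)
  have hdegFi : Fi.natDegree = ℓ i := by
    rw [hFi, natDegree_prod _ _ (fun k _ => X_sub_C_ne_zero _)]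
    simp only [natDegree_X_sub_C]
    rw [Finset.sum_const, smul_eq_mul, mul_one, card_groupSet ℓ i (hle i)]
  set R : K[X] := X ^ j %ₘ Fi with hR
  have hRdeg : R.natDegree < ℓ i := by
    rcases eq_or_ne R 0 with h0 | h0
    · rw [h0, natDegree_zero]; exact hℓ i
    · have h := degree_modByMonic_lt (X ^ j) hmonic
      have := natDegree_lt_natDegree h0 h
      rwa [hdegFi] at this
  have hevalR : ∀ k ∈ groupSet (n := n) ℓ i, R.eval (ξ k) = ξ k ^ j := by
    intro k hk
    have hdiv := modByMonic_add_div (X ^ j) Fi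
    have hFieval : Fi.eval (ξ k) = 0 := by
      rw [hFi, eval_prod]
      exact Finset.prod_eq_zero hk (by simp)
    have h2 := congrArg (eval (ξ k)) hdiv
    simp only [eval_add, eval_mul, hFieval, zero_mul, add_zero, eval_pow, eval_X] at h2
    simpa [hR] using h2
  have hPp : Ppoly ξ ℓ i j = ∑ j' ∈ Finset.range (ℓ i), C (R.coeff j') * Ppoly ξ ℓ i j' := by
    rw [← sum_eval_lagrange ξ ℓ i R (ℓ i) hRdeg]
    unfold Ppoly
    exact Finset.sum_congr rfl fun k hk => by rw [hevalR k hk]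
  rw [hPp]
  apply Submodule.sum_mem
  intro j' hj'
  rw [← smul_eq_C_mul]
  apply Submodule.smul_mem
  exact Submodule.subset_span ⟨⟨i, ⟨j', by rw [hmin]; exact Finset.mem_range.mp hj'⟩⟩, rfl⟩


theorem Ppoly_linearIndependent_and_span
    (n r m : ℕ) (hn : 1 ≤ n) (hr : 1 ≤ r) (hm : 1 ≤ m) (hmn : m ≤ n)
    (ξ : Fin n → K) (hξ : Function.Injective ξ) (c : K) (hc : c ≠ 0)
    (f : K[X]) (hfdef : f = C c * ∏ k : Fin n, (X - C (ξ k)))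
    (a : K[X]) (ha : a.degree < (n : WithBot ℕ))
    (lam : Fin r → K) (ℓ : Fin r → ℕ) (hval : TakesValues a ξ lam ℓ) :
    LinearIndependent K
      (fun p : (Σ i : Fin r, Fin (min (ℓ i) m)) => Ppoly ξ ℓ p.1 ((p.2 : ℕ))) ∧
    ∀ g : MvPolynomial (Fin 2) K, g.degreeOf 0 < m →
      (MvPolynomial.aeval ![(X : K[X]), a] g) % f ∈
        Submodule.span K
          (Set.range fun p : (Σ i : Fin r, Fin (min (ℓ i) m)) =>
            Ppoly ξ ℓ p.1 ((p.2 : ℕ))) := by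
  classical
  obtain ⟨hlaminj, hℓ1, hsum, hvals⟩ := hval
  have hle : ∀ i, partialSum ℓ i + ℓ i ≤ n := fun i => by
    rw [← hsum]; exact partialSum_add_le ℓ i
  constructor
  · -- linear independence
    rw [Fintype.linearIndependent_iff]
    intro gc hg
    rintro ⟨i₀, j₀⟩
    set q : K[X] := ∑ j : Fin (min (ℓ i₀) m), C (gc ⟨i₀, j⟩) * X ^ (j : ℕ) with hq
    have hqdeg : q.natDegree < ℓ i₀ := by
      have h1 : q.natDegree ≤ min (ℓ i₀) m - 1 := by
        apply Polynomial.natDegree_sum_le_of_forall_le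
        intro j _
        refine (natDegree_C_mul_le _ _).trans ?_
        rw [natDegree_X_pow]
        have := j.isLt; omega
      have := hℓ1 i₀; omega
    have hqeval : ∀ k ∈ groupSet (n := n) ℓ i₀, q.eval (ξ k) = 0 := by
      intro k hk
      have hev := congrArg (eval (ξ k)) hg
      rw [eval_finset_sum, eval_zero] at hev
      have hterm : ∀ p : (Σ i : Fin r, Fin (min (ℓ i) m)),
          (gc p • Ppoly ξ ℓ p.1 ((p.2 : ℕ))).eval (ξ k)
          = if p.1 = i₀ then gc p * ξ k ^ ((p.2 : ℕ)) else 0 := by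
        rintro ⟨i, j⟩
        rw [smul_eq_C_mul, eval_mul, eval_C, eval_Ppoly ξ hξ]
        by_cases hi : i = i₀
        · subst hi; simp [hk]
        · have hknot : k ∉ groupSet (n := n) ℓ i := fun hmem => hi (group_eq_of_mem ℓ hmem hk)
          simp [hi, hknot]
      rw [Finset.sum_congr rfl fun p _ => hterm p] at hev
      rw [← Finset.univ_sigma_univ, Finset.sum_sigma] at hev
      have hsplit : ∀ i : Fin r,
          (∑ j : Fin (min (ℓ i) m),
            if (⟨i, j⟩ : Σ i : Fin r, Fin (min (ℓ i) m)).1 = i₀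
              then gc ⟨i, j⟩ * ξ k ^ ((j : ℕ)) else 0)
          = if i = i₀ then ∑ j : Fin (min (ℓ i) m), gc ⟨i, j⟩ * ξ k ^ ((j : ℕ)) else 0 := by
        intro i; split_ifs with h <;> simp [h]
      rw [Finset.sum_congr rfl fun i _ => hsplit i, Finset.sum_ite_eq'] at hev
      simp only [Finset.mem_univ, if_true] at hev
      rw [hq, eval_finset_sum]
      simpa [eval_mul] using hev
    have hq0 : q = 0 := by
      apply Polynomial.eq_zero_of_natDegree_lt_card_of_eval_eq_zero' q
        ((groupSet (n := n) ℓ i₀).image ξ)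
      · intro x hx
        obtain ⟨k, hk, rfl⟩ := Finset.mem_image.mp hx
        exact hqeval k hk
      · rwa [Finset.card_image_of_injOn (Function.Injective.injOn hξ),
          card_groupSet ℓ i₀ (hle i₀)]
    have hcoeff : q.coeff ((j₀ : ℕ)) = gc ⟨i₀, j₀⟩ := by
      rw [hq, finset_sum_coeff]
      rw [Finset.sum_eq_single j₀]
      · simp [coeff_C_mul, coeff_X_pow]
      · intro j _ hne
        have hvne : ((j₀ : ℕ)) ≠ ((j : ℕ)) := fun h => hne (Fin.ext h.symm)
        simp [coeff_C_mul, coeff_X_pow, hvne]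
      · intro h; exact absurd (Finset.mem_univ _) h
    rw [← hcoeff, hq0, coeff_zero]
  · -- span
    intro g hgdeg
    set b := MvPolynomial.aeval ![(X : K[X]), a] g with hb
    have hf0 : f ≠ 0 := by
      rw [hfdef]
      refine mul_ne_zero (C_ne_zero.mpr hc) ?_
      rw [Finset.prod_ne_zero_iff]
      exact fun k _ => X_sub_C_ne_zero _
    have hdegf : f.degree = (n : WithBot ℕ) := by
      rw [hfdef, degree_C_mul hc, degree_prod]
      simp [degree_X_sub_C]
    have hdegp : (b % f).degree < (n : WithBot ℕ) := by
      rw [← hdegf]; exact EuclideanDomain.mod_lt b hf0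
    have hinterp : b % f = ∑ k, C ((b % f).eval (ξ k)) * lagrangeP ξ k := by
      have h := Lagrange.eq_interpolate (f := b % f) (Function.Injective.injOn hξ) (by
        rw [Finset.card_univ, Fintype.card_fin]; exact hdegp)
      conv_lhs => rw [h, Lagrange.interpolate_apply]
      exact Finset.sum_congr rfl fun k _ => by rw [lagrangeP_eq_basis]
    have hevalbk : ∀ k : Fin n, (b % f).eval (ξ k) = b.eval (ξ k) := by
      intro k
      have hdiv := EuclideanDomain.div_add_mod b f
      have hfz : f.eval (ξ k) = 0 := by
        rw [hfdef, eval_mul, eval_prod]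
        rw [Finset.prod_eq_zero (Finset.mem_univ k) (by simp)]
        ring
      have h2 := congrArg (eval (ξ k)) hdiv
      simp only [eval_add, eval_mul, hfz, zero_mul, zero_add] at h2
      exact h2
    rw [hinterp, sum_groups ℓ hr hsum]
    apply Submodule.sum_mem
    intro i _
    set t : K[X] := MvPolynomial.aeval ![(X : K[X]), C (lam i)] g with ht
    have htdeg : t.natDegree < m := lt_of_le_of_lt (natDegree_aeval_le (lam i) g) hgdeg
    have hsame : ∀ k ∈ groupSet (n := n) ℓ i, (b % f).eval (ξ k) = t.eval (ξ k) := by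
      intro k hk
      simp only [groupSet, Finset.mem_filter, Finset.mem_univ, true_and] at hk
      have hak : a.eval (ξ k) = lam i := hvals k i hk.1 hk.2
      rw [hevalbk k, hb, eval_aeval_pair, ht, eval_aeval_pair, eval_C, hak]
    rw [Finset.sum_congr rfl fun k hk => by rw [hsame k hk]]
    rw [sum_eval_lagrange ξ ℓ i t m htdeg]
    apply Submodule.sum_mem
    intro j hj
    rw [← smul_eq_C_mul]
    exact Submodule.smul_mem _ _ (Ppoly_mem_span m ξ ℓ hℓ1 hle hξ i j (Finset.mem_range.mp hj))
end
end

section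
/- Let K be a field of characteristic p ≥ 0, let e ∈ ℕ with e = 0 whenever p = 0, and write q = p^e (with q = 1 when e = 0). Let h ∈ K[θ] be monic, separable, of degree d ≥ 1, let L = K[θ]/⟨h⟩ with θ̄ the class of θ, and let ℓ ≥ 1. Let Ā = Σ_i A_i·z^i ∈ L[z] (with A_i ∈ L), and let M = L[z]/⟨(z^q − θ̄)^ℓ⟩, which is a free L-module of rank ℓ·q with basis the classes of 1, z, …, z^{ℓq−1}. Then the characteristic polynomial (in the variable y) of the L-linear endomorphism of M given by multiplication by the class of Ā equals (y^q − ᾱ)^ℓ ∈ L[y], where ᾱ = Σ_i A_i^q·θ̄^i ∈ L. -/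
set_option maxHeartbeats 1000000
set_option synthInstance.maxHeartbeats 400000

open Polynomial

noncomputable section

/-- The power basis `1, z, …, z^(ℓq−1)` of `M = L[z]/⟨(z^q − θ)^ℓ⟩` over `L`. -/
def insepPowerBasis {L : Type*} [CommRing L] (θ : L) (q ℓ : ℕ) (hq : q ≠ 0) :
    PowerBasis L (AdjoinRoot ((X ^ q - C θ) ^ ℓ)) :=
  AdjoinRoot.powerBasis' ((monic_X_pow_sub_C θ hq).pow ℓ)

lemma charpoly_add_smul_one_aux {R : Type*} [CommRing R] {n : Type*} [Fintype n] [DecidableEq n]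
    (M : Matrix n n R) (c : R) :
    (M + c • (1 : Matrix n n R)).charpoly = M.charpoly.comp (X - C c) := by
  let ψ : R[X] →+* R[X] := eval₂RingHom Polynomial.C (X - C c)
  have key : Matrix.charmatrix (M + c • (1 : Matrix n n R)) = ψ.mapMatrix (Matrix.charmatrix M) := by
    ext i j : 2
    by_cases hij : i = j
    · subst hij
      simp only [Matrix.charmatrix_apply_eq, RingHom.mapMatrix_apply, Matrix.map_apply,
        Matrix.add_apply, Matrix.smul_apply, Matrix.one_apply_eq, smul_eq_mul, mul_one, map_add,
        coe_eval₂RingHom, eval₂_sub, eval₂_X, eval₂_C, ψ]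
      ring
    · simp only [Matrix.charmatrix_apply_ne _ _ _ hij, RingHom.mapMatrix_apply, Matrix.map_apply,
        Matrix.add_apply, Matrix.smul_apply, Matrix.one_apply_ne hij, smul_eq_mul, mul_zero,
        add_zero, coe_eval₂RingHom, eval₂_neg, eval₂_C, ψ]
  rw [Matrix.charpoly, key, ← RingHom.map_det]
  rfl

lemma aux_charpoly_field {F : Type*} [Field F] [IsAlgClosed F] (r e q ℓ : ℕ) [ExpChar F r]
    (hqe : q = r ^ e)
    {n : Type*} [Fintype n] [DecidableEq n] [Nonempty n]
    (hcard : Fintype.card n = ℓ * q)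
    (M : Matrix n n F) (α : F) (hM : (M ^ q - α • (1 : Matrix n n F)) ^ ℓ = 0) :
    M.charpoly = (X ^ q - C α) ^ ℓ := by
  subst hqe
  have hq : (0 : ℕ) < r ^ e := expChar_pow_pos F r e
  obtain ⟨β, hβ⟩ := IsAlgClosed.exists_pow_nat_eq α hq
  have hscal : Function.Injective (Matrix.scalar n (α := F)) := by
    intro a b hab
    have := congrArg (fun m : Matrix n n F => m (Classical.arbitrary n) (Classical.arbitrary n)) hab
    simpa using this
  haveI : ExpChar (Matrix n n F) r := expChar_of_injective_ringHom hscal r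
  set N := M - β • (1 : Matrix n n F) with hN
  have hcomm : Commute M (β • (1 : Matrix n n F)) := (Commute.one_right M).smul_right β
  have hNq : N ^ r ^ e = M ^ r ^ e - α • 1 := by
    rw [hN, sub_pow_expChar_pow_of_commute r e hcomm, _root_.smul_pow, one_pow, hβ]
  have hNnil : IsNilpotent N := ⟨r ^ e * ℓ, by rw [pow_mul, hNq, hM]⟩
  have hNchar : N.charpoly = X ^ Fintype.card n := by
    rw [← sub_eq_zero]
    exact (Matrix.isNilpotent_charpoly_sub_pow_of_isNilpotent hNnil).eq_zero
  have hMN : M = N + β • 1 := by simp [hN]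
  haveI : ExpChar F[X] r := expChar_of_injective_ringHom (C_injective (R := F)) r
  calc M.charpoly = (N + β • (1 : Matrix n n F)).charpoly := by rw [← hMN]
    _ = N.charpoly.comp (X - C β) := charpoly_add_smul_one_aux N β
    _ = ((X - C β) ^ r ^ e) ^ ℓ := by
        rw [hNchar, hcard, pow_comp, X_comp, mul_comm ℓ (r ^ e), pow_mul]
    _ = (X ^ r ^ e - C α) ^ ℓ := by
        rw [sub_pow_expChar_pow, ← C_pow, hβ]

lemma main_aux {K : Type*} [Field K] (r e q ℓ : ℕ) [ExpChar K r] (hqe : q = r ^ e)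
    (hℓ : 1 ≤ ℓ) (h : K[X]) (hmon : h.Monic) (hsq : Squarefree h) (hdeg : h.natDegree ≠ 0)
    (Abar : Polynomial (AdjoinRoot h)) (hq : q ≠ 0) :
    Matrix.charpoly
      (LinearMap.toMatrix
        (insepPowerBasis (AdjoinRoot.root h) q ℓ hq).basis
        (insepPowerBasis (AdjoinRoot.root h) q ℓ hq).basis
        (LinearMap.mulLeft (AdjoinRoot h)
          (AdjoinRoot.mk ((X ^ q - C (AdjoinRoot.root h)) ^ ℓ) Abar)))
      = (X ^ q - C (Abar.sum fun i c => c ^ q * AdjoinRoot.root h ^ i)) ^ ℓ := by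
  set L := AdjoinRoot h with hL
  have hdegne : h.degree ≠ 0 := fun h0 => hdeg (natDegree_eq_zero_iff_degree_le_zero.mpr h0.le)
  haveI : Nontrivial L := AdjoinRoot.nontrivial h hdegne
  haveI : IsReduced L :=
    (Ideal.isRadical_iff_quotient_reduced _).mp (isRadical_iff_span_singleton.mp hsq.isRadical)
  haveI : ExpChar L r := expChar_of_injective_ringHom (algebraMap K L).injective r
  haveI : ExpChar L[X] r := expChar_of_injective_ringHom (C_injective (R := L)) r
  set θ : L := AdjoinRoot.root h with hθ
  set α : L := Abar.sum fun i c => c ^ q * θ ^ i with hα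
  set f : L[X] := (X ^ q - C θ) ^ ℓ with hf
  set a : AdjoinRoot f := AdjoinRoot.mk f Abar with ha
  -- Frobenius computation
  have h1 : Abar ^ q = ∑ i ∈ Abar.support, C (Abar.coeff i ^ q) * (X ^ q) ^ i := by
    conv_lhs => rw [Abar.as_sum_support_C_mul_X_pow]
    rw [hqe, ← iterateFrobenius_def, map_sum]
    refine Finset.sum_congr rfl fun i _ => ?_
    rw [iterateFrobenius_def, ← hqe]
    rw [mul_pow, ← C_pow, ← pow_mul, ← pow_mul, mul_comm i q]
  have h2 : C α = ∑ i ∈ Abar.support, C (Abar.coeff i ^ q) * (C θ) ^ i := by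
    rw [hα, Polynomial.sum_def, map_sum]
    exact Finset.sum_congr rfl fun i _ => by rw [map_mul, map_pow, map_pow]
  have hdvd : (X ^ q - C θ) ∣ Abar ^ q - C α := by
    rw [h1, h2, ← Finset.sum_sub_distrib]
    refine Finset.dvd_sum fun i _ => ?_
    rw [← mul_sub]
    exact Dvd.dvd.mul_left (sub_dvd_pow_sub_pow _ _ i) _
  have hkey : (a ^ q - algebraMap L (AdjoinRoot f) α) ^ ℓ = 0 := by
    have halg : algebraMap L (AdjoinRoot f) α = AdjoinRoot.mk f (C α) := rfl
    rw [ha, halg, ← map_pow, ← map_sub, ← map_pow, AdjoinRoot.mk_eq_zero]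
    exact pow_dvd_pow_of_dvd hdvd ℓ
  have hmul : LinearMap.mulLeft L a = Algebra.lmul L (AdjoinRoot f) a := rfl
  have hEnd : ((LinearMap.mulLeft L a) ^ q - algebraMap L (Module.End L (AdjoinRoot f)) α) ^ ℓ
      = 0 := by
    rw [hmul, ← map_pow, ← AlgHom.commutes (Algebra.lmul L (AdjoinRoot f)) α, ← map_sub,
      ← map_pow, hkey, map_zero]
  set pb := insepPowerBasis θ q ℓ hq with hpb
  set E := LinearMap.toMatrixAlgEquiv pb.basis with hE
  set Mx := LinearMap.toMatrix pb.basis pb.basis (LinearMap.mulLeft L a) with hMxdef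
  have hEMx : Mx = E (LinearMap.mulLeft L a) := rfl
  have hMx : (Mx ^ q - α • (1 : Matrix (Fin pb.dim) (Fin pb.dim) L)) ^ ℓ = 0 := by
    have h3 : α • (1 : Matrix (Fin pb.dim) (Fin pb.dim) L) = algebraMap L _ α :=
      (Algebra.algebraMap_eq_smul_one α).symm
    rw [hEMx, h3, ← AlgEquiv.commutes E α, ← map_pow, ← map_sub, ← map_pow, hEnd, map_zero]
  -- dimension facts
  have hdim : pb.dim = ℓ * q := by
    show ((X ^ q - C θ) ^ ℓ).natDegree = ℓ * q
    rw [(monic_X_pow_sub_C θ hq).natDegree_pow, natDegree_X_pow_sub_C]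
  haveI : Nonempty (Fin pb.dim) :=
    ⟨⟨0, by rw [hdim]; exact Nat.mul_pos hℓ (Nat.pos_of_ne_zero hq)⟩⟩
  have hcard : Fintype.card (Fin pb.dim) = ℓ * q := by simp [hdim]
  -- reduce to fields
  rw [← sub_eq_zero]
  refine Polynomial.ext fun k => ?_
  rw [Polynomial.coeff_zero]
  have hnil : (Mx.charpoly - (X ^ q - C α) ^ ℓ).coeff k ∈ nilradical L := by
    rw [nilradical_eq_sInf, Submodule.mem_sInf]
    rintro J hJ
    haveI : Ideal.IsPrime J := hJ
    set Fr := FractionRing (L ⧸ J)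
    set F := AlgebraicClosure Fr
    set ψ : (L ⧸ J) →+* F := (algebraMap Fr F).comp (algebraMap (L ⧸ J) Fr) with hψdef
    have hψ : Function.Injective ψ :=
      (algebraMap Fr F).injective.comp (IsFractionRing.injective (L ⧸ J) Fr)
    set φ : L →+* F := ψ.comp (Ideal.Quotient.mk J) with hφdef
    haveI : ExpChar F r := expChar_of_injective_ringHom (φ.comp (algebraMap K L)).injective r
    have hMx' : ((Mx.map φ) ^ q - φ α • (1 : Matrix (Fin pb.dim) (Fin pb.dim) F)) ^ ℓ = 0 := by
      have hsm : φ.mapMatrix (α • (1 : Matrix (Fin pb.dim) (Fin pb.dim) L)) = φ α • 1 := by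
        ext i j
        by_cases hij : i = j <;>
          simp [hij, Matrix.one_apply, Matrix.smul_apply]
      have h0 : φ.mapMatrix ((Mx ^ q - α • (1 : Matrix (Fin pb.dim) (Fin pb.dim) L)) ^ ℓ) = 0 := by
        rw [hMx]; simp
      rw [map_pow, map_sub, map_pow, hsm] at h0
      exact h0
    have hfield := aux_charpoly_field r e q ℓ hqe hcard (Mx.map φ) (φ α) hMx'
    have hmap : (Mx.charpoly - (X ^ q - C α) ^ ℓ).map φ = 0 := by
      rw [Polynomial.map_sub, ← Matrix.charpoly_map, hfield, Polynomial.map_pow,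
        Polynomial.map_sub, Polynomial.map_pow, Polynomial.map_X, Polynomial.map_C, sub_self]
    have hc : φ ((Mx.charpoly - (X ^ q - C α) ^ ℓ).coeff k) = 0 := by
      rw [← Polynomial.coeff_map, hmap, Polynomial.coeff_zero]
    rw [← Ideal.Quotient.eq_zero_iff_mem]
    apply hψ
    rw [map_zero]
    exact hc
  exact (mem_nilradical.mp hnil).eq_zero

/-- the characteristic polynomial of multiplication by `Ā = Σ A_i z^i` on
`M = L[z]/⟨(z^q − θ̄)^ℓ⟩`, where `L = K[θ]/⟨h⟩` with `h` monic separable, equals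
`(y^q − ᾱ)^ℓ` with `ᾱ = Σ A_i^q θ̄^i`. -/
theorem charpoly_mul_inseparable
    (K : Type*) [Field K] (p e d ℓ : ℕ) [CharP K p]
    (hp0 : p = 0 → e = 0) (hd : 1 ≤ d) (hℓ : 1 ≤ ℓ)
    (h : K[X]) (hmon : h.Monic) (hsep : h.Separable) (hdeg : h.natDegree = d)
    (Abar : Polynomial (AdjoinRoot h)) :
    have hq : p ^ e ≠ 0 := by
      rcases eq_or_ne p 0 with hp | hp
      · simp [hp, hp0 hp]
      · exact pow_ne_zero _ hp
    Matrix.charpoly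
      (LinearMap.toMatrix
        (insepPowerBasis (AdjoinRoot.root h) (p ^ e) ℓ hq).basis
        (insepPowerBasis (AdjoinRoot.root h) (p ^ e) ℓ hq).basis
        (LinearMap.mulLeft (AdjoinRoot h)
          (AdjoinRoot.mk ((X ^ (p ^ e) - C (AdjoinRoot.root h)) ^ ℓ) Abar)))
      = (X ^ (p ^ e) - C (Abar.sum fun i c => c ^ (p ^ e) * AdjoinRoot.root h ^ i)) ^ ℓ := by
  obtain ⟨r, hr⟩ := ExpChar.exists (R := K)
  haveI := hr
  have hpr : p ^ e = r ^ e := by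
    rcases eq_or_ne p 0 with hp | hp
    · rw [hp0 hp]; simp
    · rcases CharP.char_is_prime_or_zero K p with hprime | hzero
      · rw [ExpChar.eq hr (ExpChar.prime hprime)]
      · exact absurd hzero hp
  have hq : p ^ e ≠ 0 := by
    rcases eq_or_ne p 0 with hp | hp
    · simp [hp, hp0 hp]
    · exact pow_ne_zero _ hp
  exact main_aux r e (p ^ e) ℓ hpr hℓ h hmon hsep.squarefree (by rw [hdeg]; omega) Abar hq
end
end
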